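/- arXiv:1404.5281 — 12 statements merged into one kernel-verified Lean document; each statement's English description precedes it below -/
import Mathlib

section
/- Let n ∈ ℕ, c > 0, K > 0, ε₁ ∈ (0,1), and λ₀ ∈ ℂ with |λ₀| = 1. Suppose for each real ε ∈ (0,ε₁) we are given a unitary matrix U(ε) on ℂⁿ, unit vectors V⁺(ε), V⁻(ε), and complex numbers λ⁺(ε), λ⁻(ε) such that U(ε)·V^±(ε) = λ^±(ε)·V^±(ε) and |λ^±(ε) − λ₀·e^{±ic√ε}| ≤ K·ε. Suppose also there are orthonormal vectors V₀⁺, V₀⁻ ∈ ℂⁿ with ‖V^±(ε) − V₀^±‖ ≤ K·√ε for all ε ∈ (0,ε₁). Define ℓ₀ = (V₀⁺ + V₀⁻)/√2 and 𝔯₀ = (V₀⁺ − V₀⁻)/√2, and for each ε set m(ε) = ⌊π/(2c√ε)⌋. Then there exists K′ > 0 such that for all ε ∈ (0,ε₁): |⟨𝔯₀, U(ε)^{m(ε)} ℓ₀⟩| ≥ 1 − K′·√ε. (Theorem 4.13: the time step operator iterated ⌊π√N/(2c)⌋ times, with ε = 1/N, exchanges the Left and Right active eigenvectors almost completely, to within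 O(√ε).) -/
lemma aux_exp_sub_one (x : ℝ) : ‖Complex.exp (x * Complex.I) - 1‖ ≤ |x| := by
  have hcos : Real.cos x ≤ 1 := Real.cos_le_one x
  have hsq : ‖Complex.exp (x * Complex.I) - 1‖ ^ 2 = 2 - 2 * Real.cos x := by
    rw [Complex.sq_norm, Complex.normSq_apply]
    simp only [Complex.exp_ofReal_mul_I_re, Complex.exp_ofReal_mul_I_im, Complex.sub_re,
      Complex.sub_im, Complex.one_re, Complex.one_im]
    nlinarith [Real.sin_sq_add_cos_sq x]
  have hhalf : Real.sin (x / 2) ^ 2 = (1 - Real.cos x) / 2 := by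
    have h := Real.abs_sin_half x
    have : |Real.sin (x / 2)| ^ 2 = (1 - Real.cos x) / 2 := by
      rw [h]; exact Real.sq_sqrt (by linarith)
    simpa [sq_abs] using this
  have hsin : Real.sin (x / 2) ^ 2 ≤ (x / 2) ^ 2 := by
    have := Real.abs_sin_le_abs (x := x / 2)
    nlinarith [abs_nonneg (Real.sin (x/2)), abs_nonneg (x/2), sq_abs (Real.sin (x/2)), sq_abs (x/2)]
  have : ‖Complex.exp (x * Complex.I) - 1‖ ^ 2 ≤ |x| ^ 2 := by
    rw [hsq, sq_abs]; nlinarith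
  exact le_of_pow_le_pow_left₀ two_ne_zero (abs_nonneg x) this

lemma aux_exp_sub_exp (x y : ℝ) :
    ‖Complex.exp (x * Complex.I) - Complex.exp (y * Complex.I)‖ ≤ |x - y| := by
  have h : Complex.exp (x * Complex.I) - Complex.exp (y * Complex.I)
      = Complex.exp (y * Complex.I) * (Complex.exp ((x - y : ℝ) * Complex.I) - 1) := by
    rw [mul_sub, ← Complex.exp_add, mul_one]
    push_cast; ring_nf
  rw [h, norm_mul]
  have : ‖Complex.exp ((y : ℂ) * Complex.I)‖ = 1 := by
    rw [Complex.norm_exp_ofReal_mul_I]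
  rw [this, one_mul]
  exact aux_exp_sub_one _

lemma aux_pow_sub_pow (a b : ℂ) (ha : ‖a‖ = 1) (hb : ‖b‖ = 1) (k : ℕ) :
    ‖a ^ k - b ^ k‖ ≤ k * ‖a - b‖ := by
  induction k with
  | zero => simp
  | succ k ih =>
    have h : a ^ (k + 1) - b ^ (k + 1) = a * (a ^ k - b ^ k) + (a - b) * b ^ k := by ring
    calc ‖a ^ (k + 1) - b ^ (k + 1)‖ ≤ ‖a * (a ^ k - b ^ k)‖ + ‖(a - b) * b ^ k‖ := by
          rw [h]; exact norm_add_le _ _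
      _ = ‖a ^ k - b ^ k‖ + ‖a - b‖ := by rw [norm_mul, norm_mul, norm_pow, ha, hb]; ring
      _ ≤ k * ‖a - b‖ + ‖a - b‖ := by linarith
      _ = (k + 1 : ℕ) * ‖a - b‖ := by push_cast; ring

lemma aux_exp_pi_half : Complex.exp ((Real.pi / 2 : ℝ) * Complex.I) = Complex.I := by
  rw [Complex.exp_mul_I, ← Complex.ofReal_cos, ← Complex.ofReal_sin,
    Real.cos_pi_div_two, Real.sin_pi_div_two]
  simp

lemma aux_exp_neg_pi_half : Complex.exp ((-(Real.pi / 2) : ℝ) * Complex.I) = -Complex.I := by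
  rw [Complex.exp_mul_I, ← Complex.ofReal_cos, ← Complex.ofReal_sin,
    Real.cos_neg, Real.sin_neg, Real.cos_pi_div_two, Real.sin_pi_div_two]
  simp

lemma aux_tEL_mul {n : ℕ} (A B : Matrix (Fin n) (Fin n) ℂ) (x : EuclideanSpace ℂ (Fin n)) :
    Matrix.toEuclideanLin (A * B) x = Matrix.toEuclideanLin A (Matrix.toEuclideanLin B x) := by
  simp [Matrix.toEuclideanLin_apply, Matrix.mulVec_mulVec]

lemma aux_tEL_one {n : ℕ} (x : EuclideanSpace ℂ (Fin n)) :
    Matrix.toEuclideanLin (1 : Matrix (Fin n) (Fin n) ℂ) x = x := by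
  simp [Matrix.toEuclideanLin_apply]

lemma aux_tEL_pow_eig {n : ℕ} (A : Matrix (Fin n) (Fin n) ℂ) (v : EuclideanSpace ℂ (Fin n)) (μ : ℂ)
    (h : Matrix.toEuclideanLin A v = μ • v) (k : ℕ) :
    Matrix.toEuclideanLin (A ^ k) v = μ ^ k • v := by
  induction k with
  | zero => simpa using aux_tEL_one v
  | succ k ih =>
    rw [pow_succ, aux_tEL_mul, h, map_smul, ih, smul_smul, pow_succ]
    ring_nf

lemma aux_unitary_norm {n : ℕ} (A : Matrix (Fin n) (Fin n) ℂ)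
    (hA : A ∈ Matrix.unitaryGroup (Fin n) ℂ)
    (x : EuclideanSpace ℂ (Fin n)) : ‖Matrix.toEuclideanLin A x‖ = ‖x‖ := by
  have h1 : star A * A = 1 := Matrix.mem_unitaryGroup_iff'.mp hA
  have h2 : (inner ℂ (Matrix.toEuclideanLin A x) (Matrix.toEuclideanLin A x) : ℂ)
      = inner ℂ x x := by
    rw [← LinearMap.adjoint_inner_right, ← Matrix.toEuclideanLin_conjTranspose_eq_adjoint,
      ← aux_tEL_mul]
    have h : A.conjTranspose * A = 1 := h1
    rw [h, aux_tEL_one]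
  rw [inner_self_eq_norm_sq_to_K, inner_self_eq_norm_sq_to_K] at h2
  have h4 : ‖Matrix.toEuclideanLin A x‖ ^ 2 = ‖x‖ ^ 2 := by exact_mod_cast h2
  calc ‖Matrix.toEuclideanLin A x‖ = Real.sqrt (‖Matrix.toEuclideanLin A x‖ ^ 2) :=
        (Real.sqrt_sq (norm_nonneg _)).symm
    _ = Real.sqrt (‖x‖ ^ 2) := by rw [h4]
    _ = ‖x‖ := Real.sqrt_sq (norm_nonneg _)

set_option maxHeartbeats 1600000 in
/-- Theorem 4.13 -/
theorem stmt0 (n : ℕ) (c K : ℝ) (hc : 0 < c) (hK : 0 < K)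
    (ε₁ : ℝ) (hε₁ : ε₁ ∈ Set.Ioo (0 : ℝ) 1)
    (l₀ : ℂ) (hl₀ : ‖l₀‖ = 1)
    (U : ℝ → Matrix (Fin n) (Fin n) ℂ)
    (Vp Vm : ℝ → EuclideanSpace ℂ (Fin n))
    (lp lm : ℝ → ℂ)
    (hU : ∀ ε ∈ Set.Ioo (0 : ℝ) ε₁, U ε ∈ Matrix.unitaryGroup (Fin n) ℂ)
    (hVpnorm : ∀ ε ∈ Set.Ioo (0 : ℝ) ε₁, ‖Vp ε‖ = 1)
    (hVmnorm : ∀ ε ∈ Set.Ioo (0 : ℝ) ε₁, ‖Vm ε‖ = 1)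
    (heigp : ∀ ε ∈ Set.Ioo (0 : ℝ) ε₁,
      Matrix.toEuclideanLin (U ε) (Vp ε) = lp ε • Vp ε)
    (heigm : ∀ ε ∈ Set.Ioo (0 : ℝ) ε₁,
      Matrix.toEuclideanLin (U ε) (Vm ε) = lm ε • Vm ε)
    (hlp : ∀ ε ∈ Set.Ioo (0 : ℝ) ε₁,
      ‖lp ε - l₀ * Complex.exp (Complex.I * (c * Real.sqrt ε))‖ ≤ K * ε)
    (hlm : ∀ ε ∈ Set.Ioo (0 : ℝ) ε₁,
      ‖lm ε - l₀ * Complex.exp (-(Complex.I * (c * Real.sqrt ε)))‖ ≤ K * ε)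
    (V₀p V₀m : EuclideanSpace ℂ (Fin n))
    (hV₀pnorm : ‖V₀p‖ = 1) (hV₀mnorm : ‖V₀m‖ = 1)
    (hV₀orth : (inner ℂ V₀p V₀m : ℂ) = 0)
    (hVp : ∀ ε ∈ Set.Ioo (0 : ℝ) ε₁, ‖Vp ε - V₀p‖ ≤ K * Real.sqrt ε)
    (hVm : ∀ ε ∈ Set.Ioo (0 : ℝ) ε₁, ‖Vm ε - V₀m‖ ≤ K * Real.sqrt ε)
    (ℓ₀ 𝔯₀ : EuclideanSpace ℂ (Fin n))
    (hℓ₀ : ℓ₀ = ((Real.sqrt 2 : ℂ))⁻¹ • (V₀p + V₀m))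
    (h𝔯₀ : 𝔯₀ = ((Real.sqrt 2 : ℂ))⁻¹ • (V₀p - V₀m))
    (m : ℝ → ℕ)
    (hm : ∀ ε ∈ Set.Ioo (0 : ℝ) ε₁, m ε = ⌊Real.pi / (2 * c * Real.sqrt ε)⌋₊) :
    ∃ K' > (0 : ℝ), ∀ ε ∈ Set.Ioo (0 : ℝ) ε₁,
      1 - K' * Real.sqrt ε ≤ ‖(inner ℂ 𝔯₀ (Matrix.toEuclideanLin (U ε ^ m ε) ℓ₀) : ℂ)‖ := by
  have hπ := Real.pi_pos
  refine ⟨Real.pi * K / c + 2 * c + 4 * K, by positivity, ?_⟩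
  -- basic facts about `𝔯₀`
  have hmp : (inner ℂ V₀m V₀p : ℂ) = 0 := by
    rw [← inner_conj_symm, hV₀orth, map_zero]
  have hsqrt2 : ((Real.sqrt 2 : ℝ) : ℂ) * ((Real.sqrt 2 : ℝ) : ℂ) = 2 := by
    norm_cast
    exact Real.mul_self_sqrt (by norm_num)
  have h𝔯self : (inner ℂ 𝔯₀ 𝔯₀ : ℂ) = 1 := by
    rw [h𝔯₀]
    rw [inner_smul_left, inner_smul_right, inner_sub_left, inner_sub_right, inner_sub_right]
    rw [inner_self_eq_norm_sq_to_K, inner_self_eq_norm_sq_to_K, hV₀pnorm, hV₀mnorm,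
      hV₀orth, hmp]
    rw [map_inv₀, Complex.conj_ofReal]
    push_cast
    field_simp
    linear_combination (-1 : ℂ) * hsqrt2
  have h𝔯norm : ‖𝔯₀‖ = 1 := by
    rw [@norm_eq_sqrt_re_inner ℂ, h𝔯self]
    simp
  have hsqrt2ge : (1 : ℝ) ≤ Real.sqrt 2 := by
    nlinarith [Real.sq_sqrt (show (0:ℝ) ≤ 2 by norm_num), Real.sqrt_nonneg 2]
  have hcoef : ‖((Real.sqrt 2 : ℂ))⁻¹‖ ≤ 1 := by
    rw [norm_inv]
    have h : ‖((Real.sqrt 2 : ℝ) : ℂ)‖ = Real.sqrt 2 := by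
      rw [Complex.norm_real, Real.norm_eq_abs, abs_of_nonneg (Real.sqrt_nonneg 2)]
    rw [h]
    exact inv_le_one_of_one_le₀ hsqrt2ge
  intro ε hε
  obtain ⟨hε0, hεε₁⟩ := hε
  have hin : ε ∈ Set.Ioo (0 : ℝ) ε₁ := ⟨hε0, hεε₁⟩
  set s := Real.sqrt ε with hsdef
  have hs0 : 0 < s := Real.sqrt_pos.mpr hε0
  have hεs : ε = s ^ 2 := (Real.sq_sqrt hε0.le).symm
  set N := m ε with hNdef
  -- floor bounds
  have hNle : (N : ℝ) ≤ Real.pi / (2 * c * s) := by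
    rw [hNdef, hm ε hin]
    exact Nat.floor_le (by positivity)
  have hNgt : Real.pi / (2 * c * s) < (N : ℝ) + 1 := by
    rw [hNdef, hm ε hin]
    exact Nat.lt_floor_add_one _
  have hcs : 0 < c * s := mul_pos hc hs0
  have hθle : (N : ℝ) * c * s ≤ Real.pi / 2 := by
    have h := mul_le_mul_of_nonneg_right hNle hcs.le
    have heq : Real.pi / (2 * c * s) * (c * s) = Real.pi / 2 := by
      field_simp
    calc (N : ℝ) * c * s = (N : ℝ) * (c * s) := by ring
      _ ≤ Real.pi / (2 * c * s) * (c * s) := h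
      _ = Real.pi / 2 := heq
  have hθge : Real.pi / 2 - (N : ℝ) * c * s ≤ c * s := by
    have h := mul_le_mul_of_nonneg_right hNgt.le hcs.le
    have heq : Real.pi / (2 * c * s) * (c * s) = Real.pi / 2 := by field_simp
    rw [heq] at h
    nlinarith
  have habs : |(N : ℝ) * c * s - Real.pi / 2| ≤ c * s := by
    rw [abs_le]
    constructor <;> nlinarith
  -- eigenvalue norms
  have hlpn : ‖lp ε‖ = 1 := by
    have h := aux_unitary_norm (U ε) (hU ε hin) (Vp ε)
    rw [heigp ε hin, norm_smul, hVpnorm ε hin] at h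
    simpa using h
  have hlmn : ‖lm ε‖ = 1 := by
    have h := aux_unitary_norm (U ε) (hU ε hin) (Vm ε)
    rw [heigm ε hin, norm_smul, hVmnorm ε hin] at h
    simpa using h
  -- approximating eigenvalues
  set bp : ℂ := l₀ * Complex.exp (Complex.I * (c * s)) with hbpdef
  set bm : ℂ := l₀ * Complex.exp (-(Complex.I * (c * s))) with hbmdef
  have hbpn : ‖bp‖ = 1 := by
    rw [hbpdef, norm_mul, hl₀, one_mul,
      show Complex.I * ((c : ℂ) * (s : ℂ)) = ((c * s : ℝ) : ℂ) * Complex.I by push_cast; ring,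
      Complex.norm_exp_ofReal_mul_I]
  have hbmn : ‖bm‖ = 1 := by
    rw [hbmdef, norm_mul, hl₀, one_mul,
      show -(Complex.I * ((c : ℂ) * (s : ℂ))) = ((-(c * s) : ℝ) : ℂ) * Complex.I by
        push_cast; ring,
      Complex.norm_exp_ofReal_mul_I]
  have hbpN : bp ^ N = l₀ ^ N * Complex.exp ((((N : ℝ) * c * s : ℝ) : ℂ) * Complex.I) := by
    rw [hbpdef, mul_pow, ← Complex.exp_nat_mul]
    congr 1
    push_cast
    ring
  have hbmN : bm ^ N = l₀ ^ N * Complex.exp (((-((N : ℝ) * c * s) : ℝ) : ℂ) * Complex.I) := by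
    rw [hbmdef, mul_pow, ← Complex.exp_nat_mul]
    congr 1
    push_cast
    ring
  have hNKε : (N : ℝ) * (K * ε) ≤ Real.pi * K / (2 * c) * s := by
    have h : (N : ℝ) * (K * ε) ≤ Real.pi / (2 * c * s) * (K * ε) :=
      mul_le_mul_of_nonneg_right hNle (by positivity)
    have heq : Real.pi / (2 * c * s) * (K * s ^ 2) = Real.pi * K / (2 * c) * s := by
      field_simp
    rw [hεs] at h ⊢
    linarith [h, heq.le, heq.ge]
  have hl₀N : ‖l₀ ^ N‖ = 1 := by rw [norm_pow, hl₀, one_pow]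
  have hEp : ‖lp ε ^ N - Complex.I * l₀ ^ N‖ ≤ Real.pi * K / (2 * c) * s + c * s := by
    have h1 : ‖lp ε ^ N - bp ^ N‖ ≤ Real.pi * K / (2 * c) * s := by
      calc ‖lp ε ^ N - bp ^ N‖ ≤ N * ‖lp ε - bp‖ := aux_pow_sub_pow _ _ hlpn hbpn N
        _ ≤ N * (K * ε) := mul_le_mul_of_nonneg_left (hlp ε hin) (Nat.cast_nonneg N)
        _ ≤ Real.pi * K / (2 * c) * s := hNKε
    have h2 : ‖bp ^ N - Complex.I * l₀ ^ N‖ ≤ c * s := by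
      rw [hbpN]
      have heq : l₀ ^ N * Complex.exp ((((N : ℝ) * c * s : ℝ) : ℂ) * Complex.I)
          - Complex.I * l₀ ^ N
          = l₀ ^ N * (Complex.exp ((((N : ℝ) * c * s : ℝ) : ℂ) * Complex.I)
            - Complex.exp (((Real.pi / 2 : ℝ) : ℂ) * Complex.I)) := by
        rw [aux_exp_pi_half]; ring
      rw [heq, norm_mul, hl₀N, one_mul]
      calc ‖Complex.exp ((((N : ℝ) * c * s : ℝ) : ℂ) * Complex.I)
            - Complex.exp (((Real.pi / 2 : ℝ) : ℂ) * Complex.I)‖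
          ≤ |(N : ℝ) * c * s - Real.pi / 2| := aux_exp_sub_exp _ _
        _ ≤ c * s := habs
    calc ‖lp ε ^ N - Complex.I * l₀ ^ N‖
        ≤ ‖lp ε ^ N - bp ^ N‖ + ‖bp ^ N - Complex.I * l₀ ^ N‖ := by
          have : lp ε ^ N - Complex.I * l₀ ^ N
              = (lp ε ^ N - bp ^ N) + (bp ^ N - Complex.I * l₀ ^ N) := by ring
          rw [this]; exact norm_add_le _ _
      _ ≤ Real.pi * K / (2 * c) * s + c * s := add_le_add h1 h2
  have hEm : ‖lm ε ^ N - (-Complex.I) * l₀ ^ N‖ ≤ Real.pi * K / (2 * c) * s + c * s := by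
    have h1 : ‖lm ε ^ N - bm ^ N‖ ≤ Real.pi * K / (2 * c) * s := by
      calc ‖lm ε ^ N - bm ^ N‖ ≤ N * ‖lm ε - bm‖ := aux_pow_sub_pow _ _ hlmn hbmn N
        _ ≤ N * (K * ε) := mul_le_mul_of_nonneg_left (hlm ε hin) (Nat.cast_nonneg N)
        _ ≤ Real.pi * K / (2 * c) * s := hNKε
    have h2 : ‖bm ^ N - (-Complex.I) * l₀ ^ N‖ ≤ c * s := by
      rw [hbmN]
      have heq : l₀ ^ N * Complex.exp (((-((N : ℝ) * c * s) : ℝ) : ℂ) * Complex.I)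
          - (-Complex.I) * l₀ ^ N
          = l₀ ^ N * (Complex.exp (((-((N : ℝ) * c * s) : ℝ) : ℂ) * Complex.I)
            - Complex.exp (((-(Real.pi / 2) : ℝ) : ℂ) * Complex.I)) := by
        rw [aux_exp_neg_pi_half]; ring
      rw [heq, norm_mul, hl₀N, one_mul]
      calc ‖Complex.exp (((-((N : ℝ) * c * s) : ℝ) : ℂ) * Complex.I)
            - Complex.exp (((-(Real.pi / 2) : ℝ) : ℂ) * Complex.I)‖
          ≤ |(-((N : ℝ) * c * s)) - (-(Real.pi / 2))| := aux_exp_sub_exp _ _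
        _ = |(N : ℝ) * c * s - Real.pi / 2| := by rw [← abs_neg]; ring_nf
        _ ≤ c * s := habs
    calc ‖lm ε ^ N - (-Complex.I) * l₀ ^ N‖
        ≤ ‖lm ε ^ N - bm ^ N‖ + ‖bm ^ N - (-Complex.I) * l₀ ^ N‖ := by
          have : lm ε ^ N - (-Complex.I) * l₀ ^ N
              = (lm ε ^ N - bm ^ N) + (bm ^ N - (-Complex.I) * l₀ ^ N) := by ring
          rw [this]; exact norm_add_le _ _
      _ ≤ Real.pi * K / (2 * c) * s + c * s := add_le_add h1 h2
  -- the vector decomposition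
  set d : EuclideanSpace ℂ (Fin n) := ℓ₀ - ((Real.sqrt 2 : ℂ))⁻¹ • (Vp ε + Vm ε) with hddef
  have hd : ‖d‖ ≤ 2 * (K * s) := by
    have heq : d = ((Real.sqrt 2 : ℂ))⁻¹ • ((V₀p - Vp ε) + (V₀m - Vm ε)) := by
      rw [hddef, hℓ₀]; module
    rw [heq, norm_smul]
    have h1 : ‖(V₀p - Vp ε) + (V₀m - Vm ε)‖ ≤ 2 * (K * s) := by
      calc ‖(V₀p - Vp ε) + (V₀m - Vm ε)‖ ≤ ‖V₀p - Vp ε‖ + ‖V₀m - Vm ε‖ := norm_add_le _ _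
        _ = ‖Vp ε - V₀p‖ + ‖Vm ε - V₀m‖ := by rw [norm_sub_rev, norm_sub_rev (V₀m)]
        _ ≤ K * s + K * s := add_le_add (hVp ε hin) (hVm ε hin)
        _ = 2 * (K * s) := by ring
    calc ‖((Real.sqrt 2 : ℂ))⁻¹‖ * ‖(V₀p - Vp ε) + (V₀m - Vm ε)‖
        ≤ 1 * (2 * (K * s)) := by
          apply mul_le_mul hcoef h1 (norm_nonneg _) (by norm_num)
      _ = 2 * (K * s) := by ring
  set w : EuclideanSpace ℂ (Fin n) := (Complex.I * l₀ ^ N) • 𝔯₀ with hwdef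
  set X₁ : EuclideanSpace ℂ (Fin n) := ((Real.sqrt 2 : ℂ))⁻¹ •
    ((lp ε ^ N - Complex.I * l₀ ^ N) • Vp ε + (lm ε ^ N - (-Complex.I) * l₀ ^ N) • Vm ε)
    with hX₁def
  set X₂ : EuclideanSpace ℂ (Fin n) := (Complex.I * l₀ ^ N) •
    (((Real.sqrt 2 : ℂ))⁻¹ • ((Vp ε - V₀p) - (Vm ε - V₀m))) with hX₂def
  set X₃ : EuclideanSpace ℂ (Fin n) := Matrix.toEuclideanLin (U ε ^ N) d with hX₃def
  have hsplit : Matrix.toEuclideanLin (U ε ^ N) ℓ₀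
      = ((Real.sqrt 2 : ℂ))⁻¹ • (lp ε ^ N • Vp ε + lm ε ^ N • Vm ε) + X₃ := by
    have hld : ℓ₀ = ((Real.sqrt 2 : ℂ))⁻¹ • (Vp ε + Vm ε) + d := by
      rw [hddef]; abel
    conv_lhs => rw [hld]
    rw [map_add, map_smul, map_add, aux_tEL_pow_eig _ _ _ (heigp ε hin) N,
      aux_tEL_pow_eig _ _ _ (heigm ε hin) N]
  have hmain : Matrix.toEuclideanLin (U ε ^ N) ℓ₀ - w = X₁ + X₂ + X₃ := by
    rw [hsplit, hwdef, hX₁def, hX₂def, h𝔯₀]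
    module
  have hXnorm : ‖Matrix.toEuclideanLin (U ε ^ N) ℓ₀ - w‖
      ≤ (Real.pi * K / c + 2 * c + 4 * K) * s := by
    have hX₁ : ‖X₁‖ ≤ 2 * (Real.pi * K / (2 * c) * s + c * s) := by
      rw [hX₁def, norm_smul]
      have h1 : ‖(lp ε ^ N - Complex.I * l₀ ^ N) • Vp ε
          + (lm ε ^ N - (-Complex.I) * l₀ ^ N) • Vm ε‖
          ≤ 2 * (Real.pi * K / (2 * c) * s + c * s) := by
        calc ‖(lp ε ^ N - Complex.I * l₀ ^ N) • Vp ε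
              + (lm ε ^ N - (-Complex.I) * l₀ ^ N) • Vm ε‖
            ≤ ‖(lp ε ^ N - Complex.I * l₀ ^ N) • Vp ε‖
              + ‖(lm ε ^ N - (-Complex.I) * l₀ ^ N) • Vm ε‖ := norm_add_le _ _
          _ = ‖lp ε ^ N - Complex.I * l₀ ^ N‖ + ‖lm ε ^ N - (-Complex.I) * l₀ ^ N‖ := by
              rw [norm_smul, norm_smul, hVpnorm ε hin, hVmnorm ε hin, mul_one, mul_one]
          _ ≤ 2 * (Real.pi * K / (2 * c) * s + c * s) := by linarith
      calc ‖((Real.sqrt 2 : ℂ))⁻¹‖ * ‖(lp ε ^ N - Complex.I * l₀ ^ N) • Vp ε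
            + (lm ε ^ N - (-Complex.I) * l₀ ^ N) • Vm ε‖
          ≤ 1 * (2 * (Real.pi * K / (2 * c) * s + c * s)) := by
            apply mul_le_mul hcoef h1 (norm_nonneg _) (by norm_num)
        _ = 2 * (Real.pi * K / (2 * c) * s + c * s) := by ring
    have hX₂ : ‖X₂‖ ≤ 2 * (K * s) := by
      rw [hX₂def, norm_smul, norm_smul]
      have hI : ‖Complex.I * l₀ ^ N‖ = 1 := by
        rw [norm_mul, Complex.norm_I, hl₀N, one_mul]
      rw [hI, one_mul]
      have h1 : ‖(Vp ε - V₀p) - (Vm ε - V₀m)‖ ≤ 2 * (K * s) := by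
        calc ‖(Vp ε - V₀p) - (Vm ε - V₀m)‖ ≤ ‖Vp ε - V₀p‖ + ‖Vm ε - V₀m‖ := norm_sub_le _ _
          _ ≤ K * s + K * s := add_le_add (hVp ε hin) (hVm ε hin)
          _ = 2 * (K * s) := by ring
      calc ‖((Real.sqrt 2 : ℂ))⁻¹‖ * ‖(Vp ε - V₀p) - (Vm ε - V₀m)‖
          ≤ 1 * (2 * (K * s)) := by
            apply mul_le_mul hcoef h1 (norm_nonneg _) (by norm_num)
        _ = 2 * (K * s) := by ring
    have hX₃ : ‖X₃‖ ≤ 2 * (K * s) := by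
      rw [hX₃def, aux_unitary_norm _ (pow_mem (hU ε hin) N) d]
      exact hd
    calc ‖Matrix.toEuclideanLin (U ε ^ N) ℓ₀ - w‖ = ‖X₁ + X₂ + X₃‖ := by rw [hmain]
      _ ≤ ‖X₁‖ + ‖X₂‖ + ‖X₃‖ := norm_add₃_le
      _ ≤ 2 * (Real.pi * K / (2 * c) * s + c * s) + 2 * (K * s) + 2 * (K * s) := by
          linarith
      _ = (Real.pi * K / c + 2 * c + 4 * K) * s := by field_simp; ring
  -- conclude
  have hiw : (inner ℂ 𝔯₀ w : ℂ) = Complex.I * l₀ ^ N := by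
    rw [hwdef, inner_smul_right, h𝔯self, mul_one]
  have hiwn : ‖(inner ℂ 𝔯₀ w : ℂ)‖ = 1 := by
    rw [hiw, norm_mul, Complex.norm_I, hl₀N, one_mul]
  have hdiff : ‖(inner ℂ 𝔯₀ w : ℂ) - inner ℂ 𝔯₀ (Matrix.toEuclideanLin (U ε ^ N) ℓ₀)‖
      ≤ (Real.pi * K / c + 2 * c + 4 * K) * s := by
    rw [← inner_sub_right]
    calc ‖(inner ℂ 𝔯₀ (w - Matrix.toEuclideanLin (U ε ^ N) ℓ₀) : ℂ)‖
        ≤ ‖𝔯₀‖ * ‖w - Matrix.toEuclideanLin (U ε ^ N) ℓ₀‖ := norm_inner_le_norm _ _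
      _ = ‖Matrix.toEuclideanLin (U ε ^ N) ℓ₀ - w‖ := by
          rw [h𝔯norm, one_mul, norm_sub_rev]
      _ ≤ (Real.pi * K / c + 2 * c + 4 * K) * s := hXnorm
  have htri := norm_sub_norm_le (inner ℂ 𝔯₀ w : ℂ)
    (inner ℂ 𝔯₀ (Matrix.toEuclideanLin (U ε ^ N) ℓ₀) : ℂ)
  rw [hiwn] at htri
  linarith
end

section
/- Let C₀, f ∈ ℂ[z] be nonzero polynomials and set C(z,ε) = C₀(z) + ε·f(z) for ε ∈ ℂ. Let λ₀ ∈ ℂ be a root of C₀ of multiplicity s ≥ 1 and let t be the multiplicity of λ₀ as a root of f. Assume t ≥ s − 2. Then exactly one of the following holds: (i) if t ≥ s, then (z − λ₀)^s divides C(·,ε) for every ε ∈ ℂ (all s roots in the λ₀ family are constant); (ii) if t = s − 1, then for every ε ≠ 0 the root λ₀ of C(·,ε) has multiplicity exactly s − 1, and there exist δ, σ, M > 0 such that for all ε with 0 < |ε| < σ the polynomial C(·,ε) has exactly one root z (counted with multiplicity) satisfying 0 < |z − λ₀| < δ, and that root satisfies |z − λ₀| ≤ M·|ε|; (iii) if t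 = s − 2, then for every ε ≠ 0 the root λ₀ of C(·,ε) has multiplicity exactly s − 2, and there exist δ, σ, M > 0 such that for all ε with 0 < |ε| < σ the polynomial C(·,ε) has exactly two roots z (counted with multiplicity) satisfying 0 < |z − λ₀| < δ, each of which satisfies |z − λ₀| ≤ M·|ε|^{1/2}. (The three-case theorem, Theorem 4.5.) -/
open Polynomial Metric Set

namespace Stmt2Aux

lemma norm_msprod (S : Multiset ℂ) : ‖S.prod‖ = (S.map fun x => ‖x‖).prod := by
  induction S using Multiset.induction with
  | empty => simp
  | cons a s ih => simp [norm_mul, ih]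

lemma msprod_le_pow (S : Multiset ℝ) (b : ℝ) (hb : 0 ≤ b)
    (h : ∀ x ∈ S, 0 ≤ x ∧ x ≤ b) : S.prod ≤ b ^ Multiset.card S := by
  induction S using Multiset.induction with
  | empty => simp
  | cons a s ih =>
    simp only [Multiset.prod_cons, Multiset.card_cons, pow_succ]
    have ha := h a (Multiset.mem_cons_self a s)
    have hs : s.prod ≤ b ^ Multiset.card s := ih fun x hx => h x (Multiset.mem_cons_of_mem hx)
    have hsn : 0 ≤ s.prod := Multiset.prod_nonneg fun x hx => (h x (Multiset.mem_cons_of_mem hx)).1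
    calc a * s.prod ≤ b * (b ^ Multiset.card s) :=
          mul_le_mul ha.2 hs hsn hb
      _ = b ^ Multiset.card s * b := mul_comm _ _

lemma pow_le_msprod (S : Multiset ℝ) (a : ℝ) (ha : 0 ≤ a)
    (h : ∀ x ∈ S, a ≤ x) : a ^ Multiset.card S ≤ S.prod := by
  induction S using Multiset.induction with
  | empty => simp
  | cons c s ih =>
    simp only [Multiset.prod_cons, Multiset.card_cons, pow_succ]
    have hc := h c (Multiset.mem_cons_self c s)
    have hs : a ^ Multiset.card s ≤ s.prod := ih fun x hx => h x (Multiset.mem_cons_of_mem hx)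
    calc a ^ Multiset.card s * a ≤ s.prod * c :=
          mul_le_mul hs hc ha (le_trans (pow_nonneg ha _) hs)
      _ = c * s.prod := mul_comm _ _

lemma msprod_pow (S : Multiset ℝ) (j : ℕ) : S.prod ^ j = (S.map fun x => x ^ j).prod := by
  induction S using Multiset.induction with
  | empty => simp
  | cons a s ih => simp [mul_pow, ih]

/-- Maximum modulus principle for polynomials on a closed ball. -/
lemma poly_max (p : Polynomial ℂ) (c : ℂ) (ρ : ℝ) (hρ : 0 < ρ) {Cb : ℝ}
    (hb : ∀ w : ℂ, ‖w - c‖ = ρ → ‖p.eval w‖ ≤ Cb) :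
    ∀ z : ℂ, ‖z - c‖ ≤ ρ → ‖p.eval z‖ ≤ Cb := by
  intro z hz
  have hd : DiffContOnCl ℂ (fun z => p.eval z) (ball c ρ) :=
    (p.differentiable).diffContOnCl
  refine Complex.norm_le_of_forall_mem_frontier_norm_le isBounded_ball hd ?_ ?_
  · intro w hw
    rw [frontier_ball c hρ.ne'] at hw
    exact hb w (by simpa [mem_sphere_iff_norm] using hw)
  · rw [closure_ball c hρ.ne']
    simpa [mem_closedBall_iff_norm, dist_eq_norm] using hz

/-- Minimum modulus principle for nonvanishing polynomials on a closed ball. -/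
lemma poly_min (p : Polynomial ℂ) (c : ℂ) (ρ : ℝ) (hρ : 0 < ρ) {cb : ℝ}
    (hnz : ∀ z : ℂ, ‖z - c‖ ≤ ρ → p.eval z ≠ 0)
    (hb : ∀ w : ℂ, ‖w - c‖ = ρ → cb ≤ ‖p.eval w‖) :
    ∀ z : ℂ, ‖z - c‖ ≤ ρ → cb ≤ ‖p.eval z‖ := by
  rcases le_or_gt cb 0 with hcb | hcb
  · exact fun z _ => hcb.trans (norm_nonneg _)
  intro z hz
  have hinv : ∀ z : ℂ, ‖z - c‖ ≤ ρ → ‖(p.eval z)⁻¹‖ ≤ cb⁻¹ := by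
    intro z hz
    have hd : DiffContOnCl ℂ (fun z => (p.eval z)⁻¹) (ball c ρ) := by
      refine ⟨DifferentiableOn.inv (p.differentiable.differentiableOn) ?_, ?_⟩
      · intro w hw
        exact hnz w (le_of_lt (by simpa [mem_ball_iff_norm, dist_eq_norm] using hw))
      · rw [closure_ball c hρ.ne']
        refine ContinuousOn.inv₀ (p.continuous.continuousOn) ?_
        intro w hw
        exact hnz w (by simpa [mem_closedBall_iff_norm, dist_eq_norm] using hw)
    refine Complex.norm_le_of_forall_mem_frontier_norm_le isBounded_ball hd ?_ ?_
    · intro w hw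
      rw [frontier_ball c hρ.ne'] at hw
      have hw' : ‖w - c‖ = ρ := by simpa [mem_sphere_iff_norm] using hw
      rw [norm_inv]
      exact inv_anti₀ hcb (hb w hw')
    · rw [closure_ball c hρ.ne']
      simpa [mem_closedBall_iff_norm, dist_eq_norm] using hz
  have h1 := hinv z hz
  have h2 : p.eval z ≠ 0 := hnz z hz
  rw [norm_inv] at h1
  have h3 : (0:ℝ) < ‖p.eval z‖ := norm_pos_iff.mpr h2
  calc cb = (cb⁻¹)⁻¹ := (inv_inv cb).symm
    _ ≤ (‖p.eval z‖⁻¹)⁻¹ := inv_anti₀ (by positivity) h1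
    _ = ‖p.eval z‖ := inv_inv _

lemma poly_bound (p : Polynomial ℂ) (c : ℂ) (ρ : ℝ) :
    ∃ K : ℝ, 0 < K ∧ ∀ z : ℂ, ‖z - c‖ ≤ ρ → ‖p.eval z‖ ≤ K := by
  obtain ⟨K, hK⟩ := (isCompact_closedBall c ρ).exists_bound_of_continuousOn
    (p.continuous.continuousOn (s := closedBall c ρ))
  refine ⟨max K 1, lt_of_lt_of_le one_pos (le_max_right _ _), fun z hz => ?_⟩
  exact le_trans (hK z (by simpa [mem_closedBall_iff_norm, dist_eq_norm] using hz)) (le_max_left _ _)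

lemma poly_small_near (q : Polynomial ℂ) (c : ℂ) (hq : q.eval c = 0) {τ : ℝ} (hτ : 0 < τ) :
    ∃ ρ > (0:ℝ), ∀ z : ℂ, ‖z - c‖ ≤ ρ → ‖q.eval z‖ ≤ τ := by
  have hc : ContinuousAt (fun z => q.eval z) c := (q.continuous).continuousAt
  rw [Metric.continuousAt_iff] at hc
  obtain ⟨ρ, hρ, hball⟩ := hc τ hτ
  refine ⟨ρ/2, by positivity, fun z hz => ?_⟩
  have := hball (x := z) (by rw [dist_eq_norm]; linarith)
  rw [dist_eq_norm, hq, sub_zero] at this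
  exact this.le

lemma poly_lower_near (g : Polynomial ℂ) (c : ℂ) (hg : g.eval c ≠ 0) :
    ∃ δ > (0:ℝ), ∀ z : ℂ, ‖z - c‖ ≤ δ → ‖g.eval c‖ / 2 ≤ ‖g.eval z‖ := by
  obtain ⟨ρ, hρ, hball⟩ := poly_small_near (g - C (g.eval c)) c (by simp) (τ := ‖g.eval c‖/2)
    (by simpa using norm_pos_iff.mpr hg)
  refine ⟨ρ, hρ, fun z hz => ?_⟩
  have h1 := hball z hz
  simp only [eval_sub, eval_C] at h1
  have h3 : ‖g.eval c‖ - ‖g.eval z‖ ≤ ‖g.eval c - g.eval z‖ := norm_sub_norm_le _ _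
  rw [norm_sub_rev] at h1
  linarith

end Stmt2Aux


namespace Stmt2Aux
open Polynomial

set_option maxHeartbeats 2000000 in
lemma key (g h : Polynomial ℂ) (l₀ : ℂ) (j : ℕ) (hj : j = 1 ∨ j = 2)
    (hg : g.eval l₀ ≠ 0) (hh : h.eval l₀ ≠ 0) :
    ∃ δ > (0:ℝ), ∃ σ > (0:ℝ), ∃ M > (0:ℝ), ∀ ε : ℂ, 0 < ‖ε‖ → ‖ε‖ < σ →
      (Multiset.card ((((X - C l₀)^j * g + C ε * h).roots).filter
          fun z => 0 < ‖z - l₀‖ ∧ ‖z - l₀‖ < δ) = j) ∧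
      ∀ z ∈ ((X - C l₀)^j * g + C ε * h).roots, ‖z - l₀‖ < δ →
        ‖z - l₀‖ ^ j ≤ M * ‖ε‖ := by
  classical
  have hj1 : 1 ≤ j := by rcases hj with rfl | rfl <;> norm_num
  set m : ℝ := ‖g.eval l₀‖ / 2 with hm_def
  have hm : 0 < m := half_pos (norm_pos_iff.mpr hg)
  obtain ⟨δ₁, hδ₁, hglow₁⟩ := poly_lower_near g l₀ hg
  set δ : ℝ := min δ₁ 1 with hδ_def
  have hδ : 0 < δ := lt_min hδ₁ one_pos
  have hδle1 : δ ≤ 1 := min_le_right _ _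
  have hglow : ∀ z : ℂ, ‖z - l₀‖ ≤ δ → m ≤ ‖g.eval z‖ := fun z hz =>
    hglow₁ z (le_trans hz (min_le_left _ _))
  obtain ⟨H, hH, hHb⟩ := poly_bound h l₀ δ
  obtain ⟨G₀, hG₀, hG₀b⟩ := poly_bound ((X - C l₀)^j * g) l₀ δ
  set G : ℝ := G₀ + H with hG_def
  have hG : 0 < G := by positivity
  set ρ : ℝ := δ / 2 with hρ_def
  have hρ : 0 < ρ := by positivity
  have hρδ : ρ ≤ δ := by rw [hρ_def]; linarith
  set u : ℝ := ρ / 2 with hu_def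
  have hu : 0 < u := by positivity
  set K : ℝ := H / m with hK_def
  have hK : 0 < K := div_pos hH hm
  set q₀ : ℝ := ρ ^ j * m / 2 with hq₀_def
  have hq₀ : 0 < q₀ := by positivity
  set hl : ℝ := ‖h.eval l₀‖ with hhl_def
  have hhl : 0 < hl := norm_pos_iff.mpr hh
  -- test-point constants
  obtain ⟨a, ha⟩ := IsAlgClosed.exists_pow_nat_eq (-(h.eval l₀ / g.eval l₀)) (n := 2) two_pos
  have hane : a ≠ 0 := by
    intro h0
    rw [h0] at ha
    have : h.eval l₀ / g.eval l₀ = 0 := by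
      have := ha.symm
      simpa [neg_eq_zero] using this
    exact hh (by simpa [_root_.div_eq_zero_iff, hg] using this)
  have hA : 0 < ‖a‖ := norm_pos_iff.mpr hane
  have haeval : (C (a^2) * g + h).eval l₀ = 0 := by
    simp only [eval_add, eval_mul, eval_C, ha]
    field_simp
    ring
  obtain ⟨ρ₁, hρ₁, hqsm⟩ := poly_small_near (C (a^2) * g + h) l₀ haeval one_pos
  set cB1 : ℝ := q₀ / δ with hcB1_def
  have hcB1 : 0 < cB1 := div_pos hq₀ hδ
  -- the smallness threshold
  set σ : ℝ := min 1 (min (u^j / K) (min (q₀ / H) (min (q₀ / (2 * hl))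
      ((hl^j * u^(j*(j+1))) / (2 * (K^(j+1) * G^j)))))) ⊓
      min (ρ^2 / ‖a‖^2) (min (ρ₁^2 / ‖a‖^2) ((‖a‖ * cB1)^2 / 2)) with hσ_def
  have hσ : 0 < σ := by
    refine lt_min (lt_min one_pos (lt_min (by positivity) (lt_min (by positivity)
      (lt_min (by positivity) (by positivity))))) (lt_min (by positivity)
      (lt_min (by positivity) (by positivity)))
  have hσ1 : σ ≤ 1 := le_trans (min_le_left _ _) (min_le_left _ _)
  have hσ2 : σ ≤ u^j / K := le_trans (min_le_left _ _)
    (le_trans (min_le_right _ _) (min_le_left _ _))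
  have hσ3 : σ ≤ q₀ / H := le_trans (min_le_left _ _)
    (le_trans (min_le_right _ _) (le_trans (min_le_right _ _) (min_le_left _ _)))
  have hσ4 : σ ≤ q₀ / (2 * hl) := le_trans (min_le_left _ _)
    (le_trans (min_le_right _ _) (le_trans (min_le_right _ _)
      (le_trans (min_le_right _ _) (min_le_left _ _))))
  have hσ5 : σ ≤ (hl^j * u^(j*(j+1))) / (2 * (K^(j+1) * G^j)) := le_trans (min_le_left _ _)
    (le_trans (min_le_right _ _) (le_trans (min_le_right _ _)
      (le_trans (min_le_right _ _) (min_le_right _ _))))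
  have hσ6 : σ ≤ ρ^2 / ‖a‖^2 := le_trans (min_le_right _ _) (min_le_left _ _)
  have hσ7 : σ ≤ ρ₁^2 / ‖a‖^2 := le_trans (min_le_right _ _)
    (le_trans (min_le_right _ _) (min_le_left _ _))
  have hσ8 : σ ≤ (‖a‖ * cB1)^2 / 2 := le_trans (min_le_right _ _)
    (le_trans (min_le_right _ _) (min_le_right _ _))
  refine ⟨δ, hδ, σ, hσ, K, hK, ?_⟩
  intro ε hε0 hεσ
  have hεne : ε ≠ 0 := norm_pos_iff.mp hε0
  have hε1 : ‖ε‖ ≤ 1 := le_of_lt (lt_of_lt_of_le hεσ hσ1)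
  set Q : Polynomial ℂ := (X - C l₀)^j * g + C ε * h with hQdef
  have hQl : Q.eval l₀ = ε * h.eval l₀ := by
    simp [hQdef, sub_self, zero_pow (by omega : j ≠ 0)]
  have hQl0 : Q.eval l₀ ≠ 0 := by rw [hQl]; exact mul_ne_zero hεne hh
  have hQne : Q ≠ 0 := fun h0 => hQl0 (by rw [h0]; simp)
  -- root location bound
  have hrootK : ∀ z ∈ Q.roots, ‖z - l₀‖ ≤ δ → ‖z - l₀‖ ^ j ≤ K * ‖ε‖ := by
    intro z hz hzδ
    have hz0 : Q.eval z = 0 := (mem_roots hQne).mp hz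
    have heq : (z - l₀)^j * g.eval z = -(ε * h.eval z) := by
      rw [hQdef] at hz0
      simp only [eval_add, eval_mul, eval_pow, eval_sub, eval_X, eval_C] at hz0
      linear_combination hz0
    have hnorm : ‖z - l₀‖^j * ‖g.eval z‖ = ‖ε‖ * ‖h.eval z‖ := by
      calc ‖z - l₀‖^j * ‖g.eval z‖ = ‖(z - l₀)^j * g.eval z‖ := by
            rw [norm_mul, norm_pow]
        _ = ‖ε * h.eval z‖ := by rw [heq, norm_neg]
        _ = ‖ε‖ * ‖h.eval z‖ := norm_mul _ _
    have h1 : ‖z - l₀‖^j * m ≤ ‖ε‖ * H := by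
      calc ‖z - l₀‖^j * m ≤ ‖z - l₀‖^j * ‖g.eval z‖ :=
            mul_le_mul_of_nonneg_left (hglow z hzδ) (by positivity)
        _ = ‖ε‖ * ‖h.eval z‖ := hnorm
        _ ≤ ‖ε‖ * H := mul_le_mul_of_nonneg_left (hHb z hzδ) (norm_nonneg _)
    rw [hK_def, div_mul_eq_mul_div, le_div_iff₀ hm]
    calc ‖z - l₀‖^j * m ≤ ‖ε‖ * H := h1
      _ = H * ‖ε‖ := mul_comm _ _
  have hrootu : ∀ z ∈ Q.roots, ‖z - l₀‖ ≤ δ → ‖z - l₀‖ ≤ u := by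
    intro z hz hzδ
    have h1 : ‖z - l₀‖ ^ j ≤ u ^ j := by
      calc ‖z - l₀‖ ^ j ≤ K * ‖ε‖ := hrootK z hz hzδ
        _ ≤ K * σ := mul_le_mul_of_nonneg_left hεσ.le hK.le
        _ ≤ K * (u^j / K) := mul_le_mul_of_nonneg_left hσ2 hK.le
        _ = u ^ j := by field_simp
    exact (pow_le_pow_iff_left₀ (norm_nonneg _) hu.le (by omega)).mp h1
  -- the nearby-roots multiset and the factorization Q = P * B
  set R : Multiset ℂ := Q.roots.filter (fun z => 0 < ‖z - l₀‖ ∧ ‖z - l₀‖ < δ) with hR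
  set k : ℕ := Multiset.card R with hk
  have hRmem : ∀ r ∈ R, r ∈ Q.roots ∧ ‖r - l₀‖ < δ := by
    intro r hr
    have := Multiset.mem_filter.mp hr
    exact ⟨this.1, this.2.2⟩
  have hRu : ∀ r ∈ R, ‖r - l₀‖ ≤ u :=
    fun r hr => hrootu r (hRmem r hr).1 (le_of_lt (hRmem r hr).2)
  set P : Polynomial ℂ := (R.map fun r => X - C r).prod with hP
  have hPdvd : P ∣ Q := (Multiset.prod_X_sub_C_dvd_iff_le_roots hQne R).mpr
    (Multiset.filter_le _ _)
  obtain ⟨B, hB⟩ := hPdvd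
  have hPBne : P ≠ 0 ∧ B ≠ 0 := mul_ne_zero_iff.mp (hB ▸ hQne)
  have hPeval : ∀ z : ℂ, ‖P.eval z‖ = (R.map fun r => ‖z - r‖).prod := by
    intro z
    rw [hP, eval_multiset_prod, Multiset.map_map, norm_msprod, Multiset.map_map]
    apply congrArg
    apply Multiset.map_congr rfl
    intro r _
    simp
  have hQroots : Q.roots = R + B.roots := by
    rw [hB, roots_mul (hB ▸ hQne), hP, roots_multiset_prod_X_sub_C]
  have hBroots : B.roots = Q.roots.filter (fun z => ¬ (0 < ‖z - l₀‖ ∧ ‖z - l₀‖ < δ)) := by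
    have h1 : R + B.roots = R + Q.roots.filter (fun z => ¬ (0 < ‖z - l₀‖ ∧ ‖z - l₀‖ < δ)) := by
      rw [← hQroots, hR]
      exact (Multiset.filter_add_not _ _).symm
    exact add_left_cancel h1
  have hQPB : ∀ z : ℂ, ‖Q.eval z‖ = ‖P.eval z‖ * ‖B.eval z‖ := by
    intro z; rw [hB, eval_mul, norm_mul]
  have hBl₀ : B.eval l₀ ≠ 0 := by
    intro h0
    apply hQl0
    rw [hB, eval_mul, h0, mul_zero]
  have hBnz : ∀ z : ℂ, ‖z - l₀‖ ≤ ρ → B.eval z ≠ 0 := by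
    intro z hz h0
    have hzr : z ∈ B.roots := (mem_roots hPBne.2).mpr h0
    rw [hBroots, Multiset.mem_filter] at hzr
    apply hzr.2
    have hzl : z ≠ l₀ := fun he => hBl₀ (he ▸ h0)
    refine ⟨norm_pos_iff.mpr (sub_ne_zero.mpr hzl), lt_of_le_of_lt hz ?_⟩
    rw [hρ_def]; linarith
  -- uniform bounds for Q on the disc and on the circle of radius ρ
  have hQball : ∀ z : ℂ, ‖z - l₀‖ ≤ δ → ‖Q.eval z‖ ≤ G := by
    intro z hz
    calc ‖Q.eval z‖ ≤ ‖((X - C l₀)^j * g).eval z‖ + ‖(C ε * h).eval z‖ := by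
          rw [hQdef, eval_add]; exact norm_add_le _ _
      _ ≤ G₀ + 1 * H := by
          refine add_le_add (hG₀b z hz) ?_
          rw [eval_mul, eval_C, norm_mul]
          exact mul_le_mul hε1 (hHb z hz) (norm_nonneg _) one_pos.le
      _ = G := by rw [hG_def]; ring
  have hQcirc : ∀ w : ℂ, ‖w - l₀‖ = ρ → q₀ ≤ ‖Q.eval w‖ := by
    intro w hw
    have hwδ : ‖w - l₀‖ ≤ δ := by rw [hw]; exact hρδ
    have h1 : ‖((X - C l₀)^j * g).eval w‖ = ρ^j * ‖g.eval w‖ := by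
      rw [eval_mul, eval_pow, eval_sub, eval_X, eval_C, norm_mul, norm_pow, hw]
    have h2 : ρ^j * ‖g.eval w‖ - ‖ε‖ * ‖h.eval w‖ ≤ ‖Q.eval w‖ := by
      have h3 : ‖((X - C l₀)^j * g).eval w‖ ≤ ‖Q.eval w‖ + ‖(C ε * h).eval w‖ := by
        have : ((X - C l₀)^j * g).eval w = Q.eval w - (C ε * h).eval w := by
          rw [hQdef]; simp only [eval_add]; ring
        rw [this]
        exact norm_sub_le _ _
      rw [h1] at h3
      have h4 : ‖(C ε * h).eval w‖ = ‖ε‖ * ‖h.eval w‖ := by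
        rw [eval_mul, eval_C, norm_mul]
      linarith [h3, h4.le, h4.ge]
    have hgw : m ≤ ‖g.eval w‖ := hglow w hwδ
    have hhw : ‖h.eval w‖ ≤ H := hHb w hwδ
    have hεH : ‖ε‖ * H ≤ q₀ := by
      calc ‖ε‖ * H ≤ σ * H := mul_le_mul_of_nonneg_right hεσ.le hH.le
        _ ≤ (q₀ / H) * H := mul_le_mul_of_nonneg_right hσ3 hH.le
        _ = q₀ := by field_simp
    have hq2 : ρ^j * m = 2 * q₀ := by rw [hq₀_def]; ring
    have h5 : ρ^j * m ≤ ρ^j * ‖g.eval w‖ :=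
      mul_le_mul_of_nonneg_left hgw (by positivity)
    have h6 : ‖ε‖ * ‖h.eval w‖ ≤ ‖ε‖ * H :=
      mul_le_mul_of_nonneg_left hhw (norm_nonneg _)
    linarith
  -- bounds on P on the circle
  have hPcircLow : ∀ w : ℂ, ‖w - l₀‖ = ρ → u ^ k ≤ ‖P.eval w‖ := by
    intro w hw
    rw [hPeval]
    have hcard : Multiset.card (R.map fun r => ‖w - r‖) = k := by
      rw [Multiset.card_map]
    rw [← hcard]
    apply pow_le_msprod _ _ hu.le
    intro x hx
    obtain ⟨r, hr, rfl⟩ := Multiset.mem_map.mp hx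
    have h1 : ‖w - l₀‖ - ‖r - l₀‖ ≤ ‖w - r‖ := by
      have h2 := norm_sub_norm_le (w - l₀) (r - l₀)
      rw [sub_sub_sub_cancel_right] at h2
      exact h2
    have h3 := hRu r hr
    rw [hw] at h1
    have : ρ - u = u := by rw [hu_def]; ring
    linarith
  have hPcircHigh : ∀ w : ℂ, ‖w - l₀‖ = ρ → ‖P.eval w‖ ≤ δ ^ k := by
    intro w hw
    rw [hPeval]
    have hcard : Multiset.card (R.map fun r => ‖w - r‖) = k := by
      rw [Multiset.card_map]
    rw [← hcard]
    apply msprod_le_pow _ _ hδ.le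
    intro x hx
    obtain ⟨r, hr, rfl⟩ := Multiset.mem_map.mp hx
    refine ⟨norm_nonneg _, ?_⟩
    have h1 : ‖w - r‖ ≤ ‖w - l₀‖ + ‖r - l₀‖ := by
      calc ‖w - r‖ = ‖(w - l₀) - (r - l₀)‖ := by rw [sub_sub_sub_cancel_right]
        _ ≤ ‖w - l₀‖ + ‖r - l₀‖ := norm_sub_le _ _
    have h3 := hRu r hr
    rw [hw] at h1
    have : ρ + u ≤ δ := by rw [hu_def, hρ_def]; linarith
    linarith
  -- bounds on B on the closed disc of radius ρ
  set cB : ℝ := q₀ / δ ^ k with hcB_def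
  set CB : ℝ := G / u ^ k with hCB_def
  have hcBpos : 0 < cB := by positivity
  have hCBpos : 0 < CB := by positivity
  have hBcircLow : ∀ w : ℂ, ‖w - l₀‖ = ρ → cB ≤ ‖B.eval w‖ := by
    intro w hw
    have h1 := hQcirc w hw
    have h2 := hQPB w
    have h3 := hPcircHigh w hw
    rw [hcB_def, div_le_iff₀ (by positivity : (0:ℝ) < δ ^ k)]
    have h4 : ‖P.eval w‖ * ‖B.eval w‖ ≤ δ ^ k * ‖B.eval w‖ :=
      mul_le_mul_of_nonneg_right h3 (norm_nonneg _)
    calc q₀ ≤ ‖Q.eval w‖ := h1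
      _ = ‖P.eval w‖ * ‖B.eval w‖ := h2
      _ ≤ δ ^ k * ‖B.eval w‖ := h4
      _ = ‖B.eval w‖ * δ ^ k := mul_comm _ _
  have hBcircHigh : ∀ w : ℂ, ‖w - l₀‖ = ρ → ‖B.eval w‖ ≤ CB := by
    intro w hw
    have h1 := hQball w (by rw [hw]; exact hρδ)
    have h2 := hQPB w
    have h3 := hPcircLow w hw
    rw [hCB_def, le_div_iff₀ (by positivity : (0:ℝ) < u ^ k)]
    calc ‖B.eval w‖ * u ^ k = u ^ k * ‖B.eval w‖ := mul_comm _ _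
      _ ≤ ‖P.eval w‖ * ‖B.eval w‖ :=
          mul_le_mul_of_nonneg_right h3 (norm_nonneg _)
      _ = ‖Q.eval w‖ := h2.symm
      _ ≤ G := h1
  have hBlow : ∀ z : ℂ, ‖z - l₀‖ ≤ ρ → cB ≤ ‖B.eval z‖ :=
    poly_min B l₀ ρ hρ hBnz hBcircLow
  have hBhigh : ∀ z : ℂ, ‖z - l₀‖ ≤ ρ → ‖B.eval z‖ ≤ CB :=
    poly_max B l₀ ρ hρ hBcircHigh
  have hl₀ρ : ‖l₀ - l₀‖ ≤ ρ := by simp [hρ.le]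
  have hmain : ‖ε‖ * hl = ‖P.eval l₀‖ * ‖B.eval l₀‖ := by
    rw [hhl_def, ← norm_mul, ← hQl, hQPB]
  -- Case k = 0 is impossible
  have hk0 : k ≠ 0 := by
    intro h0
    have hR0 : R = 0 := Multiset.card_eq_zero.mp (hk ▸ h0)
    have hP1 : ‖P.eval l₀‖ = 1 := by rw [hP, hR0]; simp
    rw [hP1, one_mul] at hmain
    have h2 : cB ≤ ‖B.eval l₀‖ := hBlow l₀ hl₀ρ
    have h3 : cB = q₀ := by rw [hcB_def, h0]; simp
    have h4 : ‖ε‖ * hl ≤ q₀ / 2 := by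
      calc ‖ε‖ * hl ≤ σ * hl := mul_le_mul_of_nonneg_right hεσ.le hhl.le
        _ ≤ (q₀ / (2 * hl)) * hl := mul_le_mul_of_nonneg_right hσ4 hhl.le
        _ = q₀ / 2 := by field_simp
    rw [h3] at h2
    rw [hmain] at h4
    linarith
  -- Case k ≥ j + 1 is impossible
  have hkhi : k < j + 1 := by
    by_contra hcon
    push_neg at hcon
    set b : ℝ := min (K * ‖ε‖) (u ^ j) with hb_def
    have hbnn : 0 ≤ b := le_min (by positivity) (by positivity)
    have e1 : ‖P.eval l₀‖ ^ j = (R.map fun r => ‖l₀ - r‖ ^ j).prod := by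
      rw [hPeval, msprod_pow, Multiset.map_map]
      rfl
    have e2 : ‖P.eval l₀‖ ^ j ≤ b ^ k := by
      have hcard : Multiset.card (R.map fun r => ‖l₀ - r‖ ^ j) = k := by
        rw [Multiset.card_map]
      rw [e1, ← hcard]
      apply msprod_le_pow _ _ hbnn
      intro y hy
      obtain ⟨r, hr, rfl⟩ := Multiset.mem_map.mp hy
      refine ⟨by positivity, le_min ?_ ?_⟩
      · rw [norm_sub_rev]
        exact hrootK r (hRmem r hr).1 (le_of_lt (hRmem r hr).2)
      · rw [norm_sub_rev]
        exact pow_le_pow_left₀ (norm_nonneg _) (hRu r hr) j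
    have e3 : b ^ k ≤ (K * ‖ε‖)^(j+1) * (u^j)^(k - (j+1)) := by
      have hsplit : b ^ k = b^(j+1) * b^(k-(j+1)) := by
        rw [← pow_add]
        congr 1
        omega
      rw [hsplit]
      exact mul_le_mul (pow_le_pow_left₀ hbnn (min_le_left _ _) _)
        (pow_le_pow_left₀ hbnn (min_le_right _ _) _) (by positivity) (by positivity)
    have e4 : ‖B.eval l₀‖ ≤ CB := hBhigh l₀ hl₀ρ
    have e5 : (‖ε‖ * hl)^j ≤ (K * ‖ε‖)^(j+1) * (u^j)^(k-(j+1)) * CB^j := by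
      rw [hmain, mul_pow]
      calc ‖P.eval l₀‖^j * ‖B.eval l₀‖^j ≤ b^k * CB^j :=
            mul_le_mul e2 (pow_le_pow_left₀ (norm_nonneg _) e4 j) (by positivity)
              (by positivity)
        _ ≤ (K * ‖ε‖)^(j+1) * (u^j)^(k-(j+1)) * CB^j :=
            mul_le_mul_of_nonneg_right e3 (by positivity)
    have hCBG : CB^j * u^(j*k) = G^j := by
      rw [hCB_def, div_pow, ← pow_mul, mul_comm k j]
      field_simp [hu.ne']
    have e6 : (‖ε‖*hl)^j * u^(j*k) ≤ (K*‖ε‖)^(j+1) * (u^j)^(k-(j+1)) * G^j := by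
      calc (‖ε‖*hl)^j * u^(j*k)
          ≤ ((K * ‖ε‖)^(j+1) * (u^j)^(k-(j+1)) * CB^j) * u^(j*k) :=
            mul_le_mul_of_nonneg_right e5 (by positivity)
        _ = (K*‖ε‖)^(j+1) * (u^j)^(k-(j+1)) * (CB^j * u^(j*k)) := by ring
        _ = (K*‖ε‖)^(j+1) * (u^j)^(k-(j+1)) * G^j := by rw [hCBG]
    have e7 : u^(j*k) = u^(j*(k-(j+1))) * u^(j*(j+1)) := by
      rw [← pow_add, ← Nat.mul_add]
      congr 2
      omega
    have e8 : (‖ε‖*hl)^j * u^(j*(j+1)) ≤ K^(j+1) * G^j * ‖ε‖^(j+1) := by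
      have hupos : (0:ℝ) < u^(j*(k-(j+1))) := by positivity
      have e6' : ((‖ε‖*hl)^j * u^(j*(j+1))) * u^(j*(k-(j+1))) ≤
          (K^(j+1) * G^j * ‖ε‖^(j+1)) * u^(j*(k-(j+1))) := by
        calc ((‖ε‖*hl)^j * u^(j*(j+1))) * u^(j*(k-(j+1)))
            = (‖ε‖*hl)^j * u^(j*k) := by rw [e7]; ring
          _ ≤ (K*‖ε‖)^(j+1) * (u^j)^(k-(j+1)) * G^j := e6
          _ = (K^(j+1) * G^j * ‖ε‖^(j+1)) * u^(j*(k-(j+1))) := by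
              rw [← pow_mul, mul_pow]; ring
      exact le_of_mul_le_mul_right e6' hupos
    have e9 : hl^j * u^(j*(j+1)) ≤ K^(j+1) * G^j * ‖ε‖ := by
      have hεp : (0:ℝ) < ‖ε‖^j := by positivity
      have e8' : (hl^j * u^(j*(j+1))) * ‖ε‖^j ≤ (K^(j+1) * G^j * ‖ε‖) * ‖ε‖^j := by
        calc (hl^j * u^(j*(j+1))) * ‖ε‖^j = (‖ε‖*hl)^j * u^(j*(j+1)) := by
              rw [mul_pow]; ring
          _ ≤ K^(j+1) * G^j * ‖ε‖^(j+1) := e8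
          _ = (K^(j+1) * G^j * ‖ε‖) * ‖ε‖^j := by rw [pow_succ]; ring
      exact le_of_mul_le_mul_right e8' hεp
    have e10 : K^(j+1) * G^j * ‖ε‖ < K^(j+1) * G^j * σ :=
      mul_lt_mul_of_pos_left hεσ (by positivity)
    have e11 : K^(j+1) * G^j * σ ≤ hl^j * u^(j*(j+1)) / 2 := by
      have h1 := hσ5
      rw [le_div_iff₀ (by positivity : (0:ℝ) < 2 * (K^(j+1) * G^j))] at h1
      calc K^(j+1) * G^j * σ = (σ * (2 * (K^(j+1) * G^j))) / 2 := by ring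
        _ ≤ hl^j * u^(j*(j+1)) / 2 := by linarith
    have hpos : (0:ℝ) < hl^j * u^(j*(j+1)) := by positivity
    linarith
  -- Case k = 1 is impossible when j = 2
  have hkne1 : j = 2 → k ≠ 1 := by
    intro hj2 hk1
    obtain ⟨r, hRr⟩ := Multiset.card_eq_one.mp (hk ▸ hk1)
    have hrR : r ∈ R := by rw [hRr]; exact Multiset.mem_singleton_self r
    have hPlin : ∀ z : ℂ, P.eval z = z - r := by
      intro z
      rw [hP, hRr]
      simp
    obtain ⟨w₂, hw₂⟩ := IsAlgClosed.exists_pow_nat_eq ε (n := 2) two_pos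
    have hw₂0 : w₂ ≠ 0 := by
      intro h0
      rw [h0] at hw₂
      exact hεne (by simpa using hw₂.symm)
    have hw₂n : ‖w₂‖^2 = ‖ε‖ := by rw [← norm_pow, hw₂]
    have hw₂pos : 0 < ‖w₂‖ := norm_pos_iff.mpr hw₂0
    set W : ℝ := ‖a‖ * ‖w₂‖ with hW_def
    have hWpos : 0 < W := mul_pos hA hw₂pos
    have hW2 : W^2 = ‖a‖^2 * ‖ε‖ := by rw [hW_def, mul_pow, hw₂n]
    have hWρ : W ≤ ρ := by
      have h1 : W^2 ≤ ρ^2 := by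
        rw [hW2]
        calc ‖a‖^2 * ‖ε‖ ≤ ‖a‖^2 * σ :=
              mul_le_mul_of_nonneg_left hεσ.le (by positivity)
          _ ≤ ‖a‖^2 * (ρ^2 / ‖a‖^2) := mul_le_mul_of_nonneg_left hσ6 (by positivity)
          _ = ρ^2 := by
              rw [mul_comm]
              exact div_mul_cancel₀ _ (pow_ne_zero 2 (norm_ne_zero_iff.mpr hane))
      exact (pow_le_pow_iff_left₀ hWpos.le hρ.le two_ne_zero).mp h1
    have hWρ₁ : W ≤ ρ₁ := by
      have h1 : W^2 ≤ ρ₁^2 := by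
        rw [hW2]
        calc ‖a‖^2 * ‖ε‖ ≤ ‖a‖^2 * σ :=
              mul_le_mul_of_nonneg_left hεσ.le (by positivity)
          _ ≤ ‖a‖^2 * (ρ₁^2 / ‖a‖^2) := mul_le_mul_of_nonneg_left hσ7 (by positivity)
          _ = ρ₁^2 := by
              rw [mul_comm]
              exact div_mul_cancel₀ _ (pow_ne_zero 2 (norm_ne_zero_iff.mpr hane))
      exact (pow_le_pow_iff_left₀ hWpos.le hρ₁.le two_ne_zero).mp h1
    have hQev : ∀ v : ℂ, v^2 = a^2 * ε → Q.eval (l₀ + v) = ε * ((C (a^2) * g + h).eval (l₀ + v)) := by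
      intro v hv2
      rw [hQdef, hj2]
      simp only [eval_add, eval_mul, eval_pow, eval_sub, eval_X, eval_C,
        add_sub_cancel_left]
      rw [hv2]
      ring
    have hupper : ∀ v : ℂ, v^2 = a^2 * ε → ‖v‖ = W → ‖Q.eval (l₀ + v)‖ ≤ ‖ε‖ := by
      intro v hv2 hvW
      rw [hQev v hv2, norm_mul]
      have h1 : ‖(l₀ + v) - l₀‖ ≤ ρ₁ := by
        rw [add_sub_cancel_left, hvW]; exact hWρ₁
      calc ‖ε‖ * ‖(C (a^2) * g + h).eval (l₀ + v)‖ ≤ ‖ε‖ * 1 :=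
            mul_le_mul_of_nonneg_left (hqsm _ h1) (norm_nonneg _)
        _ = ‖ε‖ := mul_one _
    have hlower : ∀ v : ℂ, ‖v‖ = W → ‖v - (r - l₀)‖ * cB ≤ ‖Q.eval (l₀ + v)‖ := by
      intro v hvW
      have h1 : ‖(l₀ + v) - l₀‖ ≤ ρ := by rw [add_sub_cancel_left, hvW]; exact hWρ
      have h2 := hQPB (l₀ + v)
      rw [hPlin] at h2
      have h3 : (l₀ + v) - r = v - (r - l₀) := by ring
      rw [h3] at h2
      rw [h2]
      exact mul_le_mul_of_nonneg_left (hBlow _ h1) (norm_nonneg _)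
    -- one of the two test points is at distance ≥ W from r
    have hv2a : (a * w₂)^2 = a^2 * ε := by rw [mul_pow, hw₂]
    have hv2b : (-(a * w₂))^2 = a^2 * ε := by rw [neg_pow]; simp [hv2a]
    have hnorma : ‖a * w₂‖ = W := by rw [norm_mul, hW_def]
    have hnormb : ‖-(a * w₂)‖ = W := by rw [norm_neg, hnorma]
    have hsum : 2 * W ≤ ‖(a * w₂) - (r - l₀)‖ + ‖(-(a * w₂)) - (r - l₀)‖ := by
      have h1 : ‖((a * w₂) - (r - l₀)) - ((-(a * w₂)) - (r - l₀))‖ ≤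
          ‖(a * w₂) - (r - l₀)‖ + ‖(-(a * w₂)) - (r - l₀)‖ := norm_sub_le _ _
      have h2 : ((a * w₂) - (r - l₀)) - ((-(a * w₂)) - (r - l₀)) = 2 * (a * w₂) := by ring
      rw [h2] at h1
      have h3 : ‖(2 : ℂ) * (a * w₂)‖ = 2 * W := by
        rw [norm_mul, hnorma]
        norm_num
      linarith [h3 ▸ h1]
    have hWε : W * cB ≤ ‖ε‖ := by
      rcases le_or_gt W ‖(a * w₂) - (r - l₀)‖ with hc | hc
      · calc W * cB ≤ ‖(a * w₂) - (r - l₀)‖ * cB :=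
              mul_le_mul_of_nonneg_right hc hcBpos.le
          _ ≤ ‖Q.eval (l₀ + a * w₂)‖ := hlower _ hnorma
          _ ≤ ‖ε‖ := hupper _ hv2a hnorma
      · have hc2 : W ≤ ‖(-(a * w₂)) - (r - l₀)‖ := by linarith
        calc W * cB ≤ ‖(-(a * w₂)) - (r - l₀)‖ * cB :=
              mul_le_mul_of_nonneg_right hc2 hcBpos.le
          _ ≤ ‖Q.eval (l₀ + -(a * w₂))‖ := hlower _ hnormb
          _ ≤ ‖ε‖ := hupper _ hv2b hnormb
    -- derive the contradiction
    have hcBcB1 : cB = cB1 := by rw [hcB_def, hk1, pow_one, hcB1_def]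
    rw [hcBcB1] at hWε
    have h1 : (W * cB1) * (W * cB1) ≤ ‖ε‖ * ‖ε‖ :=
      mul_le_mul hWε hWε (by positivity) (norm_nonneg _)
    have h2 : (‖a‖^2 * cB1^2) * ‖ε‖ ≤ ‖ε‖ * ‖ε‖ := by
      have he : (‖a‖^2 * cB1^2) * ‖ε‖ = (W * cB1) * (W * cB1) := by
        have h0 : (W * cB1) * (W * cB1) = W^2 * cB1^2 := by ring
        rw [h0, hW2]; ring
      rw [he]; exact h1
    have h3 : ‖a‖^2 * cB1^2 ≤ ‖ε‖ := by
      have := le_of_mul_le_mul_right (by linarith [h2] : (‖a‖^2 * cB1^2) * ‖ε‖ ≤ ‖ε‖ * ‖ε‖) hε0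
      linarith
    have h4 : ‖ε‖ < (‖a‖ * cB1)^2 / 2 := lt_of_lt_of_le hεσ hσ8
    have h5 : (‖a‖ * cB1)^2 = ‖a‖^2 * cB1^2 := by ring
    have hpos : 0 < ‖a‖^2 * cB1^2 := by positivity
    rw [h5] at h4
    linarith
  have hkj : k = j := by rcases hj with rfl | rfl <;> omega
  constructor
  · exact hkj
  · intro z hz hzδ
    exact hrootK z hz hzδ.le

end Stmt2Aux

namespace Stmt2Aux
open Polynomial

lemma wrap (C₀ f : Polynomial ℂ) (hC₀ : C₀ ≠ 0) (hf : f ≠ 0) (l₀ : ℂ) (s t j : ℕ)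
    (hs : C₀.rootMultiplicity l₀ = s) (ht : f.rootMultiplicity l₀ = t)
    (hj : j = 1 ∨ j = 2) (hsj : s = t + j) :
    (∀ ε : ℂ, ε ≠ 0 → (((C₀ + C ε * f).rootMultiplicity l₀ : ℤ) = (s:ℤ) - (j:ℤ))) ∧
    ∃ δ > (0:ℝ), ∃ σ > (0:ℝ), ∃ M > (0:ℝ), ∀ ε : ℂ, 0 < ‖ε‖ → ‖ε‖ < σ →
      ((((C₀ + C ε * f).roots.filter fun z => 0 < ‖z - l₀‖ ∧ ‖z - l₀‖ < δ).card = j) ∧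
        ∀ z ∈ (C₀ + C ε * f).roots, 0 < ‖z - l₀‖ → ‖z - l₀‖ < δ →
          ‖z - l₀‖ ^ j ≤ M * ‖ε‖) := by
  classical
  have hj0 : j ≠ 0 := by rcases hj with rfl | rfl <;> norm_num
  set g := C₀ /ₘ (X - C l₀) ^ s with hgdef
  have hgC₀ : (X - C l₀) ^ s * g = C₀ := by
    rw [hgdef, ← hs]
    exact pow_mul_divByMonic_rootMultiplicity_eq C₀ l₀
  have hgne : g.eval l₀ ≠ 0 := by
    rw [hgdef, ← hs]
    exact eval_divByMonic_pow_rootMultiplicity_ne_zero l₀ hC₀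
  set h := f /ₘ (X - C l₀) ^ t with hhdef
  have hhf : (X - C l₀) ^ t * h = f := by
    rw [hhdef, ← ht]
    exact pow_mul_divByMonic_rootMultiplicity_eq f l₀
  have hhne : h.eval l₀ ≠ 0 := by
    rw [hhdef, ← ht]
    exact eval_divByMonic_pow_rootMultiplicity_ne_zero l₀ hf
  have hfact : ∀ ε : ℂ, C₀ + C ε * f = (X - C l₀)^t * ((X - C l₀)^j * g + C ε * h) := by
    intro ε
    rw [← hgC₀, ← hhf, hsj, pow_add]
    ring
  have hQl : ∀ ε : ℂ, ((X - C l₀)^j * g + C ε * h).eval l₀ = ε * h.eval l₀ := by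
    intro ε
    simp [sub_self, zero_pow hj0]
  have hQ0 : ∀ ε : ℂ, ε ≠ 0 → ((X - C l₀)^j * g + C ε * h) ≠ 0 := by
    intro ε hεne h0
    have h1 := hQl ε
    rw [h0] at h1
    simp only [eval_zero] at h1
    exact mul_ne_zero hεne hhne h1.symm
  constructor
  · intro ε hεne
    have hne : (X - C l₀)^t * ((X - C l₀)^j * g + C ε * h) ≠ 0 :=
      mul_ne_zero (pow_ne_zero _ (X_sub_C_ne_zero l₀)) (hQ0 ε hεne)
    have hnr : ¬ IsRoot ((X - C l₀)^j * g + C ε * h) l₀ := by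
      intro hr
      apply mul_ne_zero hεne hhne
      rw [← hQl ε]
      exact hr
    rw [hfact ε, rootMultiplicity_mul hne, rootMultiplicity_X_sub_C_pow,
      rootMultiplicity_eq_zero hnr]
    push_cast
    omega
  · obtain ⟨δ, hδ, σ, hσ, M, hM, hkey⟩ := key g h l₀ j hj hgne hhne
    refine ⟨δ, hδ, σ, hσ, M, hM, ?_⟩
    intro ε hε0 hεσ
    obtain ⟨hcard, hbound⟩ := hkey ε hε0 hεσ
    have hεne : ε ≠ 0 := norm_pos_iff.mp hε0
    have hroots : (C₀ + C ε * f).roots =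
        t • ({l₀} : Multiset ℂ) + ((X - C l₀)^j * g + C ε * h).roots := by
      rw [hfact ε, roots_mul (mul_ne_zero (pow_ne_zero _ (X_sub_C_ne_zero l₀)) (hQ0 ε hεne)),
        roots_pow, roots_X_sub_C]
    have hmeml : ∀ z : ℂ, z ∈ t • ({l₀} : Multiset ℂ) → z = l₀ := by
      intro z hz
      · have := (Multiset.mem_nsmul.mp hz).2
        exact Multiset.mem_singleton.mp this
    constructor
    · rw [hroots, Multiset.filter_add]
      have hzero : (t • ({l₀} : Multiset ℂ)).filter
          (fun z => 0 < ‖z - l₀‖ ∧ ‖z - l₀‖ < δ) = 0 := by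
        rw [Multiset.filter_eq_nil]
        intro z hz
        rw [hmeml z hz]
        simp
      rw [hzero, zero_add]
      exact hcard
    · intro z hz hz0 hzδ
      rw [hroots] at hz
      rcases Multiset.mem_add.mp hz with hz | hz
      · rw [hmeml z hz] at hz0
        simp at hz0
      · exact hbound z hz hzδ

end Stmt2Aux

/-- The three-case theorem (Theorem 4.5): for `C(z,ε) = C₀(z) + ε·f(z)` with `λ₀` a root of
`C₀` of multiplicity `s` and of `f` of multiplicity `t ≥ s − 2`, either (i) `t ≥ s` and all
`s` roots in the `λ₀` family stay at `λ₀`; or (ii) `t = s−1`, `λ₀` keeps multiplicity `s−1`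
and exactly one nearby root moves, at speed `O(ε)`; or (iii) `t = s−2`, `λ₀` keeps
multiplicity `s−2` and exactly two nearby roots move, at speed `O(√ε)`. -/
theorem stmt2 (C₀ f : Polynomial ℂ) (hC₀ : C₀ ≠ 0) (hf : f ≠ 0)
    (l₀ : ℂ) (s t : ℕ)
    (hs : C₀.rootMultiplicity l₀ = s) (hs1 : 1 ≤ s)
    (ht : f.rootMultiplicity l₀ = t)
    (hts : (s : ℤ) - 2 ≤ (t : ℤ))
    (Cp : ℂ → Polynomial ℂ) (hCp : ∀ ε : ℂ, Cp ε = C₀ + Polynomial.C ε * f) :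
    (s ≤ t → ∀ ε : ℂ, (Polynomial.X - Polynomial.C l₀) ^ s ∣ Cp ε) ∧
    ((t : ℤ) = (s : ℤ) - 1 →
      (∀ ε : ℂ, ε ≠ 0 → ((Cp ε).rootMultiplicity l₀ : ℤ) = (s : ℤ) - 1) ∧
      ∃ δ > (0 : ℝ), ∃ σ > (0 : ℝ), ∃ M > (0 : ℝ), ∀ ε : ℂ, 0 < ‖ε‖ → ‖ε‖ < σ →
        (((Cp ε).roots.filter fun z => 0 < ‖z - l₀‖ ∧ ‖z - l₀‖ < δ).card = 1 ∧
          ∀ z ∈ (Cp ε).roots, 0 < ‖z - l₀‖ → ‖z - l₀‖ < δ → ‖z - l₀‖ ≤ M * ‖ε‖)) ∧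
    ((t : ℤ) = (s : ℤ) - 2 →
      (∀ ε : ℂ, ε ≠ 0 → ((Cp ε).rootMultiplicity l₀ : ℤ) = (s : ℤ) - 2) ∧
      ∃ δ > (0 : ℝ), ∃ σ > (0 : ℝ), ∃ M > (0 : ℝ), ∀ ε : ℂ, 0 < ‖ε‖ → ‖ε‖ < σ →
        (((Cp ε).roots.filter fun z => 0 < ‖z - l₀‖ ∧ ‖z - l₀‖ < δ).card = 2 ∧
          ∀ z ∈ (Cp ε).roots, 0 < ‖z - l₀‖ → ‖z - l₀‖ < δ →
            ‖z - l₀‖ ≤ M * Real.sqrt ‖ε‖)) := by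
  refine ⟨?_, ?_, ?_⟩
  · intro hst ε
    rw [hCp ε]
    have h1 : (Polynomial.X - Polynomial.C l₀)^s ∣ C₀ := hs ▸ C₀.pow_rootMultiplicity_dvd l₀
    have h2 : (Polynomial.X - Polynomial.C l₀)^s ∣ f :=
      dvd_trans (pow_dvd_pow _ hst) (ht ▸ f.pow_rootMultiplicity_dvd l₀)
    exact dvd_add h1 (h2.mul_left _)
  · intro ht1
    have hsj : s = t + 1 := by omega
    obtain ⟨hmult, δ, hδ, σ, hσ, M, hM, hkey⟩ :=
      Stmt2Aux.wrap C₀ f hC₀ hf l₀ s t 1 hs ht (Or.inl rfl) hsj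
    constructor
    · intro ε hε
      rw [hCp ε]
      have := hmult ε hε
      push_cast at this ⊢
      exact this
    · refine ⟨δ, hδ, σ, hσ, M, hM, ?_⟩
      intro ε h1 h2
      obtain ⟨hcard, hbd⟩ := hkey ε h1 h2
      rw [hCp ε]
      refine ⟨hcard, ?_⟩
      intro z hz h01 hzd
      have := hbd z hz h01 hzd
      simpa using this
  · intro ht2
    have hsj : s = t + 2 := by omega
    obtain ⟨hmult, δ, hδ, σ, hσ, M, hM, hkey⟩ :=
      Stmt2Aux.wrap C₀ f hC₀ hf l₀ s t 2 hs ht (Or.inr rfl) hsj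
    constructor
    · intro ε hε
      rw [hCp ε]
      have := hmult ε hε
      push_cast at this ⊢
      exact this
    · refine ⟨δ, hδ, σ, hσ, Real.sqrt M, Real.sqrt_pos.mpr hM, ?_⟩
      intro ε h1 h2
      obtain ⟨hcard, hbd⟩ := hkey ε h1 h2
      rw [hCp ε]
      refine ⟨hcard, ?_⟩
      intro z hz h01 hzd
      have hb := hbd z hz h01 hzd
      have h3 : ‖z - l₀‖ = Real.sqrt (‖z - l₀‖^2) := (Real.sqrt_sq (norm_nonneg _)).symm
      rw [h3]
      calc Real.sqrt (‖z - l₀‖^2) ≤ Real.sqrt (M * ‖ε‖) := Real.sqrt_le_sqrt hb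
        _ = Real.sqrt M * Real.sqrt ‖ε‖ := Real.sqrt_mul hM.le _
end

section
/- Let H ≥ 1 be an integer, let λ₀, A₁ ∈ ℂ with |λ₀| = 1 and A₁ ≠ 0, and set ω = e^{2πi/H}. Suppose that for each k ∈ {0, 1, …, H−1} there is a function λ_k, defined for all sufficiently small real ε > 0, such that |λ_k(ε)| = 1 for all sufficiently small ε > 0 and λ_k(ε) = λ₀ + A₁·ω^k·ε^{1/H} + o(ε^{1/H}) as ε → 0⁺, where ε^{1/H} denotes the positive real H-th root. Then H ≤ 2. (Theorem 4.1: eigenvalues of the unitary walk matrix U, whose characteristic polynomial is polynomial in both λ and ε, can only take the form λ(ε) = Σ_{j≥0} A_j ε^j or λ^{(k)}(ε) = Σ_{j≥0} (−1)^{jk} A_j (√ε)^j; no Puiseux cycle of length greater than 2 can occur.) -/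
open Filter

/-- Theorem 4.1: a Puiseux cycle of `H` unimodular eigenvalue branches
`λ_k(ε) = λ₀ + A₁ω^k ε^{1/H} + o(ε^{1/H})` of a unitary walk matrix forces `H ≤ 2`. -/
theorem stmt3 (H : ℕ) (hH : 1 ≤ H) (l₀ A₁ : ℂ) (hl₀ : ‖l₀‖ = 1) (hA₁ : A₁ ≠ 0)
    (ω : ℂ) (hω : ω = Complex.exp (2 * Real.pi * Complex.I / (H : ℂ)))
    (l : ℕ → ℝ → ℂ)
    (hmod : ∀ k < H, ∀ᶠ ε in nhdsWithin (0 : ℝ) (Set.Ioi 0), ‖l k ε‖ = 1)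
    (hasym : ∀ k < H,
      (fun ε : ℝ => l k ε - (l₀ + A₁ * ω ^ k * ((ε ^ ((H : ℝ)⁻¹) : ℝ) : ℂ)))
        =o[nhdsWithin (0 : ℝ) (Set.Ioi 0)] fun ε : ℝ => ε ^ ((H : ℝ)⁻¹)) :
    H ≤ 2 := by
  by_contra hle
  push_neg at hle
  have hH3 : 3 ≤ H := hle
  set L := nhdsWithin (0 : ℝ) (Set.Ioi 0) with hL
  haveI : L.NeBot := nhdsGT_neBot 0
  set t : ℝ → ℝ := fun ε => ε ^ ((H : ℝ)⁻¹) with htdef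
  have hHpos : (0 : ℝ) < (H : ℝ) := by positivity
  have htpos : ∀ᶠ ε in L, 0 < t ε := by
    filter_upwards [self_mem_nhdsWithin] with ε (hε : ε ∈ Set.Ioi 0)
    exact Real.rpow_pos_of_pos hε _
  -- key fact: the linear coefficient must be purely imaginary
  have key : ∀ k, k < H → (l₀ * (starRingEnd ℂ) (A₁ * ω ^ k)).re = 0 := by
    intro k hk
    set a : ℂ := A₁ * ω ^ k with ha
    have hr := hasym k hk
    set r : ℝ → ℂ := fun ε => l k ε - (l₀ + a * (t ε : ℂ)) with hrdef
    have hro : Tendsto (fun ε => r ε / (t ε : ℂ)) L (nhds 0) := by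
      have h' : r =o[L] fun ε : ℝ => ((t ε : ℝ) : ℂ) := by
        refine hr.trans_isBigO ?_
        apply Asymptotics.isBigO_of_le
        intro ε; simp
      exact h'.tendsto_div_nhds_zero
    set G : ℝ → ℂ := fun ε => a + r ε / (t ε : ℂ) with hGdef
    have hG : Tendsto G L (nhds a) := by
      simpa using tendsto_const_nhds.add hro
    have hF : Tendsto
        (fun ε => Complex.normSq (G ε) * t ε + 2 * (l₀ * (starRingEnd ℂ) (G ε)).re)
        L (nhds (Complex.normSq a * 0 + 2 * (l₀ * (starRingEnd ℂ) a).re)) := by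
      have ht0 : Tendsto t L (nhds 0) := by
        have : ContinuousWithinAt (fun ε : ℝ => ε ^ ((H : ℝ)⁻¹)) (Set.Ioi 0) 0 :=
          (Real.continuousAt_rpow_const 0 _ (Or.inr (by positivity))).continuousWithinAt
        simpa [htdef, Real.zero_rpow (by positivity : ((H : ℝ)⁻¹) ≠ 0)] using this.tendsto
      refine Tendsto.add (Tendsto.mul ?_ ht0) ?_
      · exact (Complex.continuous_normSq.tendsto a).comp hG
      · exact (Complex.continuous_re.tendsto _).comp
          ((continuous_const.mul (Complex.continuous_conj)).tendsto a |>.comp hG) |>.const_mul 2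
    have hzero : ∀ᶠ ε in L,
        Complex.normSq (G ε) * t ε + 2 * (l₀ * (starRingEnd ℂ) (G ε)).re = 0 := by
      filter_upwards [htpos, hmod k hk] with ε hεt hεm
      have htne : ((t ε : ℝ) : ℂ) ≠ 0 := by
        exact_mod_cast ne_of_gt hεt
      have hlk : l k ε = l₀ + G ε * (t ε : ℂ) := by
        simp only [hGdef, hrdef]
        rw [add_mul, div_mul_cancel₀ _ htne]
        ring
      have h1 : Complex.normSq (l k ε) = 1 := by
        rw [Complex.normSq_eq_norm_sq, hεm]; norm_num
      rw [hlk, Complex.normSq_add] at h1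
      have hnl₀ : Complex.normSq l₀ = 1 := by
        simp [Complex.normSq_eq_norm_sq, hl₀]
      have hns : Complex.normSq (G ε * (t ε : ℂ)) = Complex.normSq (G ε) * (t ε * t ε) := by
        simp [Complex.normSq_mul, Complex.normSq_ofReal, sq]
      have hre : (l₀ * (starRingEnd ℂ) (G ε * (t ε : ℂ))).re
          = (l₀ * (starRingEnd ℂ) (G ε)).re * t ε := by
        rw [map_mul, Complex.conj_ofReal, ← mul_assoc]
        simp [Complex.mul_re]
      rw [hnl₀, hns, hre] at h1
      have h2 : (Complex.normSq (G ε) * t ε + 2 * (l₀ * (starRingEnd ℂ) (G ε)).re) * t ε = 0 := by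
        nlinarith [h1]
      exact (mul_eq_zero.mp h2).resolve_right (ne_of_gt hεt)
    have := tendsto_nhds_unique (hF.congr' hzero) tendsto_const_nhds
    have : (l₀ * (starRingEnd ℂ) a).re = 0 := by
      rw [mul_zero, zero_add] at this
      linarith
    exact this
  -- now extract the contradiction using k = 0 and k = 1
  have h0 : (l₀ * (starRingEnd ℂ) A₁).re = 0 := by
    have := key 0 (by omega)
    simpa using this
  have h1 : (l₀ * (starRingEnd ℂ) (A₁ * ω)).re = 0 := by
    have := key 1 (by omega)
    simpa using this
  set c : ℂ := l₀ * (starRingEnd ℂ) A₁ with hc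
  have hcre : c.re = 0 := h0
  have hcim : c.im * ω.im = 0 := by
    have : (c * (starRingEnd ℂ) ω).re = 0 := by
      rw [map_mul, ← mul_assoc] at h1
      exact h1
    rw [Complex.mul_re, Complex.conj_re, Complex.conj_im, hcre] at this
    linarith
  have hωim : ω.im = Real.sin (2 * Real.pi / H) := by
    have : ω = Complex.exp (((2 * Real.pi / H : ℝ) : ℂ) * Complex.I) := by
      rw [hω]; push_cast; ring_nf
    rw [this, Complex.exp_ofReal_mul_I_im]
  have hsin : 0 < Real.sin (2 * Real.pi / H) := by
    apply Real.sin_pos_of_pos_of_lt_pi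
    · positivity
    · rw [div_lt_iff₀ hHpos]
      have : (3 : ℝ) ≤ H := by exact_mod_cast hH3
      nlinarith [Real.pi_pos]
  have hcim0 : c.im = 0 := by
    rw [hωim] at hcim
    rcases mul_eq_zero.mp hcim with h | h
    · exact h
    · exact absurd h (ne_of_gt hsin)
  have hc0 : c = 0 := Complex.ext hcre hcim0
  have hl₀ne : l₀ ≠ 0 := by
    intro h; rw [h] at hl₀; simp at hl₀
  have : (starRingEnd ℂ) A₁ = 0 := by
    rcases mul_eq_zero.mp hc0 with h | h
    · exact absurd h hl₀ne
    · exact h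
  exact hA₁ (by simpa using this)
end

section
/- Let n ∈ ℕ and work in ℂⁿ. Let U₀ be a unitary matrix, U₁ a matrix, c ∈ ℝ, and λ₀ ∈ ℂ with |λ₀| = 1. Suppose that for all sufficiently small real ε > 0 we are given a matrix U(ε), a vector V(ε) with ‖V(ε)‖ = 1, and λ(ε) ∈ ℂ with U(ε)·V(ε) = λ(ε)·V(ε), and that there are vectors V₀, V₁ ∈ ℂⁿ with ‖V₀‖ = 1 and U₀·V₀ = λ₀·V₀ such that, as ε → 0⁺: ‖U(ε) − U₀ − √ε·U₁‖ = O(ε), ‖V(ε) − V₀ − √ε·V₁‖ = O(ε), and |λ(ε) − λ₀(1 + ic√ε)| = O(ε). Then ⟨V₀, U₁·V₀⟩ = i·c·λ₀. (Theorem 4.7: paired eigenvectors straddle the hub; since U₁ only transmits between the Left and Right sides, ⟨V₀|U₁|V₀⟩ = icλ₀ ≠ 0 forces V₀ to have components on both sides.) -/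
set_option maxHeartbeats 1000000
open Filter Matrix

/-- Theorem 4.7: paired eigenvectors straddle the hub. If `U(ε) = U₀ + √ε U₁ + O(ε)` has a
unit eigenvector `V(ε) = V₀ + √ε V₁ + O(ε)` with eigenvalue `λ(ε) = λ₀(1 + ic√ε) + O(ε)`,
where `U₀V₀ = λ₀V₀`, then `⟨V₀, U₁V₀⟩ = icλ₀`. -/
theorem stmt4 (n : ℕ) (U₀ U₁ : Matrix (Fin n) (Fin n) ℂ)
    (hU₀ : U₀ ∈ Matrix.unitaryGroup (Fin n) ℂ)
    (c : ℝ) (l₀ : ℂ) (hl₀ : ‖l₀‖ = 1)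
    (U : ℝ → Matrix (Fin n) (Fin n) ℂ)
    (V : ℝ → EuclideanSpace ℂ (Fin n)) (l : ℝ → ℂ)
    (hVnorm : ∀ᶠ ε in nhdsWithin (0 : ℝ) (Set.Ioi 0), ‖V ε‖ = 1)
    (heig : ∀ᶠ ε in nhdsWithin (0 : ℝ) (Set.Ioi 0),
      Matrix.toEuclideanLin (U ε) (V ε) = l ε • V ε)
    (V₀ V₁ : EuclideanSpace ℂ (Fin n)) (hV₀norm : ‖V₀‖ = 1)
    (heig0 : Matrix.toEuclideanLin U₀ V₀ = l₀ • V₀)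
    (hUO : (fun ε : ℝ =>
        ‖LinearMap.toContinuousLinearMap
          (Matrix.toEuclideanLin (U ε - U₀ - ((Real.sqrt ε : ℂ)) • U₁))‖)
        =O[nhdsWithin (0 : ℝ) (Set.Ioi 0)] fun ε : ℝ => ε)
    (hVO : (fun ε : ℝ => V ε - V₀ - ((Real.sqrt ε : ℂ)) • V₁)
        =O[nhdsWithin (0 : ℝ) (Set.Ioi 0)] fun ε : ℝ => ε)
    (hlO : (fun ε : ℝ => l ε - l₀ * (1 + Complex.I * c * Real.sqrt ε))
        =O[nhdsWithin (0 : ℝ) (Set.Ioi 0)] fun ε : ℝ => ε) :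
    (inner ℂ V₀ (Matrix.toEuclideanLin U₁ V₀) : ℂ) = Complex.I * c * l₀ := by
  have hl₀ne : l₀ ≠ 0 := by intro h; rw [h] at hl₀; simp at hl₀
  -- conj l₀ = l₀⁻¹
  have hconj : (starRingEnd ℂ) l₀⁻¹ = l₀ := by
    rw [Complex.inv_eq_conj hl₀]; exact Complex.conj_conj l₀
  -- U₀ᴴ V₀ = l₀⁻¹ • V₀
  have hadj0 : Matrix.toEuclideanLin U₀ᴴ V₀ = l₀⁻¹ • V₀ := by
    have hmul : U₀ᴴ * U₀ = 1 := hU₀.1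
    have h1 : Matrix.toEuclideanLin U₀ᴴ (Matrix.toEuclideanLin U₀ V₀) = V₀ := by
      simp [Matrix.toEuclideanLin_apply, Matrix.mulVec_mulVec, hmul]
    rw [heig0, _root_.map_smul] at h1
    have := congrArg (fun x => l₀⁻¹ • x) h1
    simpa [smul_smul, inv_mul_cancel₀ hl₀ne] using this
  -- key: ⟪V₀, U₀ w⟫ = l₀ ⟪V₀, w⟫
  have hkey : ∀ w : EuclideanSpace ℂ (Fin n),
      (inner ℂ V₀ (Matrix.toEuclideanLin U₀ w) : ℂ) = l₀ * inner ℂ V₀ w := by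
    intro w
    have h := (LinearMap.adjoint_inner_left (Matrix.toEuclideanLin U₀) w V₀).symm
    rw [← Matrix.toEuclideanLin_conjTranspose_eq_adjoint, hadj0, inner_smul_left, hconj] at h
    exact h
  classical
  obtain ⟨CU, hCU⟩ := hUO.bound
  obtain ⟨CV, hCV⟩ := hVO.bound
  obtain ⟨Cl, hCl⟩ := hlO.bound
  set d : ℂ := (inner ℂ V₀ (Matrix.toEuclideanLin U₁ V₀) : ℂ) - Complex.I * c * l₀ with hd
  set K : ℝ := Cl + |c| * CV + |c| * ‖V₁‖ + ‖Matrix.toEuclideanLin U₁ V₁‖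
      + ‖LinearMap.toContinuousLinearMap (Matrix.toEuclideanLin U₁)‖ * CV + CU with hK
  have hmem : ∀ᶠ ε in nhdsWithin (0:ℝ) (Set.Ioi 0), ε ∈ Set.Ioo (0:ℝ) 1 :=
    Ioo_mem_nhdsGT_of_mem (by norm_num)
  have hbound : ∀ᶠ ε in nhdsWithin (0:ℝ) (Set.Ioi 0), ‖d‖ ≤ K * Real.sqrt ε := by
    filter_upwards [hVnorm, heig, hCU, hCV, hCl, hmem] with ε hVn he hU' hV' hl' hε
    set sε : ℝ := Real.sqrt ε with hsdef
    have hs0 : 0 < sε := Real.sqrt_pos.2 hε.1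
    have hs1 : sε ≤ 1 := by
      rw [hsdef, show (1:ℝ) = Real.sqrt 1 by simp]
      exact Real.sqrt_le_sqrt hε.2.le
    have hss : sε * sε = ε := Real.mul_self_sqrt hε.1.le
    have hεabs : ‖ε‖ = ε := abs_of_pos hε.1
    set w : EuclideanSpace ℂ (Fin n) := V ε - V₀ - (sε : ℂ) • V₁ with hw
    set A : Matrix (Fin n) (Fin n) ℂ := U ε - U₀ - (sε : ℂ) • U₁ with hA
    set sl : ℂ := l ε - l₀ * (1 + Complex.I * c * sε) with hsl
    have hVε : V ε = V₀ + (sε : ℂ) • V₁ + w := by rw [hw]; abel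
    have hUε : U ε = U₀ + (sε : ℂ) • U₁ + A := by rw [hA]; abel
    -- scalar names
    set a : ℂ := (inner ℂ V₀ (Matrix.toEuclideanLin U₁ V₀) : ℂ) with ha
    set b : ℂ := (inner ℂ V₀ (Matrix.toEuclideanLin U₁ V₁) : ℂ) with hb
    set g : ℂ := (inner ℂ V₀ (Matrix.toEuclideanLin U₁ w) : ℂ) with hg
    set p : ℂ := (inner ℂ V₀ (Matrix.toEuclideanLin A (V ε)) : ℂ) with hp
    set q : ℂ := (inner ℂ V₀ V₁ : ℂ) with hq
    set r : ℂ := (inner ℂ V₀ w : ℂ) with hr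
    set t : ℂ := (inner ℂ V₀ (V ε) : ℂ) with ht
    have E : l₀ * t + (sε : ℂ) * (inner ℂ V₀ (Matrix.toEuclideanLin U₁ (V ε)) : ℂ) + p
        = l ε * t := by
      have e2' : Matrix.toEuclideanLin (U ε)
          = Matrix.toEuclideanLin U₀ + (sε : ℂ) • Matrix.toEuclideanLin U₁
            + Matrix.toEuclideanLin A := by
        rw [hUε, map_add, map_add, _root_.map_smul]
      have e2 : Matrix.toEuclideanLin (U ε) (V ε)
          = Matrix.toEuclideanLin U₀ (V ε) + (sε : ℂ) • Matrix.toEuclideanLin U₁ (V ε)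
            + Matrix.toEuclideanLin A (V ε) := by
        rw [e2', LinearMap.add_apply, LinearMap.add_apply, LinearMap.smul_apply]
      have h := congrArg (fun x => (inner ℂ V₀ x : ℂ)) e2
      rw [he, inner_smul_right] at h
      rw [inner_add_right, inner_add_right, inner_smul_right, hkey] at h
      exact h.symm
    have E2 : (inner ℂ V₀ (Matrix.toEuclideanLin U₁ (V ε)) : ℂ) = a + (sε : ℂ) * b + g := by
      conv_lhs => rw [hVε]
      rw [map_add, map_add, _root_.map_smul, inner_add_right, inner_add_right,
        inner_smul_right]
    have E3 : t = 1 + (sε : ℂ) * q + r := by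
      rw [ht]
      conv_lhs => rw [hVε]
      rw [inner_add_right, inner_add_right, inner_smul_right, inner_self_eq_norm_sq_to_K,
        hV₀norm]
      push_cast
      ring
    have E4 : l ε = l₀ * (1 + Complex.I * c * sε) + sl := by rw [hsl]; ring
    rw [E2, E4] at E
    have hid : (sε : ℂ) * d
        = sl * t + Complex.I * c * l₀ * (sε : ℂ) * r
          + Complex.I * c * l₀ * (sε : ℂ) * (sε : ℂ) * q
          - (sε : ℂ) * (sε : ℂ) * b - (sε : ℂ) * g - p := by
      rw [hd]
      linear_combination E + (Complex.I * (c : ℂ) * l₀ * (sε : ℂ)) * E3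
    -- norm bounds
    have hsnorm : ‖(sε : ℂ)‖ = sε := by
      rw [Complex.norm_real, Real.norm_eq_abs, abs_of_pos hs0]
    have hicl : ‖Complex.I * c * l₀‖ = |c| := by
      rw [norm_mul, norm_mul, Complex.norm_I, hl₀, Complex.norm_real]
      simp [Real.norm_eq_abs]
    have hwb : ‖w‖ ≤ CV * ε := by
      have := hV'
      rwa [hεabs] at this
    have htb : ‖t‖ ≤ 1 := by
      calc ‖t‖ ≤ ‖V₀‖ * ‖V ε‖ := norm_inner_le_norm _ _
      _ = 1 := by rw [hV₀norm, hVn]; ring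
    rw [hεabs] at hl' hV'
    rw [norm_norm, hεabs] at hU'
    have hClε : 0 ≤ Cl * ε := le_trans (norm_nonneg _) hl'
    have hCVε : 0 ≤ CV * ε := le_trans (norm_nonneg _) hV'
    have h1 : ‖sl * t‖ ≤ Cl * ε := by
      rw [norm_mul]
      calc ‖sl‖ * ‖t‖ ≤ (Cl * ε) * 1 := mul_le_mul hl' htb (norm_nonneg _) hClε
      _ = Cl * ε := mul_one _
    have hrb : ‖r‖ ≤ CV * ε := by
      calc ‖r‖ ≤ ‖V₀‖ * ‖w‖ := norm_inner_le_norm _ _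
      _ = ‖w‖ := by rw [hV₀norm, one_mul]
      _ ≤ CV * ε := hV'
    have h2 : ‖Complex.I * (c:ℂ) * l₀ * (sε:ℂ) * r‖ ≤ |c| * CV * ε := by
      calc ‖Complex.I * (c:ℂ) * l₀ * (sε:ℂ) * r‖ = |c| * (sε * ‖r‖) := by
            rw [norm_mul, norm_mul, hicl, hsnorm]; ring
      _ ≤ |c| * (CV * ε) := by
            apply mul_le_mul_of_nonneg_left _ (abs_nonneg c)
            calc sε * ‖r‖ ≤ 1 * ‖r‖ := mul_le_mul_of_nonneg_right hs1 (norm_nonneg _)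
            _ = ‖r‖ := one_mul _
            _ ≤ CV * ε := hrb
      _ = |c| * CV * ε := by ring
    have hqb : ‖q‖ ≤ ‖V₁‖ := by
      calc ‖q‖ ≤ ‖V₀‖ * ‖V₁‖ := norm_inner_le_norm _ _
      _ = ‖V₁‖ := by rw [hV₀norm, one_mul]
    have h3 : ‖Complex.I * (c:ℂ) * l₀ * (sε:ℂ) * (sε:ℂ) * q‖ ≤ |c| * ‖V₁‖ * ε := by
      calc ‖Complex.I * (c:ℂ) * l₀ * (sε:ℂ) * (sε:ℂ) * q‖ = |c| * ε * ‖q‖ := by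
            rw [norm_mul, norm_mul, norm_mul, hicl, hsnorm, ← hss]; ring
      _ ≤ |c| * ε * ‖V₁‖ := by
            apply mul_le_mul_of_nonneg_left hqb (mul_nonneg (abs_nonneg c) hε.1.le)
      _ = |c| * ‖V₁‖ * ε := by ring
    have h4 : ‖(sε:ℂ) * (sε:ℂ) * b‖ ≤ ‖Matrix.toEuclideanLin U₁ V₁‖ * ε := by
      calc ‖(sε:ℂ) * (sε:ℂ) * b‖ = ε * ‖b‖ := by
            rw [norm_mul, norm_mul, hsnorm, ← hss]
      _ ≤ ε * (‖V₀‖ * ‖Matrix.toEuclideanLin U₁ V₁‖) :=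
            mul_le_mul_of_nonneg_left (norm_inner_le_norm _ _) hε.1.le
      _ = ‖Matrix.toEuclideanLin U₁ V₁‖ * ε := by rw [hV₀norm]; ring
    have hopU₁ : ∀ v : EuclideanSpace ℂ (Fin n), ‖Matrix.toEuclideanLin U₁ v‖
        ≤ ‖LinearMap.toContinuousLinearMap (Matrix.toEuclideanLin U₁)‖ * ‖v‖ := by
      intro v
      have hco : (LinearMap.toContinuousLinearMap (Matrix.toEuclideanLin U₁)) v
          = Matrix.toEuclideanLin U₁ v :=
        congrFun (LinearMap.coe_toContinuousLinearMap' (Matrix.toEuclideanLin U₁)) v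
      rw [← hco]
      exact (LinearMap.toContinuousLinearMap (Matrix.toEuclideanLin U₁)).le_opNorm v
    have h5 : ‖(sε:ℂ) * g‖
        ≤ ‖LinearMap.toContinuousLinearMap (Matrix.toEuclideanLin U₁)‖ * CV * ε := by
      calc ‖(sε:ℂ) * g‖ = sε * ‖g‖ := by rw [norm_mul, hsnorm]
      _ ≤ 1 * ‖g‖ := mul_le_mul_of_nonneg_right hs1 (norm_nonneg _)
      _ = ‖g‖ := one_mul _
      _ ≤ ‖V₀‖ * ‖Matrix.toEuclideanLin U₁ w‖ := norm_inner_le_norm _ _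
      _ = ‖Matrix.toEuclideanLin U₁ w‖ := by rw [hV₀norm, one_mul]
      _ ≤ ‖LinearMap.toContinuousLinearMap (Matrix.toEuclideanLin U₁)‖ * ‖w‖ := hopU₁ w
      _ ≤ ‖LinearMap.toContinuousLinearMap (Matrix.toEuclideanLin U₁)‖ * (CV * ε) :=
            mul_le_mul_of_nonneg_left hV' (norm_nonneg _)
      _ = ‖LinearMap.toContinuousLinearMap (Matrix.toEuclideanLin U₁)‖ * CV * ε := by ring
    have h6 : ‖p‖ ≤ CU * ε := by
      calc ‖p‖ ≤ ‖V₀‖ * ‖Matrix.toEuclideanLin A (V ε)‖ := norm_inner_le_norm _ _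
      _ = ‖Matrix.toEuclideanLin A (V ε)‖ := by rw [hV₀norm, one_mul]
      _ ≤ ‖LinearMap.toContinuousLinearMap (Matrix.toEuclideanLin A)‖ * ‖V ε‖ := by
            have hco : (LinearMap.toContinuousLinearMap (Matrix.toEuclideanLin A)) (V ε)
                = Matrix.toEuclideanLin A (V ε) :=
              congrFun (LinearMap.coe_toContinuousLinearMap' (Matrix.toEuclideanLin A)) (V ε)
            rw [← hco]
            exact (LinearMap.toContinuousLinearMap (Matrix.toEuclideanLin A)).le_opNorm (V ε)
      _ = ‖LinearMap.toContinuousLinearMap (Matrix.toEuclideanLin A)‖ := by rw [hVn, mul_one]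
      _ ≤ CU * ε := hU'
    have hmain : sε * ‖d‖ ≤ K * ε := by
      calc sε * ‖d‖ = ‖(sε:ℂ) * d‖ := by rw [norm_mul, hsnorm]
      _ = ‖sl * t + Complex.I * (c:ℂ) * l₀ * (sε:ℂ) * r
            + Complex.I * (c:ℂ) * l₀ * (sε:ℂ) * (sε:ℂ) * q
            - (sε:ℂ) * (sε:ℂ) * b - (sε:ℂ) * g - p‖ := by rw [hid]
      _ ≤ ‖sl * t + Complex.I * (c:ℂ) * l₀ * (sε:ℂ) * r
            + Complex.I * (c:ℂ) * l₀ * (sε:ℂ) * (sε:ℂ) * q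
            - (sε:ℂ) * (sε:ℂ) * b - (sε:ℂ) * g‖ + ‖p‖ := norm_sub_le _ _
      _ ≤ (‖sl * t + Complex.I * (c:ℂ) * l₀ * (sε:ℂ) * r
            + Complex.I * (c:ℂ) * l₀ * (sε:ℂ) * (sε:ℂ) * q
            - (sε:ℂ) * (sε:ℂ) * b‖ + ‖(sε:ℂ) * g‖) + ‖p‖ :=
            add_le_add_left (norm_sub_le _ _) _
      _ ≤ ((‖sl * t + Complex.I * (c:ℂ) * l₀ * (sε:ℂ) * r
            + Complex.I * (c:ℂ) * l₀ * (sε:ℂ) * (sε:ℂ) * q‖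
            + ‖(sε:ℂ) * (sε:ℂ) * b‖) + ‖(sε:ℂ) * g‖) + ‖p‖ :=
            add_le_add_left (add_le_add_left (norm_sub_le _ _) _) _
      _ ≤ (((‖sl * t‖ + ‖Complex.I * (c:ℂ) * l₀ * (sε:ℂ) * r‖
            + ‖Complex.I * (c:ℂ) * l₀ * (sε:ℂ) * (sε:ℂ) * q‖)
            + ‖(sε:ℂ) * (sε:ℂ) * b‖) + ‖(sε:ℂ) * g‖) + ‖p‖ :=
            add_le_add_left (add_le_add_left (add_le_add_left (norm_add₃_le) _) _) _
      _ ≤ (((Cl * ε + |c| * CV * ε + |c| * ‖V₁‖ * ε)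
            + ‖Matrix.toEuclideanLin U₁ V₁‖ * ε)
            + ‖LinearMap.toContinuousLinearMap (Matrix.toEuclideanLin U₁)‖ * CV * ε)
            + CU * ε :=
            add_le_add (add_le_add (add_le_add (add_le_add (add_le_add h1 h2) h3) h4) h5) h6
      _ = K * ε := by rw [hK]; ring
    rw [← hss] at hmain
    have : ‖d‖ * sε ≤ (K * sε) * sε := by
      calc ‖d‖ * sε = sε * ‖d‖ := mul_comm _ _
      _ ≤ K * (sε * sε) := hmain
      _ = (K * sε) * sε := by ring
    exact le_of_mul_le_mul_right this hs0
  have htend : Filter.Tendsto (fun ε : ℝ => K * Real.sqrt ε)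
      (nhdsWithin (0:ℝ) (Set.Ioi 0)) (nhds 0) := by
    have h1 : Filter.Tendsto Real.sqrt (nhdsWithin (0:ℝ) (Set.Ioi 0)) (nhds 0) := by
      have h0 : nhdsWithin (0:ℝ) (Set.Ioi 0) ≤ nhds 0 := nhdsWithin_le_nhds
      have := (Real.continuous_sqrt.tendsto 0).mono_left h0
      simpa using this
    simpa using h1.const_mul K
  have hd0 : ‖d‖ ≤ 0 := ge_of_tendsto htend hbound
  have hdz : d = 0 := norm_le_zero_iff.mp hd0
  rw [hd] at hdz
  exact sub_eq_zero.mp hdz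
end

section
/- Let P(z,ε) = Σ_{j=0}^d a_j(ε)·z^j, where each a_j(ε) is a polynomial in ε with complex coefficients. Suppose a_d(0) ≠ 0 and the one-variable polynomial P(z,0) has d pairwise distinct (hence simple) roots λ^{(1)}, …, λ^{(d)} ∈ ℂ. Then there exists an open disk D ⊆ ℂ centered at 0 and d analytic functions f^{(1)}, …, f^{(d)} : D → ℂ such that: (i) P(f^{(k)}(ε), ε) = 0 for all ε ∈ D and all k; (ii) f^{(k)}(0) = λ^{(k)} for all k; and (iii) for every ε ∈ D and every λ ∈ ℂ with P(λ,ε) = 0, there is some k with λ = f^{(k)}(ε). (Theorem 3.2: simple zeros of a polynomial whose coefficients depend polynomially on a parameter extend to analytic root functions that account for all roots near 0.) -/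
/-- Theorem 3.2: if `P(z,ε) = Σ a_j(ε)z^j` with polynomial coefficients, `a_d(0) ≠ 0`, and
`P(z,0)` has `d` pairwise distinct roots `λ^{(k)}`, then on some disk around `0` there are
`d` analytic root functions `f^{(k)}` with `f^{(k)}(0) = λ^{(k)}` accounting for all roots. -/
theorem stmt7 (d : ℕ) (a : ℕ → Polynomial ℂ)
    (P : ℂ → Polynomial ℂ)
    (hP : ∀ ε : ℂ, P ε = ∑ j ∈ Finset.range (d + 1),
        Polynomial.C ((a j).eval ε) * Polynomial.X ^ j)
    (had : (a d).eval 0 ≠ 0)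
    (l : Fin d → ℂ) (hinj : Function.Injective l)
    (hroots : ∀ k, (P 0).IsRoot (l k)) :
    ∃ D > (0 : ℝ), ∃ f : Fin d → ℂ → ℂ,
      (∀ k, AnalyticOnNhd ℂ (f k) (Metric.ball 0 D)) ∧
      (∀ k, ∀ ε ∈ Metric.ball (0 : ℂ) D, (P ε).IsRoot (f k ε)) ∧
      (∀ k, f k 0 = l k) ∧
      (∀ ε ∈ Metric.ball (0 : ℂ) D, ∀ z : ℂ, (P ε).IsRoot z → ∃ k, z = f k ε) := by
  classical
  set g : ℂ × ℂ → ℂ := fun p => (P p.1).eval p.2 with hgdef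
  -- g is analytic everywhere
  have hgeq : g = fun p : ℂ × ℂ => ∑ j ∈ Finset.range (d + 1), (a j).eval p.1 * p.2 ^ j := by
    funext p
    rw [hgdef]; simp only; rw [hP p.1]
    simp [Polynomial.eval_finset_sum]
  have hgan : ∀ w : ℂ × ℂ, AnalyticAt ℂ g w := by
    intro w
    rw [hgeq]
    apply Finset.analyticAt_fun_sum
    intro j _
    have h1 : AnalyticAt ℂ (fun p : ℂ × ℂ => (a j).eval p.1) w := by
      have := AnalyticAt.aeval_polynomial (𝕜 := ℂ) (analyticAt_fst (p := w)) (a j)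
      simpa [Polynomial.coe_aeval_eq_eval] using this
    exact h1.mul (analyticAt_snd.pow j)
  -- coefficient facts
  have hcoeff : ∀ ε : ℂ, ∀ j ≤ d, (P ε).coeff j = (a j).eval ε := by
    intro ε j hj
    rw [hP ε]
    rw [Polynomial.finset_sum_coeff]
    simp only [Polynomial.coeff_C_mul, Polynomial.coeff_X_pow]
    rw [Finset.sum_eq_single j]
    · simp
    · intro b _ hb; simp [hb, Ne.symm hb]
    · intro h; exact absurd (Finset.mem_range.2 (Nat.lt_succ_of_le hj)) h
  have hdeg : ∀ ε : ℂ, (P ε).natDegree ≤ d := by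
    intro ε
    rw [hP ε]
    apply Polynomial.natDegree_sum_le_of_forall_le
    intro j hj
    refine le_trans (Polynomial.natDegree_C_mul_le _ _) ?_
    simpa [Polynomial.natDegree_X_pow] using Nat.lt_succ_iff.1 (Finset.mem_range.1 hj)
  have hPne : ∀ ε : ℂ, (a d).eval ε ≠ 0 → P ε ≠ 0 := by
    intro ε hε h0
    apply hε
    rw [← hcoeff ε d le_rfl, h0, Polynomial.coeff_zero]
  have hP0ne : P 0 ≠ 0 := hPne 0 had
  -- each l k is a simple root
  have hmem : ∀ k, l k ∈ (P 0).roots := fun k =>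
    (Polynomial.mem_roots hP0ne).2 (hroots k)
  have hcount1 : ∀ k, (P 0).roots.count (l k) = 1 := by
    intro k
    by_contra hne
    have h2 : 2 ≤ (P 0).roots.count (l k) :=
      lt_of_le_of_ne ((Multiset.one_le_count_iff_mem).2 (hmem k)) (Ne.symm hne)
    have hsub : Finset.image l Finset.univ ⊆ (P 0).roots.toFinset := by
      intro x hx
      obtain ⟨k', _, rfl⟩ := Finset.mem_image.1 hx
      exact Multiset.mem_toFinset.2 (hmem k')
    have hsum : ∑ x ∈ Finset.image l Finset.univ, (P 0).roots.count x ≤ (P 0).roots.card := by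
      calc ∑ x ∈ Finset.image l Finset.univ, (P 0).roots.count x
          ≤ ∑ x ∈ (P 0).roots.toFinset, (P 0).roots.count x :=
            Finset.sum_le_sum_of_subset hsub
        _ = (P 0).roots.card := (P 0).roots.toFinset_sum_count_eq
    rw [Finset.sum_image (fun x _ y _ h => hinj h)] at hsum
    have hlt : (Finset.univ : Finset (Fin d)).sum (fun _ => 1) <
        ∑ k', (P 0).roots.count (l k') := by
      apply Finset.sum_lt_sum
      · intro i _; exact (Multiset.one_le_count_iff_mem).2 (hmem i)
      · exact ⟨k, Finset.mem_univ k, by omega⟩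
    simp only [Finset.sum_const, Finset.card_univ, Fintype.card_fin, smul_eq_mul, mul_one] at hlt
    have := (P 0).card_roots'
    have := hdeg 0
    omega
  have hder : ∀ k, (Polynomial.derivative (P 0)).eval (l k) ≠ 0 := by
    intro k hk0
    have h1 : 1 < (P 0).rootMultiplicity (l k) := by
      apply Polynomial.lt_rootMultiplicity_of_isRoot_iterate_derivative_of_mem_nonZeroDivisors hP0ne
      · intro m hm
        interval_cases m
        · simpa using hroots k
        · simpa using hk0
      · simp [mem_nonZeroDivisors_iff_ne_zero]
    rw [← Polynomial.count_roots, hcount1 k] at h1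
    omega
  -- key construction: local analytic inverse at each root
  have key : ∀ k : Fin d, ∃ φ : ℂ × ℂ → ℂ × ℂ, AnalyticAt ℂ φ (0, 0) ∧ φ (0, 0) = (0, l k) ∧
      ∀ᶠ w : ℂ × ℂ in nhds (0, 0), (φ w).1 = w.1 ∧ g (φ w) = w.2 := by
    intro k
    set L0 : ℂ × ℂ →L[ℂ] ℂ := fderiv ℂ g (0, l k) with hL0
    have hstrictg : HasStrictFDerivAt g L0 (0, l k) := (hgan _).hasStrictFDerivAt
    set B : ℂ := L0 (0, 1) with hBdef
    have hB : B = (Polynomial.derivative (P 0)).eval (l k) := by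
      have h2 : HasDerivAt (fun z : ℂ => ((0 : ℂ), z)) (((0 : ℂ), (1 : ℂ))) (l k) :=
        HasDerivAt.prodMk (hasDerivAt_const (l k) (0 : ℂ)) (hasDerivAt_id (l k))
      have h3 : HasDerivAt (fun z : ℂ => g ((0 : ℂ), z)) (L0 ((0 : ℂ), (1 : ℂ))) (l k) :=
        hstrictg.hasFDerivAt.comp_hasDerivAt (l k) h2
      have h4 : HasDerivAt (fun z : ℂ => g ((0 : ℂ), z))
          ((Polynomial.derivative (P 0)).eval (l k)) (l k) := by
        have := (P 0).hasDerivAt (l k)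
        simpa [hgdef] using this
      exact h3.unique h4
    have hBne : B ≠ 0 := by rw [hB]; exact hder k
    -- continuous linear equiv
    set M : ℂ × ℂ →L[ℂ] ℂ × ℂ := (ContinuousLinearMap.fst ℂ ℂ ℂ).prod L0 with hM
    have hL0split : ∀ w : ℂ × ℂ, L0 w = L0 (w.1, 0) + w.2 * B := by
      intro w
      have : w = (w.1, 0) + w.2 • ((0 : ℂ), (1 : ℂ)) := by
        simp [Prod.ext_iff]
      rw [this, map_add, map_smul]
      simp [hBdef, smul_eq_mul]
    have hadd : ∀ u v : ℂ, L0 (u + v, 0) = L0 (u, 0) + L0 (v, 0) := by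
      intro u v
      rw [show ((u + v, (0 : ℂ)) : ℂ × ℂ) = (u, 0) + (v, 0) by simp [Prod.ext_iff], map_add]
    have hsmul : ∀ (c u : ℂ), L0 (c * u, 0) = c * L0 (u, 0) := by
      intro c u
      rw [show ((c * u, (0 : ℂ)) : ℂ × ℂ) = c • ((u, 0) : ℂ × ℂ) by simp [Prod.ext_iff],
        map_smul, smul_eq_mul]
    set N : ℂ × ℂ →ₗ[ℂ] ℂ × ℂ :=
      { toFun := fun w => (w.1, B⁻¹ * (w.2 - L0 (w.1, 0)))
        map_add' := by
          intro x y
          simp only [Prod.fst_add, Prod.snd_add, Prod.mk_add_mk, Prod.mk.injEq, hadd]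
          exact ⟨trivial, by ring⟩
        map_smul' := by
          intro c x
          simp only [Prod.smul_fst, Prod.smul_snd, Prod.smul_mk, smul_eq_mul, RingHom.id_apply,
            Prod.mk.injEq, hsmul]
          exact ⟨trivial, by ring⟩ } with hN
    have hMN : ∀ w : ℂ × ℂ, N.toContinuousLinearMap (M w) = w := by
      intro w
      simp only [hN, hM, LinearMap.coe_toContinuousLinearMap', LinearMap.coe_mk, AddHom.coe_mk,
        ContinuousLinearMap.prod_apply, ContinuousLinearMap.coe_fst']
      refine Prod.ext rfl ?_
      simp only
      rw [hL0split w]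
      field_simp
      ring
    have hNM : ∀ w : ℂ × ℂ, M (N.toContinuousLinearMap w) = w := by
      intro w
      simp only [hN, hM, LinearMap.coe_toContinuousLinearMap', LinearMap.coe_mk, AddHom.coe_mk,
        ContinuousLinearMap.prod_apply, ContinuousLinearMap.coe_fst']
      refine Prod.ext rfl ?_
      simp only
      rw [hL0split (w.1, B⁻¹ * (w.2 - L0 (w.1, 0)))]
      simp only
      field_simp
      ring
    set e : (ℂ × ℂ) ≃L[ℂ] (ℂ × ℂ) :=
      ContinuousLinearEquiv.equivOfInverse M N.toContinuousLinearMap hMN hNM with he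
    set F : ℂ × ℂ → ℂ × ℂ := fun p => (p.1, g p) with hF
    have hFs : HasStrictFDerivAt F (e : (ℂ × ℂ) →L[ℂ] ℂ × ℂ) (0, l k) := by
      have : (e : (ℂ × ℂ) →L[ℂ] ℂ × ℂ) = M := rfl
      rw [this, hM]
      exact HasStrictFDerivAt.prodMk (hasStrictFDerivAt_fst) hstrictg
    set ph := HasStrictFDerivAt.toOpenPartialHomeomorph F hFs with hph
    have hcoe : (ph : ℂ × ℂ → ℂ × ℂ) = F := HasStrictFDerivAt.toOpenPartialHomeomorph_coe hFs
    have hsrc : (0, l k) ∈ ph.source := HasStrictFDerivAt.mem_toOpenPartialHomeomorph_source hFs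
    have hg0 : g (0, l k) = 0 := hroots k
    have hval : ph (0, l k) = ((0 : ℂ), (0 : ℂ)) := by
      rw [hcoe, hF]; simp [hg0]
    have hansymm : AnalyticAt ℂ ph.symm ((0 : ℂ), (0 : ℂ)) := by
      have h' : fderiv ℂ ph (0, l k) = e := by
        rw [hcoe]
        exact HasFDerivAt.fderiv (HasStrictFDerivAt.hasFDerivAt hFs)
      have hanF : AnalyticAt ℂ ph (0, l k) := by
        rw [hcoe]
        exact analyticAt_fst.prod (hgan _)
      have := ph.analyticAt_symm' hsrc hanF h'
      rwa [hval] at this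
    refine ⟨ph.symm, hansymm, ?_, ?_⟩
    · rw [← hval, ph.left_inv hsrc]
    · have htgt : ((0 : ℂ), (0 : ℂ)) ∈ ph.target := by
        rw [← hval]; exact ph.map_source hsrc
      filter_upwards [ph.open_target.mem_nhds htgt] with w hw
      have := ph.right_inv hw
      rw [hcoe, hF] at this
      simpa [Prod.ext_iff] using this
  choose φ hφan hφ0 hφev using key
  set f : Fin d → ℂ → ℂ := fun k ε => (φ k (ε, 0)).2 with hf
  set ι : ℂ → ℂ × ℂ := fun ε => (ε, 0) with hι
  have hιan : ∀ ε : ℂ, AnalyticAt ℂ ι ε := fun ε => (analyticAt_id).prod analyticAt_const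
  have hι0 : ι 0 = ((0 : ℂ), (0 : ℂ)) := rfl
  have hιcont : Continuous ι := continuous_id.prodMk continuous_const
  -- eventually facts in ε near 0
  have hgood : ∀ k, ∀ᶠ ε : ℂ in nhds 0, AnalyticAt ℂ (f k) ε ∧ (P ε).IsRoot (f k ε) := by
    intro k
    have h1 : ∀ᶠ w : ℂ × ℂ in nhds (0, 0), AnalyticAt ℂ (φ k) w ∧
        ((φ k w).1 = w.1 ∧ g (φ k w) = w.2) :=
      (hφan k).eventually_analyticAt.and (hφev k)
    have h2 := (hιcont.tendsto 0).eventually (by rw [hι0] at *; exact h1)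
    filter_upwards [h2] with ε hε
    obtain ⟨han, hfst, hsnd⟩ := hε
    constructor
    · exact (analyticAt_snd.comp (han.comp (hιan ε)))
    · have : g (φ k (ι ε)) = 0 := by simpa using hsnd
      rw [hgdef] at this
      simp only at this
      rw [hfst] at this
      simpa [hf, Polynomial.IsRoot] using this
  have hf0 : ∀ k, f k 0 = l k := by
    intro k
    simp only [hf]
    rw [show ((0 : ℂ), (0 : ℂ)) = ι 0 from rfl] at *
    rw [show (ι 0) = ((0:ℂ),(0:ℂ)) from rfl, hφ0 k]
  have hfc : ∀ k, ContinuousAt (f k) 0 := by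
    intro k
    have : AnalyticAt ℂ (f k) 0 := by
      have := (hφan k)
      exact analyticAt_snd.comp ((hι0 ▸ this).comp (hιan 0))
    exact this.continuousAt
  have hsep : ∀ᶠ ε : ℂ in nhds 0, ∀ k m : Fin d, k ≠ m → f k ε ≠ f m ε := by
    rw [Filter.eventually_all]
    intro k
    rw [Filter.eventually_all]
    intro m
    by_cases hkm : k = m
    · exact Filter.Eventually.of_forall fun ε h => absurd hkm h
    · have hne : f k 0 ≠ f m 0 := by
        rw [hf0 k, hf0 m]
        exact fun h => hkm (hinj h)
      have : ∀ᶠ ε : ℂ in nhds 0, f k ε ≠ f m ε := by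
        have hc : ContinuousAt (fun ε => f k ε - f m ε) 0 := (hfc k).sub (hfc m)
        have hne' : f k 0 - f m 0 ≠ 0 := sub_ne_zero.2 hne
        have := hc.eventually_ne hne'
        filter_upwards [this] with ε hε
        exact fun h => hε (by rw [h, sub_self])
      filter_upwards [this] with ε hε _
      exact hε
  have hlead : ∀ᶠ ε : ℂ in nhds 0, (a d).eval ε ≠ 0 := by
    have hc : ContinuousAt (fun ε => (a d).eval ε) 0 := (a d).continuousAt
    exact hc.eventually_ne had
  have hbig : ∀ᶠ ε : ℂ in nhds 0,
      (∀ k, AnalyticAt ℂ (f k) ε ∧ (P ε).IsRoot (f k ε)) ∧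
      (∀ k m : Fin d, k ≠ m → f k ε ≠ f m ε) ∧ (a d).eval ε ≠ 0 := by
    refine Filter.Eventually.and ?_ (hsep.and hlead)
    rw [Filter.eventually_all]
    exact hgood
  rw [Metric.eventually_nhds_iff_ball] at hbig
  obtain ⟨D, hD, hball⟩ := hbig
  refine ⟨D, hD, f, ?_, ?_, hf0, ?_⟩
  · intro k ε hε
    exact ((hball ε hε).1 k).1
  · intro k ε hε
    exact ((hball ε hε).1 k).2
  · intro ε hε z hz
    obtain ⟨hroot, hdist, hl⟩ := hball ε hε
    by_contra hcon
    push_neg at hcon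
    have hPεne : P ε ≠ 0 := hPne ε hl
    set s : Finset ℂ := Finset.image (fun k => f k ε) Finset.univ with hs
    have hcard : s.card = d := by
      rw [hs, Finset.card_image_of_injective _ (fun x y h => by
        by_contra hxy
        exact hdist x y hxy h)]
      simp
    have hzs : z ∉ s := by
      intro hzm
      obtain ⟨k, _, hk⟩ := Finset.mem_image.1 hzm
      exact hcon k hk.symm
    have hsub : insert z s ⊆ (P ε).roots.toFinset := by
      intro x hx
      rcases Finset.mem_insert.1 hx with rfl | hxs
      · exact Multiset.mem_toFinset.2 ((Polynomial.mem_roots hPεne).2 hz)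
      · obtain ⟨k, _, rfl⟩ := Finset.mem_image.1 hxs
        exact Multiset.mem_toFinset.2 ((Polynomial.mem_roots hPεne).2 (hroot k).2)
    have h1 : (insert z s).card = d + 1 := by
      rw [Finset.card_insert_of_notMem hzs, hcard]
    have h2 : (P ε).roots.toFinset.card ≤ d := by
      calc (P ε).roots.toFinset.card ≤ (P ε).roots.card := (P ε).roots.toFinset_card_le
        _ ≤ (P ε).natDegree := (P ε).card_roots'
        _ ≤ d := hdeg ε
    have := Finset.card_le_card hsub
    omega
end

section
/- Let P(z,ε) be a polynomial in two complex variables z and ε which is irreducible as an element of ℂ[z,ε], has degree at least 1 in z, and whose leading coefficient in z is a nonzero constant. If for some ε₀ ∈ ℂ the one-variable polynomial P(·,ε₀) has a repeated root — that is, there exists z₀ ∈ ℂ with P(z₀,ε₀) = 0 and (∂P/∂z)(z₀,ε₀) = 0 — then there exists δ > 0 such that for all ε ∈ ℂ with 0 < |ε − ε₀| < δ, the polynomial P(·,ε) has no repeated root in z. (Theorem 3.3: the double roots of an irreducible two-variable polynomial are isolated in the ε-plane.) -/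
open Polynomial

noncomputable section
-- Step: from irreducibility get a Bezout identity with denominator
theorem bezout (P : Polynomial (Polynomial ℂ))
    (hirr : Irreducible P)
    (hlead : ∃ c : ℂ, c ≠ 0 ∧ P.leadingCoeff = Polynomial.C c) :
    ∃ (A B : Polynomial (Polynomial ℂ)) (d : Polynomial ℂ), d ≠ 0 ∧
      A * P + B * (derivative P) = Polynomial.C d := by
  set R := Polynomial ℂ
  set F := FractionRing R
  set φ := algebraMap R F
  have hφ : Function.Injective φ := IsFractionRing.injective R F
  -- primitivity
  have hprim : P.IsPrimitive := by
    intro r hr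
    obtain ⟨c, hc, hlc⟩ := hlead
    have hdvd : r ∣ P.leadingCoeff := by
      obtain ⟨q, hq⟩ := hr
      exact ⟨q.coeff P.natDegree, by rw [Polynomial.leadingCoeff, hq, coeff_C_mul]⟩
    rw [hlc] at hdvd
    have : IsUnit (Polynomial.C c : R) := isUnit_C.mpr (Ne.isUnit hc)
    exact isUnit_of_dvd_unit hdvd this
  have hirrF : Irreducible (P.map φ) :=
    (hprim.irreducible_iff_irreducible_map_fraction_map).mp hirr
  have hsep : (P.map φ).Separable := hirrF.separable
  obtain ⟨u, v, huv⟩ := hsep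
  obtain ⟨b₁, hb₁⟩ := IsLocalization.integerNormalization_map_to_map (nonZeroDivisors R) u
  obtain ⟨b₂, hb₂⟩ := IsLocalization.integerNormalization_map_to_map (nonZeroDivisors R) v
  set U := IsLocalization.integerNormalization (nonZeroDivisors R) u
  set V := IsLocalization.integerNormalization (nonZeroDivisors R) v
  refine ⟨Polynomial.C (b₂ : R) * U, Polynomial.C (b₁ : R) * V, (b₁ : R) * (b₂ : R),
    mul_ne_zero (nonZeroDivisors.coe_ne_zero b₁) (nonZeroDivisors.coe_ne_zero b₂), ?_⟩
  apply Polynomial.map_injective φ hφ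
  have hsm : ∀ (b : R) (w : F[X]), (b : R) • w = Polynomial.C (φ b) * w := by
    intro b w
    rw [← algebraMap_smul F b w, smul_eq_C_mul]
  rw [hsm] at hb₁ hb₂
  change Polynomial.map φ U = _ at hb₁; change Polynomial.map φ V = _ at hb₂
  simp only [Polynomial.map_add, Polynomial.map_mul, Polynomial.map_C, hb₁, hb₂,
    ← derivative_map, map_mul]
  linear_combination (Polynomial.C (φ (b₁:R)) * Polynomial.C (φ (b₂:R))) * huv
end



/-- Theorem 3.3: the double roots of an irreducible two-variable polynomial
`P ∈ ℂ[z,ε]` (realized as `(ℂ[ε])[z]`, with leading `z`-coefficient a nonzero constant)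
are isolated in the `ε`-plane. -/
theorem stmt8 (P : Polynomial (Polynomial ℂ))
    (hirr : Irreducible P)
    (hdeg : 1 ≤ P.natDegree)
    (hlead : ∃ c : ℂ, c ≠ 0 ∧ P.leadingCoeff = Polynomial.C c)
    (ε₀ : ℂ)
    (hdouble : ∃ z₀ : ℂ, (P.map (Polynomial.evalRingHom ε₀)).IsRoot z₀ ∧
        ((Polynomial.derivative P).map (Polynomial.evalRingHom ε₀)).IsRoot z₀) :
    ∃ δ > (0 : ℝ), ∀ ε : ℂ, 0 < ‖ε - ε₀‖ → ‖ε - ε₀‖ < δ →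
      ¬∃ z : ℂ, (P.map (Polynomial.evalRingHom ε)).IsRoot z ∧
        ((Polynomial.derivative P).map (Polynomial.evalRingHom ε)).IsRoot z := by
  obtain ⟨A, B, d, hd0, hAB⟩ := bezout P hirr hlead
  -- if P(·,ε) has a double root then d(ε) = 0
  have key : ∀ ε : ℂ, (∃ z : ℂ, (P.map (Polynomial.evalRingHom ε)).IsRoot z ∧
      ((Polynomial.derivative P).map (Polynomial.evalRingHom ε)).IsRoot z) → d.eval ε = 0 := by
    intro ε ⟨z, hz1, hz2⟩
    have h := congrArg (fun Q : Polynomial (Polynomial ℂ) =>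
      ((Q.map (Polynomial.evalRingHom ε)).eval z)) hAB
    simp only [Polynomial.map_add, Polynomial.map_mul, Polynomial.map_C, Polynomial.eval_add,
      Polynomial.eval_mul, Polynomial.eval_C, Polynomial.coe_evalRingHom] at h
    rw [Polynomial.IsRoot.def.mp hz1, Polynomial.IsRoot.def.mp hz2] at h
    simpa using h.symm
  -- roots of d away from ε₀
  set T : Finset ℂ := d.roots.toFinset.erase ε₀ with hT
  by_cases hTe : T.Nonempty
  · set δ := (T.image (fun w => ‖w - ε₀‖)).min' (hTe.image _) with hδ
    have hδpos : 0 < δ := by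
      obtain ⟨w, hw, hweq⟩ := Finset.mem_image.mp
        ((T.image (fun w => ‖w - ε₀‖)).min'_mem (hTe.image _))
      rw [hδ, ← hweq]
      have : w ≠ ε₀ := Finset.ne_of_mem_erase hw
      simpa [sub_eq_zero] using this
    refine ⟨δ, hδpos, fun ε hne hlt hdbl => ?_⟩
    have hεT : ε ∈ T := by
      apply Finset.mem_erase.mpr
      refine ⟨fun h => by simp [h] at hne, ?_⟩
      rw [Multiset.mem_toFinset, Polynomial.mem_roots hd0]
      exact key ε hdbl
    have : δ ≤ ‖ε - ε₀‖ := Finset.min'_le _ _ (Finset.mem_image_of_mem _ hεT)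
    linarith
  · refine ⟨1, one_pos, fun ε hne _ hdbl => ?_⟩
    apply hTe
    refine ⟨ε, Finset.mem_erase.mpr ⟨fun h => by simp [h] at hne, ?_⟩⟩
    rw [Multiset.mem_toFinset, Polynomial.mem_roots hd0]
    exact key ε hdbl
end

section
/- Let L and R be finite index sets with distinguished elements out, in ∈ L (out ≠ in) and e01, e10 ∈ R (e01 ≠ e10), and let A : L×L → ℂ and B : R×R → ℂ be fixed. For real ε ∈ [0,1] define the complex matrix U(ε), indexed by the disjoint union L ⊔ R, column by column: the column indexed by in has entry 1−2ε in row out, entry 2√(ε−ε²) in row e01, and 0 in every other row; the column indexed by e10 has entry −1+2ε in row e01, entry 2√(ε−ε²) in row out, and 0 in every other row; every other column indexed by l ∈ L with l ≠ in has entry A(x,l) in each row x ∈ L and 0 in every row of R; every other column indexed by r ∈ R with r ≠ e10 has entry B(y,r) in each row y ∈ R and 0 in every row of L. Then there exist polynomials C₀(z) and f(z) with complex coefficients such that for all ε ∈ [0,1] and all z ∈ ℂ, det(U(ε) − z·I) = C₀(z) + ε·f(z). (Theorem 3.5: the characteristic polynomial of the time step operator of a star graph with a diffusive hub, r = −1 +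 2/N and t = 2/N with ε = 1/N, is an affine polynomial in ε.) -/
open Matrix Polynomial


namespace Stmt10Aux

variable {L R : Type*} [Fintype L] [DecidableEq L] [Fintype R] [DecidableEq R]

noncomputable def delta (k : L ⊕ R) : L ⊕ R → ℂ := fun x => if x = k then 1 else 0

omit [Fintype L] [Fintype R] in
lemma updCol_comm (M : Matrix (L ⊕ R) (L ⊕ R) ℂ) {i j : L ⊕ R} (h : i ≠ j)
    (u v : L ⊕ R → ℂ) :
    (M.updateCol i u).updateCol j v = (M.updateCol j v).updateCol i u := by
  ext a b
  simp only [Matrix.updateCol_apply]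
  split_ifs <;> simp_all

lemma det_swapCols (M : Matrix (L ⊕ R) (L ⊕ R) ℂ) {i j : L ⊕ R} (h : i ≠ j)
    (u v : L ⊕ R → ℂ) :
    ((M.updateCol i u).updateCol j v).det
      = -((M.updateCol i v).updateCol j u).det := by
  have e : (M.updateCol i v).updateCol j u
      = ((M.updateCol i u).updateCol j v).submatrix id (Equiv.swap i j) := by
    ext a b
    rcases eq_or_ne b i with rfl | h1
    · simp [Matrix.updateCol_apply, Equiv.swap_apply_left, h, h.symm]
    rcases eq_or_ne b j with rfl | h2
    · simp [Matrix.updateCol_apply, Equiv.swap_apply_right, h, h.symm]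
    · simp [Matrix.updateCol_apply, Equiv.swap_apply_of_ne_of_ne h1 h2, h1, h2]
  rw [e, Matrix.det_permute', Equiv.Perm.sign_swap h]
  simp

lemma det_zero_L (M : Matrix (L ⊕ R) (L ⊕ R) ℂ) (c : L)
    (h12 : ∀ x r, M (Sum.inl x) (Sum.inr r) = 0)
    (hc : ∀ x, M (Sum.inl x) (Sum.inl c) = 0) : M.det = 0 := by
  rw [← Matrix.fromBlocks_toBlocks M]
  have h : M.toBlocks₁₂ = 0 := by ext x r; exact h12 x r
  rw [h, Matrix.det_fromBlocks_zero₁₂]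
  rw [Matrix.det_eq_zero_of_column_eq_zero c fun x => hc x, zero_mul]

lemma det_zero_R (M : Matrix (L ⊕ R) (L ⊕ R) ℂ) (c : R)
    (h21 : ∀ y l, M (Sum.inr y) (Sum.inl l) = 0)
    (hc : ∀ y, M (Sum.inr y) (Sum.inr c) = 0) : M.det = 0 := by
  rw [← Matrix.fromBlocks_toBlocks M]
  have h : M.toBlocks₂₁ = 0 := by ext y l; exact h21 y l
  rw [h, Matrix.det_fromBlocks_zero₂₁]
  rw [Matrix.det_eq_zero_of_column_eq_zero c fun y => hc y, mul_zero]

noncomputable def MP (inp : L) (e10 : R) (N0 : Matrix (L ⊕ R) (L ⊕ R) ℂ) (k₁ k₂ : L ⊕ R) :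
    Matrix (L ⊕ R) (L ⊕ R) (Polynomial ℂ) :=
  Matrix.of fun x y =>
    if y = Sum.inl inp then (if x = k₁ then 1 else 0)
    else if y = Sum.inr e10 then (if x = k₂ then 1 else 0)
    else Polynomial.C (N0 x y) - (if x = y then Polynomial.X else 0)

lemma eval_det_MP (inp : L) (e10 : R) (N0 : Matrix (L ⊕ R) (L ⊕ R) ℂ) (k₁ k₂ : L ⊕ R)
    (z : ℂ) :
    Polynomial.eval z (MP inp e10 N0 k₁ k₂).det
      = (((N0 - z • 1).updateCol (Sum.inr e10) (delta k₂)).updateCol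
          (Sum.inl inp) (delta k₁)).det := by
  have hmap : (MP inp e10 N0 k₁ k₂).map (Polynomial.eval z)
      = ((N0 - z • 1).updateCol (Sum.inr e10) (delta k₂)).updateCol
          (Sum.inl inp) (delta k₁) := by
    ext x y
    simp only [Matrix.map_apply, MP, Matrix.of_apply, Matrix.updateCol_apply, delta,
      Matrix.sub_apply, Matrix.smul_apply, Matrix.one_apply, smul_eq_mul]
    split_ifs <;> simp
  have h2 := RingHom.map_det (Polynomial.evalRingHom z) (MP inp e10 N0 k₁ k₂)
  simp only [RingHom.mapMatrix_apply, Polynomial.coe_evalRingHom] at h2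
  rw [h2, hmap]

end Stmt10Aux
noncomputable def starU {L R : Type*} [DecidableEq L] [DecidableEq R]
    (out inp : L) (e01 e10 : R) (A : L → L → ℂ) (B : R → R → ℂ) (ε : ℝ) :
    Matrix (L ⊕ R) (L ⊕ R) ℂ :=
  Matrix.of fun x y =>
    match x, y with
    | Sum.inl x', Sum.inl ll =>
        if ll = inp then (if x' = out then ((1 - 2 * ε : ℝ) : ℂ) else 0) else A x' ll
    | Sum.inr y', Sum.inl ll =>
        if ll = inp then
          (if y' = e01 then ((2 * Real.sqrt (ε - ε ^ 2) : ℝ) : ℂ) else 0)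
        else 0
    | Sum.inl x', Sum.inr rr =>
        if rr = e10 then
          (if x' = out then ((2 * Real.sqrt (ε - ε ^ 2) : ℝ) : ℂ) else 0)
        else 0
    | Sum.inr y', Sum.inr rr =>
        if rr = e10 then (if y' = e01 then ((-1 + 2 * ε : ℝ) : ℂ) else 0) else B y' rr

/-- Theorem 3.5: the characteristic polynomial of the collapsed time step operator of a
star graph with a diffusive hub is an affine polynomial in `ε = 1/N`:
`det(U(ε) − z·I) = C₀(z) + ε·f(z)`. -/
theorem stmt10 {L R : Type*} [Fintype L] [DecidableEq L] [Fintype R] [DecidableEq R]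
    (out inp : L) (hL : out ≠ inp) (e01 e10 : R) (hR : e01 ≠ e10)
    (A : L → L → ℂ) (B : R → R → ℂ) :
    ∃ C₀ f : Polynomial ℂ, ∀ ε ∈ Set.Icc (0 : ℝ) 1, ∀ z : ℂ,
      (starU out inp e01 e10 A B ε - z • (1 : Matrix (L ⊕ R) (L ⊕ R) ℂ)).det
        = C₀.eval z + (ε : ℂ) * f.eval z := by

  classical
  open Stmt10Aux in
  set N0 := starU out inp e01 e10 A B 0 with hN0
  set o : L ⊕ R := Sum.inl out
  set i : L ⊕ R := Sum.inl inp
  set e : L ⊕ R := Sum.inr e01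
  set t : L ⊕ R := Sum.inr e10
  refine ⟨-(MP inp e10 N0 o e).det + X * (MP inp e10 N0 i e).det
      - X * (MP inp e10 N0 o t).det + X ^ 2 * (MP inp e10 N0 i t).det,
    2 * X * (MP inp e10 N0 o t).det - 2 * X * (MP inp e10 N0 i e).det, ?_⟩
  intro ε hε z
  obtain ⟨hε0, hε1⟩ := hε
  set a' : ℂ := ((1 - 2 * ε : ℝ) : ℂ) with ha'
  set b' : ℂ := ((-1 + 2 * ε : ℝ) : ℂ) with hb'
  set s' : ℂ := ((2 * Real.sqrt (ε - ε ^ 2) : ℝ) : ℂ) with hs'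
  have hit : (i : L ⊕ R) ≠ t := by simp [i, t]
  have hV : starU out inp e01 e10 A B ε - z • (1 : Matrix (L ⊕ R) (L ⊕ R) ℂ)
      = ((N0 - z • 1).updateCol i
          (a' • delta o + s' • delta e + (-z) • delta i)).updateCol t
          (s' • delta o + b' • delta e + (-z) • delta t) := by
    ext x y
    cases x <;> cases y <;>
      simp only [starU, hN0, Matrix.updateCol_apply, Pi.add_apply, Pi.smul_apply,
        delta, smul_eq_mul, Matrix.sub_apply, Matrix.smul_apply, Matrix.one_apply,
        Matrix.of_apply, o, i, e, t, Sum.inl.injEq, Sum.inr.injEq, mul_ite, mul_one,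
        mul_zero, reduceCtorEq] <;>
      split_ifs <;> simp_all [ha', hb', hs']
  rw [hV]
  simp only [Matrix.det_updateCol_add, Matrix.det_updateCol_smul]
  simp only [updCol_comm (N0 - z • 1) hit]
  simp only [Matrix.det_updateCol_add, Matrix.det_updateCol_smul]
  have z1 : (((N0 - z • 1).updateCol t (delta o)).updateCol i (delta o)).det = 0 := by
    apply det_zero_R _ e10
    · intro y l
      rcases eq_or_ne l inp with rfl | hl <;>
        simp [Matrix.updateCol_apply, delta, t, i, o, *, hN0, starU,
          Matrix.sub_apply, Matrix.smul_apply, Matrix.one_apply]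
    · intro y
      simp [Matrix.updateCol_apply, delta, t, i, o]
  have z2 : (((N0 - z • 1).updateCol t (delta e)).updateCol i (delta e)).det = 0 := by
    apply det_zero_L _ inp
    · intro x r
      rcases eq_or_ne r e10 with rfl | hr <;>
        simp [Matrix.updateCol_apply, delta, t, i, e, *, hN0, starU,
          Matrix.sub_apply, Matrix.smul_apply, Matrix.one_apply]
    · intro x
      simp [Matrix.updateCol_apply, delta, t, i, e]
  have z3 : (((N0 - z • 1).updateCol t (delta t)).updateCol i (delta e)).det = 0 := by
    apply det_zero_L _ inp
    · intro x r
      rcases eq_or_ne r e10 with rfl | hr <;>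
        simp [Matrix.updateCol_apply, delta, t, i, e, *, hN0, starU,
          Matrix.sub_apply, Matrix.smul_apply, Matrix.one_apply]
    · intro x
      simp [Matrix.updateCol_apply, delta, t, i, e]
  have z4 : (((N0 - z • 1).updateCol t (delta o)).updateCol i (delta i)).det = 0 := by
    apply det_zero_R _ e10
    · intro y l
      rcases eq_or_ne l inp with rfl | hl <;>
        simp [Matrix.updateCol_apply, delta, t, i, o, *, hN0, starU,
          Matrix.sub_apply, Matrix.smul_apply, Matrix.one_apply]
    · intro y
      simp [Matrix.updateCol_apply, delta, t, i, o]
  have zs : (((N0 - z • 1).updateCol t (delta o)).updateCol i (delta e)).det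
      = -(((N0 - z • 1).updateCol t (delta e)).updateCol i (delta o)).det :=
    det_swapCols (N0 - z • 1) (Ne.symm hit) (delta o) (delta e)
  have hE : ∀ k₁ k₂ : L ⊕ R,
      (((N0 - z • 1).updateCol t (delta k₂)).updateCol i (delta k₁)).det
        = eval z (MP inp e10 N0 k₁ k₂).det := fun k₁ k₂ =>
    (eval_det_MP inp e10 N0 k₁ k₂ z).symm
  rw [z1, z2, z3, z4, zs, hE o e, hE i e, hE o t, hE i t]
  have h0 : (0 : ℝ) ≤ ε - ε ^ 2 := by nlinarith
  have hs2 : s' * s' = 4 * (ε : ℂ) - 4 * (ε : ℂ) ^ 2 := by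
    have hr : (2 * Real.sqrt (ε - ε ^ 2)) * (2 * Real.sqrt (ε - ε ^ 2))
        = 4 * ε - 4 * ε ^ 2 := by
      have := Real.mul_self_sqrt h0
      nlinarith [this]
    rw [hs', ← Complex.ofReal_mul, hr]
    push_cast
    ring
  simp only [eval_add, eval_sub, eval_mul, eval_neg, eval_pow, eval_X, eval_ofNat]
  rw [ha', hb']
  push_cast
  linear_combination (-(eval z (MP inp e10 N0 o e).det)) * hs2
end

section
/- Let d ≥ 1 be an integer and let a_0, …, a_{d−1} : ℂ×ℂ → ℂ be polynomial functions; for (ε,ξ) ∈ ℂ×ℂ set P(z,ε,ξ) = z^d + Σ_{j<d} a_j(ε,ξ)·z^j. Say P(·,ε,ξ) has a double root if there exists z ∈ ℂ with P(z,ε,ξ) = 0 and (∂P/∂z)(z,ε,ξ) = 0. Assume P(·,0,0) has a double root, and that there exists σ₀ > 0 such that P(·,ε,0) has no double root for all ε with 0 < |ε| < σ₀. Then for every ρ > 0 there exists σ > 0 such that for every ξ ∈ ℂ with |ξ| < σ there exists ε₀ ∈ ℂ with |ε₀| < ρ for which P(·,ε₀,ξ) has a double root. (Theorem 5.2: altering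 the graph by a parameter ξ causes the location ε₀(ξ) of the double zero of the characteristic polynomial to drift continuously, with ε₀(ξ) → 0 as ξ → 0.) -/
open Polynomial

lemma mv_eval_differentiable (f : MvPolynomial (Fin 2) ℂ) :
    Differentiable ℂ (fun p : ℂ × ℂ => MvPolynomial.eval ![p.1, p.2] f) := by
  induction f using MvPolynomial.induction_on with
  | C a => simpa using differentiable_const a
  | add p q hp hq => simp only [map_add]; exact hp.add hq
  | mul_X p i hp =>
      simp only [map_mul, MvPolynomial.eval_X]
      refine hp.mul ?_
      fin_cases i
      · simpa using differentiable_fst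
      · simpa using differentiable_snd

noncomputable def sylCol {R : Type*} [CommRing R] (d : ℕ) (p : Polynomial R)
    (j : Fin (2*d-1)) : Polynomial R :=
  if (j:ℕ) < d-1 then X^(j:ℕ) * p else X^((j:ℕ)-(d-1)) * derivative p

noncomputable def sylMat {R : Type*} [CommRing R] (d : ℕ) (p : Polynomial R) :
    Matrix (Fin (2*d-1)) (Fin (2*d-1)) R :=
  fun i j => (sylCol d p j).coeff i

lemma sylMat_map {R S : Type*} [CommRing R] [CommRing S] (f : R →+* S) (d : ℕ)
    (p : Polynomial R) : (sylMat d p).map f = sylMat d (p.map f) := by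
  ext i j
  simp only [Matrix.map_apply, sylMat, sylCol]
  split_ifs <;> rw [← Polynomial.coeff_map] <;> simp [Polynomial.map_mul, Polynomial.map_pow, derivative_map]
lemma sylCol_natDegree_lt {d : ℕ} (hd : 1 ≤ d) (p : Polynomial ℂ) (hdeg : p.natDegree ≤ d)
    (j : Fin (2*d-1)) : (sylCol d p j).natDegree < 2*d-1 := by
  have hj : (j:ℕ) < 2*d-1 := j.2
  rw [sylCol]
  split_ifs with h
  · calc (X^(j:ℕ) * p).natDegree ≤ (X^(j:ℕ):Polynomial ℂ).natDegree + p.natDegree :=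
        natDegree_mul_le
    _ = (j:ℕ) + p.natDegree := by rw [natDegree_X_pow]
    _ < 2*d-1 := by omega
  · have h2 : (derivative p).natDegree ≤ d - 1 :=
      (natDegree_derivative_le p).trans (by omega)
    calc (X^((j:ℕ)-(d-1)) * derivative p).natDegree
        ≤ (X^((j:ℕ)-(d-1)):Polynomial ℂ).natDegree + (derivative p).natDegree :=
        natDegree_mul_le
    _ = ((j:ℕ)-(d-1)) + (derivative p).natDegree := by rw [natDegree_X_pow]
    _ < 2*d-1 := by omega

lemma sylMat_det_eq_zero_iff {d : ℕ} (hd : 1 ≤ d) (p : Polynomial ℂ) (hp : p.Monic)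
    (hdeg : p.natDegree = d) :
    (sylMat d p).det = 0 ↔ ∃ z : ℂ, p.IsRoot z ∧ (derivative p).IsRoot z := by
  constructor
  · intro hdet
    by_contra hno
    push_neg at hno
    have hcop : IsCoprime p (derivative p) := by
      rw [Polynomial.isCoprime_iff_aeval_ne_zero_of_isAlgClosed (k := ℂ) ℂ p (derivative p)]
      intro z
      by_contra hz
      push_neg at hz
      obtain ⟨h1, h2⟩ := hz
      rw [coe_aeval_eq_eval] at h1 h2
      exact hno z h1 h2
    obtain ⟨v, hv, hMv⟩ := Matrix.exists_mulVec_eq_zero_iff.2 hdet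
    set A : Polynomial ℂ :=
      ∑ j : Fin (2*d-1), if (j:ℕ) < d-1 then C (v j) * X^(j:ℕ) else 0 with hA
    set B : Polynomial ℂ :=
      ∑ j : Fin (2*d-1), if (j:ℕ) < d-1 then 0 else C (v j) * X^((j:ℕ)-(d-1)) with hB
    have hR : A * p + B * derivative p = ∑ j : Fin (2*d-1), C (v j) * sylCol d p j := by
      rw [hA, hB, Finset.sum_mul, Finset.sum_mul, ← Finset.sum_add_distrib]
      refine Finset.sum_congr rfl fun j _ => ?_
      rw [sylCol]
      split_ifs with h <;> ring
    have hRzero : A * p + B * derivative p = 0 := by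
      rw [hR]
      ext i
      rw [Polynomial.finset_sum_coeff, Polynomial.coeff_zero]
      by_cases hi : i < 2*d-1
      · have := congrFun hMv ⟨i, hi⟩
        simp only [Matrix.mulVec, dotProduct, sylMat, Pi.zero_apply] at this
        rw [← this]
        refine Finset.sum_congr rfl fun j _ => ?_
        rw [Polynomial.coeff_C_mul]
        ring
      · refine Finset.sum_eq_zero fun j _ => ?_
        rw [Polynomial.coeff_C_mul,
          Polynomial.coeff_eq_zero_of_natDegree_lt
            (lt_of_lt_of_le (sylCol_natDegree_lt hd p hdeg.le j) (by omega)), mul_zero]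
    have hpdvd : p ∣ B * derivative p := ⟨-A, by linear_combination hRzero⟩
    have hpB : p ∣ B := hcop.dvd_of_dvd_mul_right hpdvd
    have hBdeg : B.natDegree ≤ d - 1 := by
      refine Polynomial.natDegree_sum_le_of_forall_le _ _ fun j _ => ?_
      split_ifs with h
      · simp
      · refine (natDegree_mul_le).trans ?_
        have hj : (j:ℕ) < 2*d-1 := j.2
        simp only [natDegree_C, natDegree_X_pow]
        omega
    have hB0 : B = 0 := by
      by_contra hB0
      have := Polynomial.natDegree_le_of_dvd hpB hB0
      omega
    have hA0 : A = 0 := by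
      have : A * p = 0 := by rw [hB0] at hRzero; linear_combination hRzero
      rcases mul_eq_zero.1 this with h | h
      · exact h
      · exact absurd h hp.ne_zero
    refine hv (funext fun j => ?_)
    show v j = 0
    by_cases h : (j:ℕ) < d-1
    · have := congrArg (fun q => Polynomial.coeff q (j:ℕ)) hA0
      simp only [hA, Polynomial.finset_sum_coeff, Polynomial.coeff_zero] at this
      rw [← this, Finset.sum_eq_single j]
      · rw [if_pos h, Polynomial.coeff_C_mul, Polynomial.coeff_X_pow, if_pos rfl, mul_one]
      · intro j' _ hj'
        split_ifs with h'
        · rw [Polynomial.coeff_C_mul, Polynomial.coeff_X_pow,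
            if_neg (fun hc => hj' (Fin.ext hc.symm)), mul_zero]
        · rfl
      · intro hj; exact absurd (Finset.mem_univ j) hj
    · have := congrArg (fun q => Polynomial.coeff q ((j:ℕ)-(d-1))) hB0
      simp only [hB, Polynomial.finset_sum_coeff, Polynomial.coeff_zero] at this
      rw [← this, Finset.sum_eq_single j]
      · rw [if_neg h, Polynomial.coeff_C_mul, Polynomial.coeff_X_pow, if_pos rfl, mul_one]
      · intro j' _ hj'
        split_ifs with h'
        · rfl
        · rw [Polynomial.coeff_C_mul, Polynomial.coeff_X_pow, if_neg, mul_zero]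
          intro hc
          exact hj' (Fin.ext (by omega))
      · intro hj; exact absurd (Finset.mem_univ j) hj
  · rintro ⟨z, hz, hz'⟩
    rw [← Matrix.exists_vecMul_eq_zero_iff]
    refine ⟨fun i => z^(i:ℕ), ?_, ?_⟩
    · intro h
      have := congrFun h ⟨0, by omega⟩
      simp at this
    · funext j
      have hcol : ∀ j : Fin (2*d-1), (sylCol d p j).eval z = 0 := by
        intro j
        rw [sylCol]
        split_ifs with h <;> simp [hz.eq_zero, hz'.eq_zero]
      have hdlt := sylCol_natDegree_lt hd p hdeg.le j
      have := Polynomial.eval_eq_sum_range' hdlt z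
      rw [hcol j] at this
      simp only [Matrix.vecMul, dotProduct, sylMat, Pi.zero_apply]
      have h2 : ∑ i ∈ Finset.range (2*d-1), z ^ i * (sylCol d p j).coeff i
          = ∑ i ∈ Finset.range (2*d-1), (sylCol d p j).coeff i * z ^ i :=
        Finset.sum_congr rfl fun i _ => mul_comm _ _
      rw [Fin.sum_univ_eq_sum_range (fun i => z ^ i * (sylCol d p j).coeff i), h2]
      exact this.symm

/-- Theorem 5.2: if the monic polynomial family `P(z,ε,ξ)` (with coefficients polynomial in
`(ε,ξ)`) has a double root at `(ε,ξ) = (0,0)` which is isolated in `ε` at `ξ = 0`, then for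
each `ρ > 0` there is `σ > 0` so that for every `|ξ| < σ` some `|ε₀| < ρ` yields a double
root of `P(·,ε₀,ξ)`: the double zero drifts continuously with `ξ`. -/
theorem stmt11 (d : ℕ) (hd : 1 ≤ d) (a : ℕ → MvPolynomial (Fin 2) ℂ)
    (P : ℂ → ℂ → Polynomial ℂ)
    (hPdef : ∀ ε ξ : ℂ, P ε ξ = Polynomial.X ^ d +
      ∑ j ∈ Finset.range d,
        Polynomial.C (MvPolynomial.eval ![ε, ξ] (a j)) * Polynomial.X ^ j)
    (hdouble0 : ∃ z : ℂ, (P 0 0).IsRoot z ∧ (Polynomial.derivative (P 0 0)).IsRoot z)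
    (σ₀ : ℝ) (hσ₀ : 0 < σ₀)
    (hnodouble : ∀ ε : ℂ, 0 < ‖ε‖ → ‖ε‖ < σ₀ →
      ¬∃ z : ℂ, (P ε 0).IsRoot z ∧ (Polynomial.derivative (P ε 0)).IsRoot z) :
    ∀ ρ > (0 : ℝ), ∃ σ > (0 : ℝ), ∀ ξ : ℂ, ‖ξ‖ < σ →
      ∃ ε₀ : ℂ, ‖ε₀‖ < ρ ∧
        ∃ z : ℂ, (P ε₀ ξ).IsRoot z ∧ (Polynomial.derivative (P ε₀ ξ)).IsRoot z := by
  -- basic properties of P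
  have hPprop : ∀ ε ξ : ℂ, (P ε ξ).Monic ∧ (P ε ξ).natDegree = d := by
    intro ε ξ
    rw [hPdef]
    have hq : (∑ j ∈ Finset.range d, C (MvPolynomial.eval ![ε, ξ] (a j)) * X ^ j :
        Polynomial ℂ).degree < (X ^ d : Polynomial ℂ).degree := by
      rw [degree_X_pow]
      refine lt_of_le_of_lt (degree_sum_le _ _) ?_
      rw [Finset.sup_lt_iff (by exact_mod_cast WithBot.bot_lt_coe d)]
      intro j hj
      refine lt_of_le_of_lt (degree_C_mul_X_pow_le _ _) ?_
      exact_mod_cast WithBot.coe_lt_coe.2 (Finset.mem_range.1 hj)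
    exact ⟨(monic_X_pow d).add_of_left hq,
      by rw [natDegree_eq_of_degree_eq (degree_add_eq_left_of_degree_lt hq), natDegree_X_pow]⟩
  -- symbolic polynomial and discriminant-like function
  set pR : Polynomial (MvPolynomial (Fin 2) ℂ) :=
    X ^ d + ∑ j ∈ Finset.range d, C (a j) * X ^ j with hpR
  set Dfun : ℂ × ℂ → ℂ :=
    fun w => MvPolynomial.eval ![w.1, w.2] ((sylMat d pR).det) with hDfun
  have hmap : ∀ ε ξ : ℂ, pR.map (MvPolynomial.eval ![ε, ξ]) = P ε ξ := by
    intro ε ξ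
    rw [hPdef, hpR, Polynomial.map_add, Polynomial.map_pow, Polynomial.map_X,
      Polynomial.map_sum]
    congr 1
    refine Finset.sum_congr rfl fun j _ => ?_
    rw [Polynomial.map_mul, Polynomial.map_pow, Polynomial.map_X, Polynomial.map_C]
  have hDeq : ∀ ε ξ : ℂ, Dfun (ε, ξ) = (sylMat d (P ε ξ)).det := by
    intro ε ξ
    rw [hDfun]
    simp only []
    rw [RingHom.map_det, RingHom.mapMatrix_apply, sylMat_map, hmap]
  have key : ∀ ε ξ : ℂ, Dfun (ε, ξ) = 0 ↔
      ∃ z : ℂ, (P ε ξ).IsRoot z ∧ (derivative (P ε ξ)).IsRoot z := by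
    intro ε ξ
    rw [hDeq]
    exact sylMat_det_eq_zero_iff hd _ (hPprop ε ξ).1 (hPprop ε ξ).2
  have hDdiff : Differentiable ℂ Dfun := mv_eval_differentiable _
  have hDcont : Continuous Dfun := hDdiff.continuous
  intro ρ hρ
  set r : ℝ := min ρ σ₀ / 2 with hr
  have hr0 : 0 < r := by positivity
  have hrρ : r < ρ := by rw [hr]; rcases min_le_left ρ σ₀ with h; linarith [min_le_left ρ σ₀]
  have hrσ : r < σ₀ := by linarith [min_le_right ρ σ₀]
  -- minimum of ‖Dfun (·,0)‖ on the sphere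
  obtain ⟨ε₁, hε₁, hmin⟩ := (isCompact_sphere (0:ℂ) r).exists_isMinOn
    (NormedSpace.sphere_nonempty.2 hr0.le)
    ((hDcont.comp (continuous_id.prodMk continuous_const)).norm.continuousOn)
  set m : ℝ := ‖Dfun (ε₁, 0)‖ with hm
  have hε₁norm : ‖ε₁‖ = r := by simpa using hε₁
  have hm0 : 0 < m := by
    rw [hm, norm_pos_iff]
    intro h0
    exact hnodouble ε₁ (by rw [hε₁norm]; exact hr0) (by rw [hε₁norm]; exact hrσ)
      ((key ε₁ 0).1 h0)
  -- tube lemma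
  set U : Set (ℂ × ℂ) := {w | ‖Dfun w - Dfun (w.1, 0)‖ < m / 2} with hU
  have hUopen : IsOpen U := by
    have : Continuous fun w : ℂ × ℂ => ‖Dfun w - Dfun (w.1, 0)‖ :=
      (hDcont.sub (hDcont.comp (continuous_fst.prodMk continuous_const))).norm
    exact isOpen_lt this continuous_const
  have hsub : Metric.sphere (0:ℂ) r ×ˢ ({0} : Set ℂ) ⊆ U := by
    rintro ⟨ε, ξ⟩ ⟨-, hξ⟩
    simp only [Set.mem_singleton_iff] at hξ
    subst hξ
    simp only [hU, Set.mem_setOf_eq, sub_self, norm_zero]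
    positivity
  obtain ⟨u, v0, hu, hv, hsu, h0v, huv⟩ := generalized_tube_lemma (isCompact_sphere (0:ℂ) r)
    isCompact_singleton hUopen hsub
  obtain ⟨σ₂, hσ₂0, hball⟩ := Metric.isOpen_iff.1 hv 0 (h0v rfl)
  -- continuity at (0,0)
  have hD00 : Dfun (0, 0) = 0 := (key 0 0).2 hdouble0
  obtain ⟨σ₁, hσ₁0, hσ₁⟩ := Metric.continuousAt_iff.1 (hDcont.continuousAt
    (x := ((0:ℂ), (0:ℂ)))) (m/2) (by positivity)
  refine ⟨min σ₁ σ₂, by positivity, fun ξ hξ => ?_⟩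
  by_contra hcon
  push_neg at hcon
  have hξ1 : ‖ξ‖ < σ₁ := lt_of_lt_of_le hξ (min_le_left _ _)
  have hξ2 : ‖ξ‖ < σ₂ := lt_of_lt_of_le hξ (min_le_right _ _)
  have hDne : ∀ ε ∈ Metric.closedBall (0:ℂ) r, Dfun (ε, ξ) ≠ 0 := by
    intro ε hε h0
    obtain ⟨z, hz⟩ := (key ε ξ).1 h0
    have hεr : ‖ε‖ ≤ r := by simpa using hε
    exact hcon ε (lt_of_le_of_lt hεr hrρ) z hz.1 hz.2
  -- minimum modulus principle applied to the inverse
  have hfd : Differentiable ℂ (fun ε : ℂ => Dfun (ε, ξ)) :=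
    hDdiff.comp (differentiable_id.prodMk (differentiable_const _))
  have hg : DiffContOnCl ℂ (fun ε : ℂ => (Dfun (ε, ξ))⁻¹) (Metric.ball (0:ℂ) r) := by
    refine DifferentiableOn.diffContOnCl ?_
    rw [closure_ball (0:ℂ) hr0.ne']
    exact (hfd.differentiableOn).inv (fun ε hε => hDne ε hε)
  have hbound : ∀ ε ∈ frontier (Metric.ball (0:ℂ) r),
      ‖(Dfun (ε, ξ))⁻¹‖ ≤ (m/2)⁻¹ := by
    intro ε hε
    rw [frontier_ball (0:ℂ) hr0.ne'] at hε
    have hmem : (ε, ξ) ∈ U := huv ⟨hsu hε, hball (by simpa [Metric.mem_ball, dist_eq_norm] using hξ2)⟩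
    have h1 : ‖Dfun (ε, ξ) - Dfun (ε, 0)‖ < m / 2 := hmem
    have h2 : m ≤ ‖Dfun (ε, 0)‖ := hmin hε
    have h3 : m / 2 ≤ ‖Dfun (ε, ξ)‖ := by
      have := norm_sub_norm_le (Dfun (ε, 0)) (Dfun (ε, ξ))
      rw [norm_sub_rev] at this
      linarith
    rw [norm_inv]
    exact inv_anti₀ (by positivity) h3
  have h0cl : (0:ℂ) ∈ closure (Metric.ball (0:ℂ) r) := by
    rw [closure_ball (0:ℂ) hr0.ne']
    exact Metric.mem_closedBall_self hr0.le
  have hfinal := Complex.norm_le_of_forall_mem_frontier_norm_le Metric.isBounded_ball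
    hg hbound h0cl
  -- contradiction
  have hD0ξ : ‖Dfun (0, ξ)‖ < m / 2 := by
    have := hσ₁ (show dist (((0:ℂ), ξ)) (((0:ℂ),(0:ℂ))) < σ₁ by
      rw [Prod.dist_eq]
      simp only [dist_self, dist_eq_norm, sub_zero]
      exact max_lt hσ₁0 hξ1)
    rwa [dist_eq_norm, hD00, sub_zero] at this
  have hD0ne : Dfun (0, ξ) ≠ 0 := hDne 0 (Metric.mem_closedBall_self hr0.le)
  rw [norm_inv] at hfinal
  have : m / 2 ≤ ‖Dfun (0, ξ)‖ := by
    have hpos : 0 < ‖Dfun (0, ξ)‖ := norm_pos_iff.2 hD0ne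
    by_contra hlt
    push_neg at hlt
    have := inv_strictAnti₀ hpos hlt
    linarith
  linarith
end

section
/- For every real number t with 0 ≤ t ≤ 1/2, one has 1/2 < sin²((π/2)·√(1+t)) / (1+t) ≤ 1/(1+t). (The key inequality in the proof of Theorem 5.5: when the tuning parameter t = δ²N/(4c²) is at most 1/2, the success probability P(⌊π/(2c√ε)⌋) = (1/(1+t))·sin²((π/2)√(1+t)) + O(√ε) of the quantum search exceeds one half.) -/
/-- The key inequality in the proof of Theorem 5.5: when the tuning parameter
`t` is at most `1/2`, `1/2 < sin²((π/2)√(1+t))/(1+t) ≤ 1/(1+t)`. -/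
theorem stmt12 (t : ℝ) (h0 : 0 ≤ t) (h1 : t ≤ 1 / 2) :
    1 / 2 < Real.sin (Real.pi / 2 * Real.sqrt (1 + t)) ^ 2 / (1 + t) ∧
      Real.sin (Real.pi / 2 * Real.sqrt (1 + t)) ^ 2 / (1 + t) ≤ 1 / (1 + t) := by
  have h2 : (0:ℝ) < 1 + t := by linarith
  set s := Real.sqrt (1 + t) with hs
  have hs0 : 0 ≤ s := Real.sqrt_nonneg _
  have hs2 : s ^ 2 = 1 + t := Real.sq_sqrt h2.le
  have hs1 : 1 ≤ s := by nlinarith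
  have hsle : s ≤ 1.23 := by nlinarith
  have hsin : Real.sin (Real.pi / 2 * s) = Real.cos (Real.pi / 2 * (s - 1)) := by
    have h : Real.pi / 2 * s = Real.pi / 2 + Real.pi / 2 * (s - 1) := by ring
    rw [h, Real.sin_add]; simp
  have hpi : Real.pi < 3.15 := Real.pi_lt_d2
  have hpi0 : 0 < Real.pi := Real.pi_pos
  set x := Real.pi / 2 * (s - 1) with hx
  have hcb : 1 - x ^ 2 / 2 ≤ Real.cos x := Real.one_sub_sq_div_two_le_cos
  have hcos1 : Real.cos x ≤ 1 := Real.cos_le_one x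
  have hxsq : x ^ 2 ≤ (3.15 / 2) ^ 2 * (s - 1) ^ 2 := by
    have : x ^ 2 = (Real.pi / 2) ^ 2 * (s - 1) ^ 2 := by rw [hx]; ring
    rw [this]
    nlinarith [mul_le_mul_of_nonneg_right
      (pow_le_pow_left₀ hpi0.le hpi.le 2) (sq_nonneg (s - 1))]
  have hkey : (1 + t) / 2 < Real.cos x ^ 2 := by
    nlinarith [sq_nonneg (s - 1), sq_nonneg x, sq_nonneg (Real.cos x - 1)]
  constructor
  · rw [hsin, lt_div_iff₀ h2]
    linarith
  · rw [hsin]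
    gcongr
    exact Real.cos_sq_le_one x
end

section
/- Let λ₀ ∈ ℂ with λ₀ ≠ 0, let φ ∈ ℝ, and let ε ∈ ℝ with 0 < ε < 1. Suppose complex numbers α, β, γ, δ satisfy the system: β·e^{iφ} = α·λ₀; α·(1−2ε) + 2γ·√(ε−ε²) = β·λ₀; 2α·√(ε−ε²) + γ·(−1+2ε) = δ·λ₀; and γ = −δ·λ₀. Then α·(λ₀² + e^{iφ}) = 0. (The algebraic core of Theorem 4.8: unless the phase φ is chosen so that λ₀² + e^{iφ} = 0, any λ₀-eigenvector of the perturbed walk operator U with nonzero amplitude on the hub states must vanish there, so a hub-adjacent eigenvector of U₀ cannot persist as a constant-eigenvalue eigenvector of U.) -/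
/-- The algebraic core of Theorem 4.8: the eigenvalue equations at the hub vertex force
`α·(λ₀² + e^{iφ}) = 0`. -/
theorem stmt13 (l₀ : ℂ) (hl₀ : l₀ ≠ 0) (φ : ℝ) (ε : ℝ) (hε : 0 < ε) (hε1 : ε < 1)
    (α β γ δ : ℂ)
    (h1 : β * Complex.exp (φ * Complex.I) = α * l₀)
    (h2 : α * (1 - 2 * (ε : ℂ)) + 2 * γ * ((Real.sqrt (ε - ε ^ 2) : ℝ) : ℂ) = β * l₀)
    (h3 : 2 * α * ((Real.sqrt (ε - ε ^ 2) : ℝ) : ℂ) + γ * (-1 + 2 * (ε : ℂ)) = δ * l₀)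
    (h4 : γ = -δ * l₀) :
    α * (l₀ ^ 2 + Complex.exp (φ * Complex.I)) = 0 := by
  set e := Complex.exp (φ * Complex.I) with he_def
  set s : ℂ := ((Real.sqrt (ε - ε ^ 2) : ℝ) : ℂ) with hs_def
  have hnn : (0:ℝ) ≤ ε - ε ^ 2 := by nlinarith
  have hs : s ^ 2 = (ε : ℂ) - (ε : ℂ) ^ 2 := by
    rw [hs_def]
    norm_cast
    rw [Real.sq_sqrt hnn]
  have hεC : (ε : ℂ) ≠ 0 := by exact_mod_cast hε.ne'
  have key : (ε : ℂ) * l₀ * (α * (l₀ ^ 2 + e)) = 0 := by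
    linear_combination (-(ε:ℂ) * l₀ ^ 2) * h1 + (-(e * l₀ * (ε:ℂ))) * h2
      + (e * l₀ * s) * h3 + (e * l₀ * s) * h4 + (-(2 * e * l₀ * α)) * hs
  have := mul_ne_zero hεC hl₀
  exact (mul_eq_zero.mp key).resolve_left this
end

section
/- For real ε ∈ (0,1) let U(ε) be the 4×4 complex matrix, in the ordered basis (|out⟩, |in⟩, |0,1⟩, |1,0⟩), with rows (0, 1−2ε, 0, 2√(ε−ε²)), (1, 0, 0, 0), (0, 2√(ε−ε²), 0, 2ε−1), (0, 0, −1, 0), and let ψ = (1/√2)·(1, 1, 0, 0) ∈ ℂ⁴. Then there exist K > 0 and ε₀ ∈ (0,1) such that for all ε ∈ (0,ε₀), setting m = ⌊π/(2√ε)⌋ and Φ = U(ε)^m·ψ, one has |Φ₃|² + |Φ₄|² ≥ 1 − K·√ε, where Φ₃, Φ₄ are the components of Φ in the |0,1⟩ and |1,0⟩ coordinates. (The Grover graph example of Section 2.1: starting from the uniform superposition and iterating the walk m = ⌊(π/2)√N⌋ times, ε = 1/N, the system ends up on the marked edge up to an error O(1/√N), so a measurement completes the search.) -/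
/-- Auxiliary: quadratic lower bound `sin x ^ 2 ≥ 1 - (x - π/2)^2`. -/
lemma sin_sq_ge_aux (x : ℝ) : 1 - (x - Real.pi / 2) ^ 2 ≤ Real.sin x ^ 2 := by
  have h1 : Real.cos (x - Real.pi / 2) = Real.sin x := by
    rw [Real.cos_sub]; simp
  have h2 : 1 - (x - Real.pi / 2) ^ 2 / 2 ≤ Real.cos (x - Real.pi / 2) :=
    Real.one_sub_sq_div_two_le_cos
  rw [h1] at h2
  nlinarith [sq_nonneg (x - Real.pi / 2), Real.neg_one_le_sin x, Real.sin_le_one x,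
    sq_nonneg ((x - Real.pi / 2) ^ 2)]

/-- The Grover graph example of Section 2.1: starting from the uniform superposition
`ψ = (|out⟩+|in⟩)/√2` and iterating the walk `m = ⌊π/(2√ε)⌋` times, the state ends up on
the marked edge (coordinates `|0,1⟩`, `|1,0⟩`) up to an error `O(√ε)`. -/
theorem stmt14 (U : ℝ → Matrix (Fin 4) (Fin 4) ℂ)
    (hU : ∀ ε ∈ Set.Ioo (0 : ℝ) 1, U ε =
      !![0, ((1 - 2 * ε : ℝ) : ℂ), 0, ((2 * Real.sqrt (ε - ε ^ 2) : ℝ) : ℂ);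
         1, 0, 0, 0;
         0, ((2 * Real.sqrt (ε - ε ^ 2) : ℝ) : ℂ), 0, ((2 * ε - 1 : ℝ) : ℂ);
         0, 0, -1, 0])
    (ψ : Fin 4 → ℂ)
    (hψ : ψ = ![(((Real.sqrt 2)⁻¹ : ℝ) : ℂ), (((Real.sqrt 2)⁻¹ : ℝ) : ℂ), 0, 0]) :
    ∃ K > (0 : ℝ), ∃ ε₀ ∈ Set.Ioo (0 : ℝ) 1, ∀ ε ∈ Set.Ioo (0 : ℝ) ε₀,
      1 - K * Real.sqrt ε ≤
        ‖(U ε ^ ⌊Real.pi / (2 * Real.sqrt ε)⌋₊).mulVec ψ 2‖ ^ 2 +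
        ‖(U ε ^ ⌊Real.pi / (2 * Real.sqrt ε)⌋₊).mulVec ψ 3‖ ^ 2 := by
  refine ⟨5, by norm_num, 1/100, ⟨by norm_num, by norm_num⟩, ?_⟩
  rintro ε ⟨hε0, hε1⟩
  have hε1' : ε < 1 := lt_trans hε1 (by norm_num)
  set e := Real.sqrt ε with he_def
  have he0 : 0 < e := Real.sqrt_pos.mpr hε0
  have hee : e ^ 2 = ε := Real.sq_sqrt hε0.le
  have he1 : e ≤ 1 / 10 := by
    have : Real.sqrt ε ≤ Real.sqrt (1/100) := Real.sqrt_le_sqrt hε1.le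
    rwa [show (1/100 : ℝ) = (1/10)^2 by norm_num, Real.sqrt_sq (by norm_num)] at this
  set α := Real.arcsin e with hα_def
  have hsinα : Real.sin α = e := Real.sin_arcsin (by linarith) (by linarith)
  have hcosα : Real.cos α = Real.sqrt (1 - ε) := by
    rw [hα_def, Real.cos_arcsin, hee]
  have hα_pos : 0 < α := Real.arcsin_pos.mpr he0
  have hα1 : α ≤ 1 := by
    by_contra h
    push_neg at h
    have h2 : Real.sin 1 ≤ Real.sin α := by
      apply Real.sin_le_sin_of_le_of_le_pi_div_two
        (by linarith [Real.pi_pos]) (Real.arcsin_le_pi_div_two e) h.le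
    have h3 : (1:ℝ) - 1^3/4 < Real.sin 1 := lt_of_le_of_lt (by norm_num) (Real.sin_gt_sub_cube one_pos)
    rw [hsinα] at h2
    norm_num at h3
    linarith
  have hcube : α - α ^ 3 / 4 < e := by
    have := lt_of_le_of_lt (by nlinarith [pow_pos hα_pos 3] : α - α ^ 3 / 4 ≤ α - α ^ 3 / 6) (Real.sin_gt_sub_cube hα_pos)
    rwa [hsinα] at this
  have hα43 : α ≤ (4/3) * e := by nlinarith [sq_nonneg α, hα_pos.le]
  have hαe : α - e ≤ (2/3) * e ^ 3 := by
    have h := pow_le_pow_left₀ hα_pos.le hα43 3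
    nlinarith [he0.le]
  have hcos2 : Real.cos (2 * α) = 1 - 2 * ε := by
    rw [Real.cos_two_mul, hcosα, Real.sq_sqrt (by linarith)]
    ring
  have hsin2 : Real.sin (2 * α) = 2 * Real.sqrt (ε - ε ^ 2) := by
    rw [Real.sin_two_mul, hsinα, hcosα, he_def, mul_assoc, ← Real.sqrt_mul hε0.le,
      show ε * (1 - ε) = ε - ε ^ 2 by ring]
  set m := ⌊Real.pi / (2 * e)⌋₊ with hm_def
  have hUε := hU ε ⟨hε0, hε1'⟩
  have step : ∀ v : Fin 4 → ℂ, (U ε).mulVec v =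
      ![((1-2*ε:ℝ):ℂ) * v 1 + ((2*Real.sqrt (ε-ε^2):ℝ):ℂ) * v 3, v 0,
        ((2*Real.sqrt (ε-ε^2):ℝ):ℂ) * v 1 + ((2*ε-1:ℝ):ℂ) * v 3, -(v 2)] := by
    intro v
    rw [hUε]
    funext i
    fin_cases i <;> simp [Matrix.mulVec, dotProduct, Fin.sum_univ_four, Matrix.vecHead, Matrix.vecTail]
  have hid1 : ∀ t : ℝ, (1 - 2*ε) * Real.cos t - 2 * Real.sqrt (ε - ε^2) * Real.sin t
      = Real.cos (t + 2*α) := by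
    intro t; rw [Real.cos_add, hcos2, hsin2]; ring
  have hid2 : ∀ t : ℝ, 2 * Real.sqrt (ε - ε^2) * Real.cos t + (1 - 2*ε) * Real.sin t
      = Real.sin (t + 2*α) := by
    intro t; rw [Real.sin_add, hcos2, hsin2]; ring
  have key : ∀ n : ℕ, (U ε ^ n).mulVec ψ =
      ![((((Real.sqrt 2)⁻¹ * Real.cos (((n + n % 2 : ℕ) : ℝ) * α)) : ℝ) : ℂ),
        ((((Real.sqrt 2)⁻¹ * Real.cos (((n - n % 2 : ℕ) : ℝ) * α)) : ℝ) : ℂ),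
        ((((Real.sqrt 2)⁻¹ * Real.sin (((n + n % 2 : ℕ) : ℝ) * α)) : ℝ) : ℂ),
        (((-((Real.sqrt 2)⁻¹ * Real.sin (((n - n % 2 : ℕ) : ℝ) * α))) : ℝ) : ℂ)] := by
    intro n
    induction n with
    | zero => simp [hψ]
    | succ n ih =>
      rw [pow_succ', ← Matrix.mulVec_mulVec, ih, step]
      simp only [Matrix.cons_val_zero, Matrix.cons_val_one, Matrix.head_cons,
        Matrix.cons_val_two, Matrix.cons_val_three, Matrix.tail_cons]
      rcases Nat.even_or_odd n with ⟨k, hk⟩ | ⟨k, hk⟩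
      · have h1 : n % 2 = 0 := by omega
        have h3 : n + 1 + (n + 1) % 2 = n + 2 := by omega
        have h4 : n + 1 - (n + 1) % 2 = n := by omega
        simp only [h1, h3, h4, Nat.add_zero, Nat.sub_zero]
        have r0 : (1 - 2*ε) * ((Real.sqrt 2)⁻¹ * Real.cos ((n:ℝ) * α))
            + (2 * Real.sqrt (ε - ε^2)) * (-((Real.sqrt 2)⁻¹ * Real.sin ((n:ℝ) * α)))
            = (Real.sqrt 2)⁻¹ * Real.cos (((n + 2 : ℕ) : ℝ) * α) := by
          rw [show (((n + 2 : ℕ) : ℝ)) * α = (n:ℝ) * α + 2*α by push_cast; ring,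
            ← hid1 ((n:ℝ)*α)]
          ring
        have r2 : (2 * Real.sqrt (ε - ε^2)) * ((Real.sqrt 2)⁻¹ * Real.cos ((n:ℝ) * α))
            + (2*ε - 1) * (-((Real.sqrt 2)⁻¹ * Real.sin ((n:ℝ) * α)))
            = (Real.sqrt 2)⁻¹ * Real.sin (((n + 2 : ℕ) : ℝ) * α) := by
          rw [show (((n + 2 : ℕ) : ℝ)) * α = (n:ℝ) * α + 2*α by push_cast; ring,
            ← hid2 ((n:ℝ)*α)]
          ring
        have E0 : ((1 - 2*ε : ℝ):ℂ) * ((((Real.sqrt 2)⁻¹ * Real.cos ((n:ℝ) * α)) : ℝ):ℂ)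
            + ((2 * Real.sqrt (ε - ε^2) : ℝ):ℂ)
              * (((-((Real.sqrt 2)⁻¹ * Real.sin ((n:ℝ) * α))) : ℝ):ℂ)
            = ((((Real.sqrt 2)⁻¹ * Real.cos (((n + 2 : ℕ) : ℝ) * α)) : ℝ):ℂ) := by
          exact_mod_cast congrArg Complex.ofReal r0
        have E2 : ((2 * Real.sqrt (ε - ε^2) : ℝ):ℂ) * ((((Real.sqrt 2)⁻¹ * Real.cos ((n:ℝ) * α)) : ℝ):ℂ)
            + ((2*ε - 1 : ℝ):ℂ) * (((-((Real.sqrt 2)⁻¹ * Real.sin ((n:ℝ) * α))) : ℝ):ℂ)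
            = ((((Real.sqrt 2)⁻¹ * Real.sin (((n + 2 : ℕ) : ℝ) * α)) : ℝ):ℂ) := by
          exact_mod_cast congrArg Complex.ofReal r2
        have E3 : -(((((Real.sqrt 2)⁻¹ * Real.sin ((n:ℝ) * α))) : ℝ):ℂ)
            = (((-((Real.sqrt 2)⁻¹ * Real.sin ((n:ℝ) * α))) : ℝ):ℂ) := by
          push_cast; ring
        rw [E0, E2, E3]
      · have h1 : n % 2 = 1 := by omega
        have hn1 : 1 ≤ n := by omega
        have h3 : n + n % 2 = n + 1 := by omega
        have h4 : n - n % 2 = n - 1 := by omega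
        have h5 : n + 1 + (n + 1) % 2 = n + 1 := by omega
        have h6 : n + 1 - (n + 1) % 2 = n + 1 := by omega
        have h7 : ((n - 1 : ℕ) : ℝ) = (n : ℝ) - 1 := by push_cast [hn1]; ring
        simp only [h1, h3, h4, h5, h6]
        have r0 : (1 - 2*ε) * ((Real.sqrt 2)⁻¹ * Real.cos (((n - 1 : ℕ):ℝ) * α))
            + (2 * Real.sqrt (ε - ε^2)) * (-((Real.sqrt 2)⁻¹ * Real.sin (((n - 1 : ℕ):ℝ) * α)))
            = (Real.sqrt 2)⁻¹ * Real.cos (((n + 1 : ℕ) : ℝ) * α) := by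
          rw [h7, show (((n + 1 : ℕ) : ℝ)) * α = ((n:ℝ) - 1) * α + 2*α by push_cast; ring,
            ← hid1 (((n:ℝ) - 1)*α)]
          ring
        have r2 : (2 * Real.sqrt (ε - ε^2)) * ((Real.sqrt 2)⁻¹ * Real.cos (((n - 1 : ℕ):ℝ) * α))
            + (2*ε - 1) * (-((Real.sqrt 2)⁻¹ * Real.sin (((n - 1 : ℕ):ℝ) * α)))
            = (Real.sqrt 2)⁻¹ * Real.sin (((n + 1 : ℕ) : ℝ) * α) := by
          rw [h7, show (((n + 1 : ℕ) : ℝ)) * α = ((n:ℝ) - 1) * α + 2*α by push_cast; ring,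
            ← hid2 (((n:ℝ) - 1)*α)]
          ring
        have E0 : ((1 - 2*ε : ℝ):ℂ) * ((((Real.sqrt 2)⁻¹ * Real.cos (((n - 1 : ℕ):ℝ) * α)) : ℝ):ℂ)
            + ((2 * Real.sqrt (ε - ε^2) : ℝ):ℂ)
              * (((-((Real.sqrt 2)⁻¹ * Real.sin (((n - 1 : ℕ):ℝ) * α))) : ℝ):ℂ)
            = ((((Real.sqrt 2)⁻¹ * Real.cos (((n + 1 : ℕ) : ℝ) * α)) : ℝ):ℂ) := by
          exact_mod_cast congrArg Complex.ofReal r0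
        have E2 : ((2 * Real.sqrt (ε - ε^2) : ℝ):ℂ)
              * ((((Real.sqrt 2)⁻¹ * Real.cos (((n - 1 : ℕ):ℝ) * α)) : ℝ):ℂ)
            + ((2*ε - 1 : ℝ):ℂ) * (((-((Real.sqrt 2)⁻¹ * Real.sin (((n - 1 : ℕ):ℝ) * α))) : ℝ):ℂ)
            = ((((Real.sqrt 2)⁻¹ * Real.sin (((n + 1 : ℕ) : ℝ) * α)) : ℝ):ℂ) := by
          exact_mod_cast congrArg Complex.ofReal r2
        have E3 : -(((((Real.sqrt 2)⁻¹ * Real.sin (((n + 1 : ℕ):ℝ) * α))) : ℝ):ℂ)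
            = (((-((Real.sqrt 2)⁻¹ * Real.sin (((n + 1 : ℕ):ℝ) * α))) : ℝ):ℂ) := by
          push_cast; ring
        rw [E0, E2, E3]
  clear hU hψ hUε step hid1 hid2
  -- quantitative estimates
  have hm_le : (m : ℝ) * e ≤ Real.pi / 2 := by
    have h := Nat.floor_le (R := ℝ) (a := Real.pi / (2 * e)) (by positivity)
    have h2 : Real.pi / (2*e) * e = Real.pi / 2 := by field_simp
    calc (m:ℝ) * e ≤ (Real.pi / (2*e)) * e := mul_le_mul_of_nonneg_right h he0.le
      _ = Real.pi / 2 := h2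
  have hm_gt : Real.pi / 2 - e < (m : ℝ) * e := by
    have h := Nat.lt_floor_add_one (Real.pi / (2 * e))
    have h2 : Real.pi / (2*e) * e = Real.pi / 2 := by field_simp
    nlinarith [he0]
  have hmα_up : (m : ℝ) * α ≤ Real.pi / 2 + e / 2 := by
    have hm0 : (0:ℝ) ≤ m := Nat.cast_nonneg m
    have h1 : (m:ℝ) * (α - e) ≤ (m:ℝ) * e * ((2/3) * e ^ 2) := by
      calc (m:ℝ) * (α - e) ≤ (m:ℝ) * ((2/3) * e^3) := mul_le_mul_of_nonneg_left hαe hm0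
        _ = (m:ℝ) * e * ((2/3) * e^2) := by ring
    have h2 : (m:ℝ) * e * ((2/3) * e^2) ≤ (Real.pi/2) * ((2/3) * e^2) :=
      mul_le_mul_of_nonneg_right hm_le (by positivity)
    have hπ : Real.pi ≤ 4 := Real.pi_le_four
    nlinarith [he0.le, he1]
  have hmα_lo : Real.pi / 2 - e ≤ (m : ℝ) * α := by
    have he_le_α : e ≤ α := by
      have := Real.sin_lt hα_pos
      rw [hsinα] at this
      linarith
    have : (m:ℝ) * e ≤ (m:ℝ) * α := mul_le_mul_of_nonneg_left he_le_α (Nat.cast_nonneg m)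
    linarith
  have hbound : ∀ x : ℝ, (m:ℝ) - 1 ≤ x → x ≤ (m:ℝ) + 1 →
      1 - 6 * ε ≤ Real.sin (x * α) ^ 2 := by
    intro x hx1 hx2
    clear key
    have hlo : Real.pi/2 - e - α ≤ x * α := by
      have h := mul_le_mul_of_nonneg_right hx1 hα_pos.le
      have h' : ((m:ℝ) - 1) * α = (m:ℝ) * α - α := by ring
      linarith only [h, h', hmα_lo]
    have hhi : x * α ≤ Real.pi/2 + e/2 + α := by
      have h := mul_le_mul_of_nonneg_right hx2 hα_pos.le
      have h' : ((m:ℝ) + 1) * α = (m:ℝ) * α + α := by ring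
      linarith only [h, h', hmα_up]
    have h1 := sin_sq_ge_aux (x * α)
    have h2 : (x * α - Real.pi / 2) ^ 2 ≤ ((7/3) * e) ^ 2 := by
      have hb1 : -((7/3) * e) ≤ x * α - Real.pi / 2 := by
        linarith only [hlo, hα43, he0.le]
      have hb2 : x * α - Real.pi / 2 ≤ (7/3) * e := by
        linarith only [hhi, hα43, he0.le]
      exact sq_le_sq' hb1 hb2
    have h3 : ((7/3) * e)^2 ≤ 6 * ε := by
      have he49 : ((7/3) * e)^2 = (49/9) * ε := by rw [mul_pow, hee]; norm_num
      linarith only [he49, hε0.le]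
    linarith only [h1, h2, h3]
  -- finish
  have h2inv : ((Real.sqrt 2)⁻¹ : ℝ)^2 = 1/2 := by
    rw [inv_pow, Real.sq_sqrt (by norm_num : (0:ℝ) ≤ 2)]
    norm_num
  have hsq : ∀ t : ℝ, ‖((((Real.sqrt 2)⁻¹ * t) : ℝ) : ℂ)‖ ^ 2 = (1/2) * t^2 := by
    intro t
    rw [Complex.norm_real, Real.norm_eq_abs, ← sq_abs, abs_abs, sq_abs, mul_pow, h2inv]
  rw [key m]
  clear key
  simp only [Matrix.cons_val_two, Matrix.cons_val_three, Matrix.tail_cons, Matrix.head_cons]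
  rw [hsq]
  rw [show (((-((Real.sqrt 2)⁻¹ * Real.sin (((m - m % 2 : ℕ) : ℝ) * α))) : ℝ) : ℂ)
      = ((((Real.sqrt 2)⁻¹ * (-Real.sin (((m - m % 2 : ℕ) : ℝ) * α))) : ℝ) : ℂ) by
    push_cast; ring]
  rw [hsq, neg_sq]
  have hmod : m % 2 ≤ 1 := by omega
  have hmodm : m % 2 ≤ m := Nat.mod_le m 2
  have h0c : (0:ℝ) ≤ ((m % 2 : ℕ) : ℝ) := Nat.cast_nonneg _
  have h1c : ((m % 2 : ℕ) : ℝ) ≤ 1 := by exact_mod_cast hmod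
  have hA : 1 - 6 * ε ≤ Real.sin (((m + m % 2 : ℕ) : ℝ) * α) ^ 2 := by
    apply hbound
    · push_cast
      linarith only [h0c]
    · push_cast
      linarith only [h1c]
  have hB : 1 - 6 * ε ≤ Real.sin (((m - m % 2 : ℕ) : ℝ) * α) ^ 2 := by
    apply hbound
    · push_cast [hmodm]
      linarith only [h1c]
    · push_cast [hmodm]
      linarith only [h0c]
  have hε10 : ε ≤ e / 10 := by
    have h := mul_le_mul_of_nonneg_left he1 he0.le
    have h2 : e ^ 2 = e * e := sq e
    linarith only [h, h2, hee]
  linarith only [hA, hB, hε10, he0.le]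
end

section
/- Let φ ∈ ℝ with cos(φ/2) ≠ 0 and let ε ∈ ℂ. The quartic polynomial z⁴ − (1−2ε)·(1+e^{iφ})·z² + e^{iφ} ∈ ℂ[z] has a repeated complex root if and only if ε = 1/2 − 1/(2cos(φ/2)) or ε = 1/2 + 1/(2cos(φ/2)). (Section 5.1: for the Grover graph with detuned phase φ, the double zero of the characteristic polynomial required for pairing has not vanished but moved to ε₀ = 1/2 ± 1/(2cos(φ/2)); the branch with ε₀(0) = 0 satisfies ε₀ = 1/2 − 1/(2cos(φ/2)) = −φ²/16 + O(φ⁴).) -/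
/-- Section 5.1: the quartic `z⁴ − (1−2ε)(1+e^{iφ})z² + e^{iφ}` (characteristic polynomial
of the detuned Grover graph) has a repeated root iff `ε = 1/2 ∓ 1/(2cos(φ/2))`. -/
theorem stmt15 (φ : ℝ) (hφ : Real.cos (φ / 2) ≠ 0) (ε : ℂ)
    (p : Polynomial ℂ)
    (hp : p = Polynomial.X ^ 4
        - Polynomial.C ((1 - 2 * ε) * (1 + Complex.exp (φ * Complex.I))) * Polynomial.X ^ 2
        + Polynomial.C (Complex.exp (φ * Complex.I))) :
    (∃ z : ℂ, p.IsRoot z ∧ (Polynomial.derivative p).IsRoot z) ↔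
      ε = 1 / 2 - 1 / (2 * ((Real.cos (φ / 2) : ℝ) : ℂ)) ∨
      ε = 1 / 2 + 1 / (2 * ((Real.cos (φ / 2) : ℝ) : ℂ)) := by
  set c : ℂ := ((Real.cos (φ / 2) : ℝ) : ℂ) with hcdef
  have hc : c ≠ 0 := by simpa [hcdef] using Complex.ofReal_ne_zero.mpr hφ
  set E : ℂ := Complex.exp (φ * Complex.I) with hEdef
  set F : ℂ := Complex.exp ((φ / 2 : ℝ) * Complex.I) with hFdef
  set G : ℂ := Complex.exp ((φ / 4 : ℝ) * Complex.I) with hGdef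
  have hE : E ≠ 0 := Complex.exp_ne_zero _
  have hF2 : F ^ 2 = E := by
    rw [hFdef, hEdef, ← Complex.exp_nat_mul]
    push_cast; ring_nf
  have hG2 : G ^ 2 = F := by
    rw [hGdef, hFdef, ← Complex.exp_nat_mul]
    push_cast; ring_nf
  have hsum : 1 + E = 2 * c * F := by
    have h2c : 2 * Complex.cos ((φ / 2 : ℝ)) =
        Complex.exp ((φ / 2 : ℝ) * Complex.I) + Complex.exp (-((φ / 2 : ℝ)) * Complex.I) :=
      Complex.two_cos _
    have hcc : c = Complex.cos ((φ / 2 : ℝ)) := by rw [hcdef, Complex.ofReal_cos]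
    have hinv : Complex.exp (-((φ / 2 : ℝ)) * Complex.I) * F = 1 := by
      rw [hFdef, ← Complex.exp_add]; ring_nf; exact Complex.exp_zero
    have heq : 2 * c = F + Complex.exp (-((φ / 2 : ℝ)) * Complex.I) := by
      rw [hcc, h2c]
    linear_combination -hF2 - hinv - F * heq
  subst hp
  have hev : ∀ z : ℂ, (Polynomial.X ^ 4
        - Polynomial.C ((1 - 2 * ε) * (1 + E)) * Polynomial.X ^ 2
        + Polynomial.C E).IsRoot z ↔ z ^ 4 - (1 - 2 * ε) * (1 + E) * z ^ 2 + E = 0 := by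
    intro z
    simp [Polynomial.IsRoot]
  have hdev : ∀ z : ℂ, (Polynomial.derivative (Polynomial.X ^ 4
        - Polynomial.C ((1 - 2 * ε) * (1 + E)) * Polynomial.X ^ 2
        + Polynomial.C E)).IsRoot z ↔
        4 * z ^ 3 - (1 - 2 * ε) * (1 + E) * (2 * z) = 0 := by
    intro z
    simp [Polynomial.IsRoot, Polynomial.derivative_pow]
  constructor
  · rintro ⟨z, hz, hz'⟩
    rw [hev] at hz
    rw [hdev] at hz'
    have hzne : z ≠ 0 := by
      rintro rfl
      simp at hz
      exact hE hz
    have hfac : z * (4 * z ^ 2 - 2 * ((1 - 2 * ε) * (1 + E))) = 0 := by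
      linear_combination hz'
    have ha : (1 - 2 * ε) * (1 + E) = 2 * z ^ 2 := by
      rcases mul_eq_zero.mp hfac with h | h
      · exact absurd h hzne
      · linear_combination -h / 2
    have hE4 : E = z ^ 4 := by linear_combination hz + z ^ 2 * ha
    have key : (1 - 2 * ε) ^ 2 * (1 + E) ^ 2 = 4 * E := by
      linear_combination ((1 - 2 * ε) * (1 + E) + 2 * z ^ 2) * ha - 4 * hE4
    have hsq : (1 + E) ^ 2 = 4 * c ^ 2 * E := by
      rw [hsum]; linear_combination (4 * c ^ 2) * hF2
    have key2 : (((1 - 2 * ε) * c - 1) * ((1 - 2 * ε) * c + 1)) * (4 * E) = 0 := by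
      rw [hsq] at key
      linear_combination key
    have key3 : ((1 - 2 * ε) * c - 1) * ((1 - 2 * ε) * c + 1) = 0 := by
      rcases mul_eq_zero.mp key2 with h | h
      · exact h
      · exact absurd h (by simp [hE])
    rcases mul_eq_zero.mp key3 with h | h
    · left; field_simp; linear_combination -h
    · right; field_simp; linear_combination -h
  · intro h
    rcases h with h | h
    · have hA : (1 - 2 * ε) * (1 + E) = 2 * F := by
        rw [h, hsum]; field_simp; ring
      exact ⟨G, (hev G).mpr (by linear_combination (G ^ 2 - F) * hG2 - hF2 - G ^ 2 * hA),
        (hdev G).mpr (by linear_combination 4 * G * hG2 - 2 * G * hA)⟩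
    · have hA : (1 - 2 * ε) * (1 + E) = -2 * F := by
        rw [h, hsum]; field_simp; ring
      have hz2 : (Complex.I * G) ^ 2 = -F := by
        rw [mul_pow, Complex.I_sq]; linear_combination -hG2
      have hz4 : (Complex.I * G) ^ 4 = E := by
        have h4 : (Complex.I * G) ^ 4 = ((Complex.I * G) ^ 2) ^ 2 := by ring
        rw [h4, hz2]; linear_combination hF2
      exact ⟨Complex.I * G,
        (hev _).mpr (by
          linear_combination hz4 - ((1 - 2 * ε) * (1 + E)) * hz2 + F * hA - 2 * hF2),
        (hdev _).mpr (by
          linear_combination 4 * (Complex.I * G) * hz2 - 2 * (Complex.I * G) * hA)⟩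
end
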